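/- arXiv:2106.02747 — 6 statements merged into one kernel-verified Lean document; each statement's English description precedes it below -/
import Mathlib

section
/- Let q be a prime power, let n, k, ℓ, t be natural numbers with t ≤ n, and let C ⊆ F_q^n be a linear code with exactly q^k elements. Let f : {0,…,n} → ℝ_{≥0}, set π(e) := f(wt(e)) for e ∈ F_q^n, assume Σ_{e ∈ F_q^n} π(e)² = 1, and set p_t := S_t·f(t)². Let A : F_q^n × {0,1}^ℓ → F_q^n be any function, and let ε be the fraction of triples (c, e, w) ∈ C × {e : wt(e) = t} × {0,1}^ℓ satisfying A(c + e, w) = e. Define real vectors indexed by F_q^n × F_q^n × {0,1}^ℓ: ψ_A(a, b, w) := (2^ℓ q^k)^{−1/2}·π(a + A(b, w))·1[b − a − A(b, w) ∈ C], and φ(a, b, w) := 1[a = 0]·Σ_{c ∈ C} π(b − c); assume Z := Σ_{a,b,w} φ(a,b,w)² > 0 and set ψ_ideal := Z^{−1/2}·φ. Then ⟨ψ_A, ψ_ideal⟩ ≥ (2^ℓ q^k / Z)^{1/2}·p_t·ε, and consequently (1 − ⟨ψ_A, ψ_ideal⟩²)^{1/2} ≤ (1 − (2^ℓ q^k / Z)·p_t²·ε²)^{1/2}.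 -/
open scoped BigOperators Classical

lemma fiber_card (F : Type) [Fintype F] [DecidableEq F] [Zero F] (n : ℕ)
    (s : Finset (Fin n)) :
    (Finset.univ.filter fun e : Fin n → F =>
        (Finset.univ.filter fun i => e i ≠ 0) = s).card
      = (Fintype.card F - 1) ^ s.card := by
  rw [← Fintype.card_subtype]
  have E : {e : Fin n → F // (Finset.univ.filter fun i => e i ≠ 0) = s}
      ≃ (s → {x : F // x ≠ 0}) :=
    { toFun := fun e i => ⟨e.1 i.1, by
        have hi : (i : Fin n) ∈ Finset.univ.filter fun j => e.1 j ≠ 0 := by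
          rw [e.2]; exact i.2
        exact (Finset.mem_filter.mp hi).2⟩
      invFun := fun g => ⟨fun i => if h : i ∈ s then (g ⟨i, h⟩).1 else 0, by
        ext i
        simp only [Finset.mem_filter, Finset.mem_univ, true_and]
        constructor
        · intro h; by_contra hs; simp [hs] at h
        · intro h; simp [h]; exact (g ⟨i, h⟩).2⟩
      left_inv := fun e => by
        apply Subtype.ext; funext i
        by_cases h : i ∈ s
        · simp [h]
        · simp only [h, dif_neg, not_false_iff]
          have hni : i ∉ Finset.univ.filter fun j => e.1 j ≠ 0 := by
            rw [e.2]; exact h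
          simp only [Finset.mem_filter, Finset.mem_univ, true_and, not_not] at hni
          exact hni.symm
      right_inv := fun g => by
        funext i
        simp [i.2] }
  rw [Fintype.card_congr E, Fintype.card_fun, Fintype.card_coe,
    Fintype.card_subtype_compl, Fintype.card_subtype_eq]

lemma card_sphere (F : Type) [Fintype F] [DecidableEq F] [Zero F] (n t : ℕ) :
    Nat.card {e : Fin n → F // hammingNorm e = t}
      = n.choose t * (Fintype.card F - 1) ^ t := by
  rw [Nat.card_eq_fintype_card, Fintype.card_subtype]
  rw [Finset.card_eq_sum_card_fiberwise
    (f := fun e : Fin n → F => Finset.univ.filter fun i => e i ≠ 0)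
    (t := Finset.powersetCard t Finset.univ)
    (fun e he => by
      replace he := Finset.mem_filter.mp he
      exact Finset.mem_powersetCard.mpr ⟨Finset.subset_univ _, he.2⟩)]
  have hfib : ∀ s ∈ Finset.powersetCard t (Finset.univ : Finset (Fin n)),
      ((Finset.univ.filter fun e : Fin n → F => hammingNorm e = t).filter
        (fun e => (Finset.univ.filter fun i => e i ≠ 0) = s)).card
      = (Fintype.card F - 1) ^ t := by
    intro s hs
    rw [Finset.mem_powersetCard] at hs
    rw [Finset.filter_filter]
    have : ∀ e : Fin n → F,
        (hammingNorm e = t ∧ (Finset.univ.filter fun i => e i ≠ 0) = s)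
        ↔ ((Finset.univ.filter fun i => e i ≠ 0) = s) := by
      intro e
      constructor
      · exact fun h => h.2
      · intro h
        refine ⟨?_, h⟩
        show (Finset.univ.filter fun i => e i ≠ 0).card = t
        rw [h, hs.2]
    calc (Finset.univ.filter fun e : Fin n → F =>
            hammingNorm e = t ∧ (Finset.univ.filter fun i => e i ≠ 0) = s).card
        = (Finset.univ.filter fun e : Fin n → F =>
            (Finset.univ.filter fun i => e i ≠ 0) = s).card := by
          congr 1; apply Finset.filter_congr; intro e _; simp [this e]
      _ = (Fintype.card F - 1) ^ s.card := fiber_card F n s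
      _ = (Fintype.card F - 1) ^ t := by rw [hs.2]
  rw [Finset.sum_congr rfl hfib, Finset.sum_const, Finset.card_powersetCard,
    Finset.card_univ, Fintype.card_fin, smul_eq_mul]



/-- Lemma 2 (lem:dist_algo_ideal): the state produced by the quantized decoder has
inner product at least `√(2^ℓ q^k / Z)·p_t·ε` with the ideal disentangled state, hence
trace distance at most `√(1 − (2^ℓ q^k / Z)·p_t²·ε²)`. -/
theorem decoder_state_close_to_ideal
    (q n k ℓ t : ℕ) (hq : IsPrimePow q) (ht : t ≤ n)
    (F : Type) [Field F] [Fintype F] [DecidableEq F]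
    (hF : Fintype.card F = q)
    (C : Submodule F (Fin n → F))
    (hC : Nat.card C = q ^ k)
    (f : ℕ → ℝ) (hf : ∀ i, 0 ≤ f i)
    (hnorm : ∑ e : Fin n → F, f (hammingNorm e) ^ 2 = 1)
    (pt : ℝ)
    (hpt : pt = ((q - 1 : ℝ) ^ t * (n.choose t : ℝ)) * f t ^ 2)
    (A : (Fin n → F) → (Fin ℓ → Bool) → (Fin n → F))
    (ε : ℝ)
    (hε : ε = (Nat.card {x : C × {e : Fin n → F // hammingNorm e = t} × (Fin ℓ → Bool) //
        A ((x.1 : Fin n → F) + (x.2.1 : Fin n → F)) x.2.2 = (x.2.1 : Fin n → F)} : ℝ) /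
      (Nat.card (C × {e : Fin n → F // hammingNorm e = t} × (Fin ℓ → Bool)) : ℝ))
    (ψA φ : (Fin n → F) × (Fin n → F) × (Fin ℓ → Bool) → ℝ)
    (hψA : ∀ x : (Fin n → F) × (Fin n → F) × (Fin ℓ → Bool),
      ψA x = (Real.sqrt (2 ^ ℓ * q ^ k))⁻¹ * f (hammingNorm (x.1 + A x.2.1 x.2.2)) *
        (if x.2.1 - x.1 - A x.2.1 x.2.2 ∈ C then 1 else 0))
    (hφ : ∀ x : (Fin n → F) × (Fin n → F) × (Fin ℓ → Bool),
      φ x = (if x.1 = 0 then 1 else 0) * ∑ c : C, f (hammingNorm (x.2.1 - (c : Fin n → F))))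
    (Z : ℝ)
    (hZ : Z = ∑ x : (Fin n → F) × (Fin n → F) × (Fin ℓ → Bool), φ x ^ 2)
    (hZpos : 0 < Z)
    (ψideal : (Fin n → F) × (Fin n → F) × (Fin ℓ → Bool) → ℝ)
    (hψideal : ∀ x, ψideal x = (Real.sqrt Z)⁻¹ * φ x) :
    (Real.sqrt (2 ^ ℓ * q ^ k / Z) * pt * ε ≤
        ∑ x : (Fin n → F) × (Fin n → F) × (Fin ℓ → Bool), ψA x * ψideal x)
    ∧ Real.sqrt (1 - (∑ x : (Fin n → F) × (Fin n → F) × (Fin ℓ → Bool), ψA x * ψideal x) ^ 2)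
        ≤ Real.sqrt (1 - (2 ^ ℓ * q ^ k / Z) * pt ^ 2 * ε ^ 2) := by
  classical
  have hq2 : 2 ≤ q := hq.two_le
  have hq2R : (2 : ℝ) ≤ (q : ℝ) := by exact_mod_cast hq2
  set M : ℝ := 2 ^ ℓ * (q : ℝ) ^ k with hMdef
  have hMpos : (0 : ℝ) < M := by positivity
  have hsM : Real.sqrt M * Real.sqrt M = M := Real.mul_self_sqrt hMpos.le
  have hsMpos : 0 < Real.sqrt M := Real.sqrt_pos.mpr hMpos
  -- abbreviations
  set Good := {x : C × {e : Fin n → F // hammingNorm e = t} × (Fin ℓ → Bool) //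
      A ((x.1 : Fin n → F) + (x.2.1 : Fin n → F)) x.2.2 = (x.2.1 : Fin n → F)} with hGood
  set N : ℕ := Nat.card Good with hN
  -- cardinality of the denominator
  have cardSphere : Nat.card {e : Fin n → F // hammingNorm e = t}
      = n.choose t * (q - 1) ^ t := by
    rw [card_sphere, hF]
  have hchoosepos : 0 < n.choose t := Nat.choose_pos ht
  set S : ℝ := ((q : ℝ) - 1) ^ t * (n.choose t : ℝ) with hSdef
  have hSpos : 0 < S := by
    apply mul_pos
    · apply pow_pos; linarith
    · exact_mod_cast hchoosepos
  have hDc : (Nat.card (C × {e : Fin n → F // hammingNorm e = t} × (Fin ℓ → Bool)) : ℝ)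
      = M * S := by
    rw [Nat.card_prod, Nat.card_prod, hC, cardSphere, Nat.card_eq_fintype_card,
      Fintype.card_fun, Fintype.card_bool, Fintype.card_fin]
    push_cast [Nat.cast_sub (Nat.one_le_of_lt hq2)]
    ring
  have hεeq : ε = (N : ℝ) / (M * S) := by rw [hε, hDc, hN]
  have hεnn : 0 ≤ ε := by
    rw [hεeq]; positivity
  have hptnn : 0 ≤ pt := by
    rw [hpt]
    have : (0:ℝ) ≤ (q:ℝ) - 1 := by linarith
    positivity
  -- nonnegativity of ψA and φ
  have hψAnn : ∀ x, 0 ≤ ψA x := by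
    intro x; rw [hψA]
    apply mul_nonneg (mul_nonneg (by positivity) (hf _))
    split <;> norm_num
  have hφnn : ∀ x, 0 ≤ φ x := by
    intro x; rw [hφ]
    apply mul_nonneg
    · split <;> norm_num
    · exact Finset.sum_nonneg fun c _ => hf _
  -- rewrite the inner product
  have hI : ∑ x : (Fin n → F) × (Fin n → F) × (Fin ℓ → Bool), ψA x * ψideal x
      = (Real.sqrt Z)⁻¹ * ∑ x : (Fin n → F) × (Fin n → F) × (Fin ℓ → Bool), ψA x * φ x := by
    rw [Finset.mul_sum]
    exact Finset.sum_congr rfl fun x _ => by rw [hψideal]; ring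
  -- the image of good triples
  set g : Good → (Fin n → F) × (Fin n → F) × (Fin ℓ → Bool) :=
    fun x => (0, (x.1.1 : Fin n → F) + (x.1.2.1 : Fin n → F), x.1.2.2) with hg
  have hginj : Function.Injective g := by
    intro x y hxy
    simp only [hg, Prod.mk.injEq] at hxy
    obtain ⟨-, hb, hw⟩ := hxy
    have hex : (x.1.2.1 : Fin n → F) = (y.1.2.1 : Fin n → F) := by
      have h1 := x.2
      have h2 := y.2
      rw [← h1, ← h2, hb, hw]
    apply Subtype.ext
    have hc : (x.1.1 : Fin n → F) = (y.1.1 : Fin n → F) := by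
      have h := hb
      rw [hex] at h
      exact add_right_cancel h
    exact Prod.ext (Subtype.ext hc) (Prod.ext (Subtype.ext hex) hw)
  set T : Finset ((Fin n → F) × (Fin n → F) × (Fin ℓ → Bool)) :=
    Finset.univ.image g with hT
  have hTcard : T.card = N := by
    rw [hT, Finset.card_image_of_injective _ hginj, Finset.card_univ, hN,
      Nat.card_eq_fintype_card]
  -- per-element lower bound on T
  have hTbound : ∀ x ∈ T, (Real.sqrt M)⁻¹ * f t ^ 2 ≤ ψA x * φ x := by
    intro x hx
    rw [hT, Finset.mem_image] at hx
    obtain ⟨y, -, rfl⟩ := hx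
    obtain ⟨⟨c, e, w⟩, hy⟩ := y
    have hA : A ((c : Fin n → F) + (e : Fin n → F)) w = (e : Fin n → F) := hy
    have hψval : ψA (g ⟨(c, e, w), hy⟩) = (Real.sqrt M)⁻¹ * f t := by
      rw [hψA]
      simp only [hg]
      rw [hA]
      have h1 : (0 : Fin n → F) + (e : Fin n → F) = (e : Fin n → F) := zero_add _
      rw [h1, e.2]
      have h2 : (c : Fin n → F) + (e : Fin n → F) - 0 - (e : Fin n → F) = (c : Fin n → F) := by
        abel
      rw [h2, if_pos c.2, mul_one]
    have hφval : f t ≤ φ (g ⟨(c, e, w), hy⟩) := by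
      have hx1 : (g ⟨(c, e, w), hy⟩).1 = 0 := rfl
      have hx2 : (g ⟨(c, e, w), hy⟩).2.1 = (c : Fin n → F) + (e : Fin n → F) := rfl
      rw [hφ, hx1, if_pos rfl, one_mul, hx2]
      calc f t = f (hammingNorm ((c : Fin n → F) + (e : Fin n → F) - (c : Fin n → F))) := by
            rw [show (c : Fin n → F) + (e : Fin n → F) - (c : Fin n → F) = (e : Fin n → F)
              from by abel, e.2]
        _ ≤ ∑ c' : C, f (hammingNorm ((c : Fin n → F) + (e : Fin n → F) - (c' : Fin n → F))) :=
            Finset.single_le_sum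
              (f := fun c' : C =>
                f (hammingNorm ((c : Fin n → F) + (e : Fin n → F) - (c' : Fin n → F))))
              (fun c' _ => hf _) (Finset.mem_univ c)
    calc (Real.sqrt M)⁻¹ * f t ^ 2 = ((Real.sqrt M)⁻¹ * f t) * f t := by ring
      _ ≤ ψA (g ⟨(c, e, w), hy⟩) * φ (g ⟨(c, e, w), hy⟩) := by
          rw [hψval]
          apply mul_le_mul_of_nonneg_left hφval
          exact mul_nonneg (by positivity) (hf t)
  -- lower bound on the sum
  have hsum_lb : (N : ℝ) * ((Real.sqrt M)⁻¹ * f t ^ 2)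
      ≤ ∑ x : (Fin n → F) × (Fin n → F) × (Fin ℓ → Bool), ψA x * φ x := by
    calc (N : ℝ) * ((Real.sqrt M)⁻¹ * f t ^ 2)
        = T.card • ((Real.sqrt M)⁻¹ * f t ^ 2) := by rw [hTcard, nsmul_eq_mul]
      _ ≤ ∑ x ∈ T, ψA x * φ x := Finset.card_nsmul_le_sum T _ _ hTbound
      _ ≤ ∑ x : (Fin n → F) × (Fin n → F) × (Fin ℓ → Bool), ψA x * φ x := by
          apply Finset.sum_le_sum_of_subset_of_nonneg (Finset.subset_univ T)
          intro x _ _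
          exact mul_nonneg (hψAnn x) (hφnn x)
  -- the algebraic identity
  have hkey : Real.sqrt M * pt * ε = (N : ℝ) * ((Real.sqrt M)⁻¹ * f t ^ 2) := by
    have hMne : M ≠ 0 := ne_of_gt hMpos
    have hSne : S ≠ 0 := ne_of_gt hSpos
    have hsMne : Real.sqrt M ≠ 0 := ne_of_gt hsMpos
    rw [hpt, hεeq]
    rw [hSdef] at hSne ⊢
    field_simp
    rw [Real.sq_sqrt hMpos.le, div_eq_iff (left_ne_zero_of_mul hSne)]
    ring
  have part1 : Real.sqrt (2 ^ ℓ * q ^ k / Z) * pt * ε ≤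
      ∑ x : (Fin n → F) × (Fin n → F) × (Fin ℓ → Bool), ψA x * ψideal x := by
    have h1 : Real.sqrt (M / Z) * pt * ε = (Real.sqrt Z)⁻¹ * (Real.sqrt M * pt * ε) := by
      rw [Real.sqrt_div hMpos.le]; ring
    rw [hI, h1, hkey]
    exact mul_le_mul_of_nonneg_left hsum_lb (by positivity)
  refine ⟨part1, ?_⟩
  apply Real.sqrt_le_sqrt
  have hMZ : (0:ℝ) ≤ 2 ^ ℓ * q ^ k / Z := by positivity
  have hB2 : (Real.sqrt (2 ^ ℓ * (q:ℝ) ^ k / Z) * pt * ε) ^ 2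
      = 2 ^ ℓ * (q:ℝ) ^ k / Z * pt ^ 2 * ε ^ 2 := by
    rw [mul_pow, mul_pow, Real.sq_sqrt hMZ]
  have hBnn : 0 ≤ Real.sqrt (2 ^ ℓ * (q:ℝ) ^ k / Z) * pt * ε := by
    apply mul_nonneg (mul_nonneg (Real.sqrt_nonneg _) hptnn) hεnn
  have := pow_le_pow_left₀ hBnn part1 2
  rw [hB2, ← hMdef] at this
  linarith
end

section
/- There exists a universal constant C > 0 such that for every prime power q, every n ≥ 1, every 0 ≤ k ≤ n, and every set E of F_q-linear subspaces of F_q^n, the following holds: the probability, over a uniformly random matrix G ∈ F_q^{k×n}, that the row space of G belongs to E is at most the probability, over a uniformly random matrix H ∈ F_q^{(n−k)×n}, that the kernel {x ∈ F_q^n : H·xᵀ = 0} belongs to E, plus C·q^{−min(k, n−k)}. -/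
open scoped BigOperators

open Finset Submodule LinearMap

section Helpers


-- geometric-type sums
lemma geom_sum_le_two {x : ℝ} (h0 : 0 ≤ x) (h2 : x ≤ 1/2) (N : ℕ) :
    ∑ t ∈ range N, x ^ t ≤ 2 - 2 * x ^ N := by
  induction N with
  | zero => simp
  | succ N ih =>
      rw [Finset.sum_range_succ]
      have hx : x ^ (N+1) ≤ x ^ N * (1/2) := by
        rw [pow_succ]
        exact mul_le_mul_of_nonneg_left h2 (pow_nonneg h0 N)
      nlinarith [pow_nonneg h0 N]

lemma sum_pow_succ_le {x : ℝ} (h0 : 0 ≤ x) (h2 : x ≤ 1/2) (N : ℕ) :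
    ∑ t ∈ range N, x ^ (t+1) ≤ 2 * x := by
  have : ∑ t ∈ range N, x ^ (t+1) = x * ∑ t ∈ range N, x ^ t := by
    rw [Finset.mul_sum]; exact Finset.sum_congr rfl fun t _ => by ring
  rw [this]
  calc x * ∑ t ∈ range N, x ^ t ≤ x * 2 := by
        have := geom_sum_le_two h0 h2 N
        have h2' : ∑ t ∈ range N, x ^ t ≤ 2 := by nlinarith [pow_nonneg h0 N]
        exact mul_le_mul_of_nonneg_left h2' h0
    _ = 2 * x := by ring

-- product of (1 - x i) ≥ 1 - sum
lemma one_sub_sum_le_prod_one_sub (s : Finset ℕ) (x : ℕ → ℝ)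
    (h0 : ∀ i ∈ s, 0 ≤ x i) (h1 : ∀ i ∈ s, x i ≤ 1) :
    1 - ∑ i ∈ s, x i ≤ ∏ i ∈ s, (1 - x i) := by
  classical
  induction s using Finset.induction_on with
  | empty => simp
  | @insert a s' hns ih =>
      rw [Finset.sum_insert hns, Finset.prod_insert hns]
      have ih' := ih (fun i hi => h0 i (Finset.mem_insert_of_mem hi))
        (fun i hi => h1 i (Finset.mem_insert_of_mem hi))
      have ha0 := h0 a (Finset.mem_insert_self a s')
      have ha1 := h1 a (Finset.mem_insert_self a s')
      have hprod1 : ∏ i ∈ s', (1 - x i) ≤ 1 := by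
        apply Finset.prod_le_one
        · intro i hi; nlinarith [h1 i (Finset.mem_insert_of_mem hi)]
        · intro i hi; nlinarith [h0 i (Finset.mem_insert_of_mem hi)]
      have hprod0 : (0:ℝ) ≤ ∏ i ∈ s', (1 - x i) :=
        Finset.prod_nonneg fun i hi => by nlinarith [h1 i (Finset.mem_insert_of_mem hi)]
      nlinarith

noncomputable def phiProd (x : ℝ) (m : ℕ) : ℝ := ∏ j ∈ range m, (1 - x^(j+1))

section phi
variable {x : ℝ} (h0 : 0 ≤ x) (h2 : x ≤ 1/2)
include h0 h2

lemma factor_mem {j : ℕ} : 0 < 1 - x^(j+1) ∧ 1 - x^(j+1) ≤ 1 := by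
  constructor
  · have : x^(j+1) ≤ (1/2:ℝ)^(j+1) := pow_le_pow_left₀ h0 h2 _
    have : ((1:ℝ)/2)^(j+1) < 1 := pow_lt_one₀ (by norm_num) (by norm_num) (Nat.succ_ne_zero j)
    linarith
  · nlinarith [pow_nonneg h0 (j+1)]

lemma phiProd_pos (m : ℕ) : 0 < phiProd x m :=
  Finset.prod_pos fun j _ => (factor_mem h0 h2).1

lemma phiProd_le_one (m : ℕ) : phiProd x m ≤ 1 :=
  Finset.prod_le_one (fun j _ => (factor_mem h0 h2).1.le) (fun j _ => (factor_mem h0 h2).2)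

lemma phiProd_key (k m : ℕ) : phiProd x k ≤ phiProd x m + x^k * phiProd x k := by
  rcases le_total m k with h | h
  · -- phi k ≤ phi m
    have : phiProd x k ≤ phiProd x m := by
      unfold phiProd
      rw [← Nat.add_sub_cancel' h, Finset.range_eq_Ico, ← Finset.prod_Ico_consecutive _
        (Nat.zero_le m) (Nat.le_add_right m (k - m)), ← Finset.range_eq_Ico]
      have hIco : ∏ j ∈ Finset.Ico m (m + (k-m)), (1 - x^(j+1)) ≤ 1 :=
        Finset.prod_le_one (fun j _ => (factor_mem h0 h2).1.le) (fun j _ => (factor_mem h0 h2).2)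
      have hP : 0 < ∏ j ∈ range m, (1 - x^(j+1)) := Finset.prod_pos fun j _ => (factor_mem h0 h2).1
      have hQ0 : 0 ≤ ∏ j ∈ Finset.Ico m (m + (k-m)), (1 - x^(j+1)) :=
        Finset.prod_nonneg fun j _ => (factor_mem h0 h2).1.le
      nlinarith
    nlinarith [phiProd_pos h0 h2 k, pow_nonneg h0 k]
  · -- k ≤ m : phi m ≥ phi k (1 - x^k)
    have hsplit : phiProd x m = phiProd x k * ∏ j ∈ Finset.Ico k m, (1 - x^(j+1)) := by
      unfold phiProd
      rw [Finset.range_eq_Ico, ← Finset.prod_Ico_consecutive _ (Nat.zero_le k) h,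
        ← Finset.range_eq_Ico]
    have hsum : ∑ j ∈ Finset.Ico k m, x^(j+1) ≤ x^k := by
      rw [Finset.sum_Ico_eq_sum_range]
      have : ∀ i ∈ range (m - k), x^(k+i+1) = x^k * x^(i+1) := by
        intro i _; ring
      rw [Finset.sum_congr rfl this, ← Finset.mul_sum]
      calc x^k * ∑ t ∈ range (m-k), x^(t+1) ≤ x^k * (2*x) :=
            mul_le_mul_of_nonneg_left (sum_pow_succ_le h0 h2 _) (pow_nonneg h0 k)
        _ ≤ x^k * 1 := mul_le_mul_of_nonneg_left (by linarith) (pow_nonneg h0 k)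
        _ = x^k := by ring
    have hprodIco : 1 - x^k ≤ ∏ j ∈ Finset.Ico k m, (1 - x^(j+1)) := by
      have := one_sub_sum_le_prod_one_sub (Finset.Ico k m) (fun j => x^(j+1))
        (fun j _ => pow_nonneg h0 _) (fun j _ => (by nlinarith [(factor_mem h0 h2 (j := j)).1] : x^(j+1) ≤ 1))
      linarith
    have hk0 := phiProd_pos h0 h2 k
    calc phiProd x k ≤ phiProd x k * (1 - x^k) + x^k * phiProd x k := by ring_nf; nlinarith
      _ ≤ phiProd x m + x^k * phiProd x k := by
          rw [hsplit]
          have := mul_le_mul_of_nonneg_left hprodIco hk0.le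
          linarith

end phi

lemma cast_prod_eq (q d m : ℕ) (hq : 1 ≤ q) (hmd : m ≤ d) :
    ((∏ i : Fin m, (q^d - q^(i:ℕ)) : ℕ) : ℝ)
      = (q:ℝ)^(d*m) * ∏ i ∈ range m, (1 - ((q:ℝ)⁻¹)^(d - i)) := by
  have hq0 : (q:ℝ) ≠ 0 := by positivity
  rw [Fin.prod_univ_eq_prod_range (fun i => q^d - q^i) m, Nat.cast_prod]
  have hfac : ∀ i ∈ range m, ((q^d - q^i : ℕ) : ℝ) = (q:ℝ)^d * (1 - ((q:ℝ)⁻¹)^(d - i)) := by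
    intro i hi
    have hid : i ≤ d := le_trans (Nat.le_of_lt (Finset.mem_range.1 hi)) hmd
    rw [Nat.cast_sub (Nat.pow_le_pow_right hq hid), Nat.cast_pow, Nat.cast_pow]
    have key : (q:ℝ)^d * ((q:ℝ)⁻¹)^(d - i) = (q:ℝ)^i := by
      rw [inv_pow, eq_comm, eq_comm, mul_inv_eq_iff_eq_mul₀ (by positivity), ← pow_add, Nat.add_sub_cancel' hid]
    rw [mul_sub, mul_one, key]
  rw [Finset.prod_congr rfl hfac, Finset.prod_mul_distrib, Finset.prod_const, Finset.card_range,
    ← pow_mul]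

lemma prod_reflect_phi (x : ℝ) (m : ℕ) :
    ∏ i ∈ range m, (1 - x^(m - i)) = phiProd x m := by
  unfold phiProd
  rw [← Finset.prod_range_reflect (fun j => 1 - x^(j+1)) m]
  apply Finset.prod_congr rfl
  intro i hi
  have h : m - 1 - i + 1 = m - i := by
    have := Finset.mem_range.1 hi; omega
  rw [h]

lemma sum_reflect_le {x : ℝ} (h0 : 0 ≤ x) (h2 : x ≤ 1/2) (m : ℕ) :
    ∑ i ∈ range m, x^(m - i) ≤ 2 * x := by
  have : ∑ i ∈ range m, x^(m-i) = ∑ i ∈ range m, x^(i+1) := by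
    rw [← Finset.sum_range_reflect (fun j => x^(j+1)) m]
    apply Finset.sum_congr rfl
    intro i hi
    have h : m - 1 - i + 1 = m - i := by
      have := Finset.mem_range.1 hi; omega
    rw [h]
  rw [this]; exact sum_pow_succ_le h0 h2 m

end Helpers

section Counting

variable {F : Type} [Field F] [Fintype F] {n k m : ℕ}


/-- tuples spanning a fixed `k`-dimensional subspace `V` correspond to
linearly independent tuples in `V`. -/
noncomputable def spanFiberEquiv (V : Submodule F (Fin n → F)) (hV : Module.finrank F V = k) :
    {G : Fin k → Fin n → F // Submodule.span F (Set.range G) = V}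
      ≃ {s : Fin k → V // LinearIndependent F s} where
  toFun G := ⟨fun i => ⟨G.1 i, by have h : G.1 i ∈ Submodule.span F (Set.range G.1) := Submodule.subset_span (Set.mem_range_self i); rwa [G.2] at h⟩, by
    have hLI : LinearIndependent F G.1 := by
      rw [linearIndependent_iff_card_eq_finrank_span]
      rw [Set.finrank, G.2, hV, Fintype.card_fin]
    exact hLI.of_comp V.subtype⟩
  invFun s := ⟨fun i => (s.1 i : Fin n → F), by
    have hspan : Submodule.span F (Set.range s.1) = ⊤ :=
      s.2.span_eq_top_of_card_eq_finrank' (by rw [Fintype.card_fin, hV])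
    have : Set.range (fun i => ((s.1 i : Fin n → F))) = V.subtype '' (Set.range s.1) := by
      rw [← Set.range_comp]; rfl
    rw [this, ← Submodule.map_span, hspan, Submodule.map_subtype_top]⟩
  left_inv G := by ext i : 2; rfl
  right_inv s := by ext i : 2; rfl

lemma card_span_fiber (V : Submodule F (Fin n → F)) (hV : Module.finrank F V = k) :
    Nat.card {G : Fin k → Fin n → F // Submodule.span F (Set.range G) = V}
      = ∏ i : Fin k, (Fintype.card F ^ k - Fintype.card F ^ (i : ℕ)) := by
  rw [Nat.card_congr (spanFiberEquiv V hV)]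
  have := card_linearIndependent (K := F) (V := V) (k := k) (by rw [hV])
  rwa [hV] at this


/-- matrices (as row tuples) with a given kernel correspond to linear maps with that kernel. -/
noncomputable def matrixKerEquiv (V : Submodule F (Fin n → F)) :
    {H : Fin m → Fin n → F // LinearMap.ker (Matrix.mulVecLin (Matrix.of H)) = V}
      ≃ {φ : (Fin n → F) →ₗ[F] (Fin m → F) // LinearMap.ker φ = V} :=
  ((Matrix.of (m := Fin m) (n := Fin n) (α := F)).trans
    Matrix.toLin'.toEquiv).subtypeEquiv (fun H => by
      simp only [Equiv.trans_apply, LinearEquiv.coe_toEquiv]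
      rw [Matrix.toLin'_apply'])

/-- linear maps with kernel `V` correspond to injective maps from the quotient. -/
noncomputable def kerQuotEquiv (V : Submodule F (Fin n → F)) :
    {φ : (Fin n → F) →ₗ[F] (Fin m → F) // LinearMap.ker φ = V}
      ≃ {ψ : ((Fin n → F) ⧸ V) →ₗ[F] (Fin m → F) // LinearMap.ker ψ = ⊥} where
  toFun φ := ⟨V.liftQ φ.1 (le_of_eq φ.2.symm), by
    rw [Submodule.ker_liftQ, φ.2]
    rw [Submodule.eq_bot_iff]
    rintro x ⟨y, hy, rfl⟩
    simpa [Submodule.Quotient.mk_eq_zero] using hy⟩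
  invFun ψ := ⟨ψ.1.comp V.mkQ, by
    rw [LinearMap.ker_comp, ψ.2, Submodule.comap_bot, Submodule.ker_mkQ]⟩
  left_inv φ := Subtype.ext (V.liftQ_mkQ φ.1 _)
  right_inv ψ := Subtype.ext (Submodule.linearMap_qext V rfl)

/-- injective linear maps from an `m`-dimensional space correspond to independent tuples. -/
noncomputable def injEquivLI (Q : Type) [AddCommGroup Q] [Module F Q] [Module.Finite F Q]
    (hQ : Module.finrank F Q = m) :
    {ψ : Q →ₗ[F] (Fin m → F) // LinearMap.ker ψ = ⊥}
      ≃ {s : Fin m → (Fin m → F) // LinearIndependent F s} := by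
  classical
  let b : Module.Basis (Fin m) F Q := Module.finBasisOfFinrankEq F Q hQ
  exact
  { toFun := fun ψ => ⟨fun i => ψ.1 (b i), b.linearIndependent.map' ψ.1 ψ.2⟩
    invFun := fun s => ⟨b.constr F s.1, by
      rw [LinearMap.ker_eq_bot']
      intro x hx
      have hrepr : ∀ i, b.repr x i = 0 := by
        have hsum : (b.constr F s.1) x = ∑ i, b.repr x i • s.1 i := by
          conv_lhs => rw [← b.sum_repr x]
          rw [map_sum]
          exact Finset.sum_congr rfl fun i _ => by rw [map_smul, b.constr_basis]
        exact Fintype.linearIndependent_iff.1 s.2 _ (by rw [← hsum, hx])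
      apply b.ext_elem
      intro i; simp [hrepr i]⟩
    left_inv := fun ψ => Subtype.ext (b.ext fun i => by simp [b.constr_basis])
    right_inv := fun s => Subtype.ext (funext fun i => by simp [b.constr_basis]) }

lemma card_ker_fiber (V : Submodule F (Fin n → F)) (hV : Module.finrank F V = n - m)
    (hm : m ≤ n) :
    Nat.card {H : Fin m → Fin n → F // LinearMap.ker (Matrix.mulVecLin (Matrix.of H)) = V}
      = ∏ i : Fin m, (Fintype.card F ^ m - Fintype.card F ^ (i : ℕ)) := by
  have hQ : Module.finrank F ((Fin n → F) ⧸ V) = m := by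
    have h1 := Submodule.finrank_quotient_add_finrank V
    rw [hV, Module.finrank_fin_fun] at h1
    omega
  rw [Nat.card_congr (((matrixKerEquiv V).trans (kerQuotEquiv V)).trans
    (injEquivLI _ hQ))]
  have := card_linearIndependent (K := F) (V := Fin m → F) (k := m)
    (by rw [Module.finrank_fin_fun])
  rwa [Module.finrank_fin_fun] at this

lemma nat_card_sigma_const {ι : Type} [Finite ι] (g : ι → Type) [∀ i, Finite (g i)] (c : ℕ)
    (h : ∀ i, Nat.card (g i) = c) : Nat.card (Σ i, g i) = Nat.card ι * c := by
  cases nonempty_fintype ι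
  letI : ∀ i, Fintype (g i) := fun i => Fintype.ofFinite _
  rw [Nat.card_eq_fintype_card, Fintype.card_sigma, Nat.card_eq_fintype_card,
    Finset.sum_congr rfl (fun i _ => by rw [← Nat.card_eq_fintype_card, h i])]
  simp [mul_comm]


instance : Finite (Submodule F (Fin n → F)) :=
  Finite.of_injective SetLike.coe SetLike.coe_injective

/-- the count of independent tuples whose span lies in `E`. -/
lemma card_LI_span_mem (E : Set (Submodule F (Fin n → F))) :
    Nat.card {G : Fin k → Fin n → F //
        LinearIndependent F G ∧ Submodule.span F (Set.range G) ∈ E}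
      = Nat.card {V : Submodule F (Fin n → F) // V ∈ E ∧ Module.finrank F V = k}
        * ∏ i : Fin k, (Fintype.card F ^ k - Fintype.card F ^ (i : ℕ)) := by
  classical
  set T := {V : Submodule F (Fin n → F) // V ∈ E ∧ Module.finrank F V = k} with hT
  set S := {G : Fin k → Fin n → F //
      LinearIndependent F G ∧ Submodule.span F (Set.range G) ∈ E} with hS
  have hfr : ∀ G : S, Module.finrank F (Submodule.span F (Set.range G.1)) = k := fun G => by
    rw [finrank_span_eq_card G.2.1, Fintype.card_fin]
  let f : S → T := fun G => ⟨Submodule.span F (Set.range G.1), G.2.2, hfr G⟩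
  have fib : ∀ V : T, {G : S // f G = V}
      ≃ {G : Fin k → Fin n → F // Submodule.span F (Set.range G) = V.1} := fun V =>
    { toFun := fun G => ⟨G.1.1, congrArg Subtype.val G.2⟩
      invFun := fun G => ⟨⟨G.1, by
          constructor
          · rw [linearIndependent_iff_card_eq_finrank_span, Set.finrank, G.2, V.2.2,
              Fintype.card_fin]
          · rw [G.2]; exact V.2.1⟩, Subtype.ext G.2⟩
      left_inv := fun G => by ext : 2; rfl
      right_inv := fun G => rfl }
  have e : S ≃ Σ V : T, {G : Fin k → Fin n → F // Submodule.span F (Set.range G) = V.1} :=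
    (Equiv.sigmaFiberEquiv f).symm.trans (Equiv.sigmaCongrRight fib)
  rw [Nat.card_congr e]
  exact nat_card_sigma_const
    (fun V : T => {G : Fin k → Fin n → F // Submodule.span F (Set.range G) = V.1}) _
    (fun V => card_span_fiber V.1 V.2.2)




/-- split by linear independence -/
lemma card_span_mem_le (E : Set (Submodule F (Fin n → F))) :
    Nat.card {G : Fin k → Fin n → F // Submodule.span F (Set.range G) ∈ E}
      ≤ Nat.card {G : Fin k → Fin n → F // ¬ LinearIndependent F G}
        + Nat.card {G : Fin k → Fin n → F //
            LinearIndependent F G ∧ Submodule.span F (Set.range G) ∈ E} := by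
  classical
  rw [← Nat.card_sum]
  apply Nat.card_le_card_of_injective
    (f := fun G : {G : Fin k → Fin n → F // Submodule.span F (Set.range G) ∈ E} =>
      if h : LinearIndependent F G.1 then Sum.inr ⟨G.1, h, G.2⟩ else Sum.inl ⟨G.1, h⟩)
  intro a b hab
  by_cases ha : LinearIndependent F a.1 <;> by_cases hb : LinearIndependent F b.1 <;>
    simp [ha, hb] at hab <;> exact Subtype.ext hab

lemma card_not_LI :
    Nat.card {G : Fin k → Fin n → F // ¬ LinearIndependent F G}
      = Nat.card (Fin k → Fin n → F)
        - Nat.card {G : Fin k → Fin n → F // LinearIndependent F G} := by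
  classical
  simp only [Nat.card_eq_fintype_card]
  exact Fintype.card_subtype_compl _

lemma card_ker_mem_ge (E : Set (Submodule F (Fin n → F))) (hm : m ≤ n) :
    Nat.card {V : Submodule F (Fin n → F) // V ∈ E ∧ Module.finrank F V = n - m}
        * ∏ i : Fin m, (Fintype.card F ^ m - Fintype.card F ^ (i : ℕ))
      ≤ Nat.card {H : Fin m → Fin n → F //
          LinearMap.ker (Matrix.mulVecLin (Matrix.of H)) ∈ E} := by
  classical
  set T := {V : Submodule F (Fin n → F) // V ∈ E ∧ Module.finrank F V = n - m} with hT
  rw [← nat_card_sigma_const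
    (fun V : T => {H : Fin m → Fin n → F //
      LinearMap.ker (Matrix.mulVecLin (Matrix.of H)) = V.1}) _
    (fun V => card_ker_fiber V.1 V.2.2 hm)]
  apply Nat.card_le_card_of_injective
    (f := fun x : Σ V : T, {H : Fin m → Fin n → F //
        LinearMap.ker (Matrix.mulVecLin (Matrix.of H)) = V.1} =>
      (⟨x.2.1, by rw [x.2.2]; exact x.1.2.1⟩ :
        {H : Fin m → Fin n → F // LinearMap.ker (Matrix.mulVecLin (Matrix.of H)) ∈ E}))
  rintro ⟨V, H, hH⟩ ⟨V', H', hH'⟩ hab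
  simp only [Subtype.mk_eq_mk] at hab
  subst hab
  have hVV' : V = V' := Subtype.ext (by rw [← hH, ← hH'])
  subst hVV'
  rfl

end Counting

set_option maxHeartbeats 1000000 in
/-- Lemma 3 (lem:GvsH): comparison between the generator-matrix and
parity-check-matrix models of random linear codes. For any event `E` on linear
codes, the probability (over a uniform `G ∈ F_q^{k×n}`) that the row space of `G`
lies in `E` is at most the probability (over a uniform `H ∈ F_q^{(n−k)×n}`) that
the kernel of `H` lies in `E`, plus `C·q^{−min(k,n−k)}`. -/
theorem generator_vs_parityCheck_model :
    ∃ Cst : ℝ, 0 < Cst ∧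
      ∀ (n k : ℕ) (F : Type) [Field F] [Fintype F], 1 ≤ n → k ≤ n →
        ∀ E : Set (Submodule F (Fin n → F)),
          (Nat.card {G : Fin k → Fin n → F //
              Submodule.span F (Set.range G) ∈ E} : ℝ) /
              (Nat.card (Fin k → Fin n → F) : ℝ)
            ≤ (Nat.card {H : Fin (n - k) → Fin n → F //
                LinearMap.ker (Matrix.mulVecLin (Matrix.of H)) ∈ E} : ℝ) /
                (Nat.card (Fin (n - k) → Fin n → F) : ℝ)
              + Cst / (Fintype.card F : ℝ) ^ (min k (n - k)) := by
  refine ⟨2, by norm_num, ?_⟩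
  intro n k F _ _ hn hk E
  classical
  set q : ℕ := Fintype.card F with hqdef
  have hq2 : 2 ≤ q := Fintype.one_lt_card
  have hq1 : 1 ≤ q := le_trans (by norm_num) hq2
  have hqR : (2:ℝ) ≤ (q:ℝ) := by exact_mod_cast hq2
  have hq0 : (0:ℝ) < (q:ℝ) := by linarith
  set x : ℝ := ((q:ℝ))⁻¹ with hxdef
  have hx0 : 0 ≤ x := by positivity
  have hx2 : x ≤ 1/2 := by
    rw [hxdef]
    rw [inv_le_comm₀ (by linarith) (by norm_num)]
    simpa using hqR
  set m : ℕ := n - k with hmdef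
  have hmn : m ≤ n := Nat.sub_le n k
  have hkm : k + m = n := Nat.add_sub_cancel' hk
  -- cardinalities of the ambient spaces
  have hQG : (Nat.card (Fin k → Fin n → F) : ℝ) = (q:ℝ)^(n*k) := by
    have h : Nat.card (Fin k → Fin n → F) = q ^ (n*k) := by
      rw [Nat.card_fun, Nat.card_fun, Nat.card_eq_fintype_card (α := F),
        Nat.card_eq_fintype_card, Nat.card_eq_fintype_card, Fintype.card_fin, Fintype.card_fin,
        ← pow_mul]
    rw [h]; push_cast; ring
  have hQH : (Nat.card (Fin m → Fin n → F) : ℝ) = (q:ℝ)^(n*m) := by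
    have h : Nat.card (Fin m → Fin n → F) = q ^ (n*m) := by
      rw [Nat.card_fun, Nat.card_fun, Nat.card_eq_fintype_card (α := F),
        Nat.card_eq_fintype_card, Nat.card_eq_fintype_card, Fintype.card_fin, Fintype.card_fin,
        ← pow_mul]
    rw [h]; push_cast; ring
  have hQGpos : (0:ℝ) < (Nat.card (Fin k → Fin n → F) : ℝ) := by rw [hQG]; positivity
  have hQHpos : (0:ℝ) < (Nat.card (Fin m → Fin n → F) : ℝ) := by rw [hQH]; positivity
  -- the count of linearly independent tuples
  have hA : Nat.card {G : Fin k → Fin n → F // LinearIndependent F G}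
      = ∏ i : Fin k, (q^n - q^(i:ℕ)) := by
    have h := card_linearIndependent (K := F) (V := Fin n → F) (k := k)
      (by rw [Module.finrank_fin_fun]; exact hk)
    rwa [Module.finrank_fin_fun] at h
  have hAle : Nat.card {G : Fin k → Fin n → F // LinearIndependent F G}
      ≤ Nat.card (Fin k → Fin n → F) :=
    Nat.card_le_card_of_injective Subtype.val Subtype.val_injective
  -- lower bound for the independent count
  have hA_lb : (q:ℝ)^(n*k) * (1 - x^m) ≤
      (Nat.card {G : Fin k → Fin n → F // LinearIndependent F G} : ℝ) := by
    rw [hA, cast_prod_eq q n k hq1 hk]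
    have hprod : 1 - x^m ≤ ∏ i ∈ range k, (1 - x^(n - i)) := by
      have h1 := one_sub_sum_le_prod_one_sub (range k) (fun i => x^(n-i))
        (fun i _ => pow_nonneg hx0 _)
        (fun i _ => pow_le_one₀ hx0 (by linarith))
      have hsum : ∑ i ∈ range k, x^(n-i) ≤ x^m := by
        have heq : ∀ i ∈ range k, x^(n-i) = x^m * x^(k-i) := by
          intro i hi
          rw [← pow_add]
          congr 1
          have := Finset.mem_range.1 hi
          omega
        rw [Finset.sum_congr rfl heq, ← Finset.mul_sum]
        calc x^m * ∑ i ∈ range k, x^(k-i) ≤ x^m * (2*x) :=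
              mul_le_mul_of_nonneg_left (sum_reflect_le hx0 hx2 k) (pow_nonneg hx0 m)
          _ ≤ x^m * 1 := mul_le_mul_of_nonneg_left (by linarith) (pow_nonneg hx0 m)
          _ = x^m := by ring
      linarith
    have : (0:ℝ) ≤ (q:ℝ)^(n*k) := by positivity
    nlinarith
  -- B values
  have hBk : ((∏ i : Fin k, (q^k - q^(i:ℕ)) : ℕ) : ℝ) = (q:ℝ)^(k*k) * phiProd x k := by
    rw [cast_prod_eq q k k hq1 le_rfl, prod_reflect_phi]
  have hBm : ((∏ i : Fin m, (q^m - q^(i:ℕ)) : ℕ) : ℝ) = (q:ℝ)^(m*m) * phiProd x m := by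
    rw [cast_prod_eq q m m hq1 le_rfl, prod_reflect_phi]
  -- T
  set t : ℕ := Nat.card {V : Submodule F (Fin n → F) // V ∈ E ∧ Module.finrank F V = k}
    with htdef
  -- main ℕ inequalities
  have hNG : Nat.card {G : Fin k → Fin n → F // Submodule.span F (Set.range G) ∈ E}
      ≤ (Nat.card (Fin k → Fin n → F)
          - Nat.card {G : Fin k → Fin n → F // LinearIndependent F G})
        + t * ∏ i : Fin k, (q^k - q^(i:ℕ)) := by
    calc Nat.card {G : Fin k → Fin n → F // Submodule.span F (Set.range G) ∈ E}
        ≤ Nat.card {G : Fin k → Fin n → F // ¬ LinearIndependent F G}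
          + Nat.card {G : Fin k → Fin n → F //
              LinearIndependent F G ∧ Submodule.span F (Set.range G) ∈ E} :=
          card_span_mem_le E
      _ = _ := by rw [card_not_LI, card_LI_span_mem E]
  have htBk_le : t * (∏ i : Fin k, (q^k - q^(i:ℕ))) ≤ Nat.card (Fin k → Fin n → F) := by
    rw [← card_LI_span_mem E]
    exact Nat.card_le_card_of_injective Subtype.val Subtype.val_injective
  have hNH : t * ∏ i : Fin m, (q^m - q^(i:ℕ))
      ≤ Nat.card {H : Fin m → Fin n → F //
          LinearMap.ker (Matrix.mulVecLin (Matrix.of H)) ∈ E} := by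
    have h := card_ker_mem_ge (F := F) (n := n) (m := m) E hmn
    have hnm : n - m = k := by omega
    rw [hnm] at h
    exact h
  -- pass to ℝ
  have hq0' : (q:ℝ) ≠ 0 := ne_of_gt hq0
  have hxq : ∀ a : ℕ, x^a * (q:ℝ)^a = 1 := by
    intro a
    rw [hxdef, ← mul_pow, inv_mul_cancel₀ hq0', one_pow]
  -- key division identities
  have hG_div : ((∏ i : Fin k, (q^k - q^(i:ℕ)) : ℕ) : ℝ) / (q:ℝ)^(n*k)
      = x^(k*m) * phiProd x k := by
    have hnk : n*k = k*k + k*m := by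
      have : k*k + k*m = k*(k+m) := by ring
      rw [this, hkm]; ring
    rw [hBk, hnk, pow_add, mul_div_mul_left _ _ (pow_ne_zero (k*k) hq0'),
      div_eq_mul_inv, mul_comm, hxdef, inv_pow]
  have hH_div : ((∏ i : Fin m, (q^m - q^(i:ℕ)) : ℕ) : ℝ) / (q:ℝ)^(n*m)
      = x^(k*m) * phiProd x m := by
    have hnm : n*m = m*m + k*m := by
      have : m*m + k*m = m*(m+k) := by ring
      rw [this]
      have : m + k = n := by omega
      rw [this]; ring
    rw [hBm, hnm, pow_add, mul_div_mul_left _ _ (pow_ne_zero (m*m) hq0'),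
      div_eq_mul_inv, mul_comm, hxdef, inv_pow]
  -- final chain
  set NG := Nat.card {G : Fin k → Fin n → F // Submodule.span F (Set.range G) ∈ E}
  set NH := Nat.card {H : Fin m → Fin n → F //
      LinearMap.ker (Matrix.mulVecLin (Matrix.of H)) ∈ E}
  set A := Nat.card {G : Fin k → Fin n → F // LinearIndependent F G}
  have hNG_R : (NG:ℝ) ≤ ((Nat.card (Fin k → Fin n → F) : ℝ) - A)
      + t * ((∏ i : Fin k, (q^k - q^(i:ℕ)) : ℕ) : ℝ) := by
    have := hNG
    have hcast : ((Nat.card (Fin k → Fin n → F)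
        - A : ℕ) : ℝ) = (Nat.card (Fin k → Fin n → F) : ℝ) - A :=
      Nat.cast_sub hAle
    calc (NG:ℝ) ≤ ((Nat.card (Fin k → Fin n → F) - A
          + t * ∏ i : Fin k, (q^k - q^(i:ℕ)) : ℕ) : ℝ) := by exact_mod_cast this
      _ = _ := by push_cast [hcast]; ring
  -- divide through
  have step1 : (NG:ℝ) / (Nat.card (Fin k → Fin n → F) : ℝ)
      ≤ x^m + (t:ℝ) * x^(k*m) * phiProd x k := by
    rw [div_le_iff₀ hQGpos]
    have h1 : ((Nat.card (Fin k → Fin n → F) : ℝ) - A) ≤ (q:ℝ)^(n*k) * x^m := by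
      rw [hQG] at *
      nlinarith [hA_lb]
    have h2 : (t:ℝ) * ((∏ i : Fin k, (q^k - q^(i:ℕ)) : ℕ) : ℝ)
        = (t:ℝ) * x^(k*m) * phiProd x k * (q:ℝ)^(n*k) := by
      have := hG_div
      rw [div_eq_iff (by positivity)] at this
      rw [this]; ring
    calc (NG:ℝ) ≤ ((Nat.card (Fin k → Fin n → F) : ℝ) - A)
          + t * ((∏ i : Fin k, (q^k - q^(i:ℕ)) : ℕ) : ℝ) := hNG_R
      _ ≤ (q:ℝ)^(n*k) * x^m + (t:ℝ) * x^(k*m) * phiProd x k * (q:ℝ)^(n*k) := by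
          rw [h2]; linarith
      _ = (x^m + (t:ℝ) * x^(k*m) * phiProd x k) * (Nat.card (Fin k → Fin n → F) : ℝ) := by
          rw [hQG]; ring
  have hu1 : (t:ℝ) * x^(k*m) * phiProd x k ≤ 1 := by
    have h := htBk_le
    have hR : (t:ℝ) * ((∏ i : Fin k, (q^k - q^(i:ℕ)) : ℕ) : ℝ)
        ≤ (Nat.card (Fin k → Fin n → F) : ℝ) := by exact_mod_cast h
    have h2 : (t:ℝ) * ((∏ i : Fin k, (q^k - q^(i:ℕ)) : ℕ) : ℝ)
        = (t:ℝ) * x^(k*m) * phiProd x k * (q:ℝ)^(n*k) := by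
      have := hG_div
      rw [div_eq_iff (by positivity)] at this
      rw [this]; ring
    rw [h2, hQG] at hR
    have hp : (0:ℝ) < (q:ℝ)^(n*k) := by positivity
    exact (mul_le_iff_le_one_left hp).mp hR
  have step2 : (t:ℝ) * x^(k*m) * phiProd x k
      ≤ (t:ℝ) * x^(k*m) * phiProd x m + x^k := by
    have hkey := phiProd_key hx0 hx2 k m
    have hu0 : (0:ℝ) ≤ (t:ℝ) * x^(k*m) := by positivity
    have h1 : (t:ℝ)*x^(k*m) * phiProd x k
        ≤ (t:ℝ)*x^(k*m) * (phiProd x m + x^k * phiProd x k) :=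
      mul_le_mul_of_nonneg_left hkey hu0
    have h2 : x^k * ((t:ℝ)*x^(k*m)*phiProd x k) ≤ x^k * 1 :=
      mul_le_mul_of_nonneg_left hu1 (pow_nonneg hx0 k)
    ring_nf at h1 h2 ⊢
    linarith
  have step3 : (t:ℝ) * x^(k*m) * phiProd x m
      ≤ (NH:ℝ) / (Nat.card (Fin m → Fin n → F) : ℝ) := by
    rw [le_div_iff₀ hQHpos]
    have h2 : (t:ℝ) * x^(k*m) * phiProd x m * (q:ℝ)^(n*m)
        = (t:ℝ) * ((∏ i : Fin m, (q^m - q^(i:ℕ)) : ℕ) : ℝ) := by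
      have := hH_div
      rw [div_eq_iff (by positivity)] at this
      rw [this]; ring
    rw [hQH, h2]
    exact_mod_cast hNH
  -- collect
  have hxmin_k : x^k ≤ x^(min k m) :=
    pow_le_pow_of_le_one hx0 (by linarith) (min_le_left k m)
  have hxmin_m : x^m ≤ x^(min k m) :=
    pow_le_pow_of_le_one hx0 (by linarith) (min_le_right k m)
  have hfinal : (2:ℝ) / (q:ℝ)^(min k m) = 2 * x^(min k m) := by
    rw [hxdef, inv_pow, div_eq_mul_inv]
  calc (NG:ℝ) / (Nat.card (Fin k → Fin n → F) : ℝ)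
      ≤ x^m + (t:ℝ) * x^(k*m) * phiProd x k := step1
    _ ≤ x^m + ((t:ℝ) * x^(k*m) * phiProd x m + x^k) := add_le_add_right step2 _
    _ ≤ x^m + ((NH:ℝ) / (Nat.card (Fin m → Fin n → F) : ℝ) + x^k) :=
        add_le_add_right (add_le_add_left step3 _) _
    _ = (NH:ℝ) / (Nat.card (Fin m → Fin n → F) : ℝ) + (x^m + x^k) := by ring
    _ ≤ (NH:ℝ) / (Nat.card (Fin m → Fin n → F) : ℝ) + (x^(min k m) + x^(min k m)) :=
        add_le_add_right (add_le_add hxmin_m hxmin_k) _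
    _ = (NH:ℝ) / (Nat.card (Fin m → Fin n → F) : ℝ) + 2 * x^(min k m) := by ring
    _ = (NH:ℝ) / (Nat.card (Fin m → Fin n → F) : ℝ) + 2 / (q:ℝ)^(min k m) := by
        rw [hfinal]
end

section
/- Let q be a prime power, let n ≥ 1, 0 ≤ k ≤ n and 1 ≤ u ≤ n. For a uniformly random matrix G ∈ F_q^{k×n}, let N_u := #{x ∈ F_q^n : wt(x) = u and G·xᵀ = 0} be the number of weight-u codewords in the dual code of the row space of G. Then P( |N_u − S_u/q^k| ≥ (S_u/q^k)^{3/4} ) ≤ (q−1)·(q^k/S_u)^{1/2}. -/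
open scoped BigOperators
open Finset Function Matrix

section Aux
variable {F : Type} [Field F] [Fintype F] [DecidableEq F] {n k u : ℕ}
set_option linter.unusedSectionVars false

lemma card_ker_mul_card {A B : Type} [AddCommGroup A] [AddCommGroup B]
    (φ : A →+ B) (hφ : Function.Surjective φ) :
    Nat.card {a : A // φ a = 0} * Nat.card B = Nat.card A := by
  have h1 := AddSubgroup.card_eq_card_quotient_mul_card_addSubgroup (AddMonoidHom.ker φ)
  have h2 : Nat.card (A ⧸ AddMonoidHom.ker φ) = Nat.card B :=
    Nat.card_congr (QuotientAddGroup.quotientKerEquivOfSurjective φ hφ).toEquiv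
  have h3 : Nat.card {a : A // φ a = 0} = Nat.card (AddMonoidHom.ker φ) :=
    Nat.card_congr (Equiv.subtypeEquivRight (fun a => AddMonoidHom.mem_ker.symm))
  rw [h3, mul_comm, ← h2, ← h1]

def dotHom (x : Fin n → F) : (Fin n → F) →+ F where
  toFun g := g ⬝ᵥ x
  map_zero' := zero_dotProduct x
  map_add' g h := add_dotProduct g h x

def dotHom2 (x y : Fin n → F) : (Fin n → F) →+ F × F where
  toFun g := (g ⬝ᵥ x, g ⬝ᵥ y)
  map_zero' := by simp [zero_dotProduct]
  map_add' g h := by simp [add_dotProduct, Prod.ext_iff]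

lemma dotHom_surj {x : Fin n → F} (hx : x ≠ 0) : Function.Surjective (dotHom x) := by
  obtain ⟨i, hi⟩ : ∃ i, x i ≠ 0 := by
    by_contra h; push_neg at h; exact hx (funext fun i => h i)
  intro c
  refine ⟨Pi.single i (c * (x i)⁻¹), ?_⟩
  simp [dotHom, single_dotProduct, mul_assoc, inv_mul_cancel₀ hi]

lemma dotHom2_surj {x y : Fin n → F} (hx : x ≠ 0) (hxy : ∀ c : F, y ≠ c • x) :
    Function.Surjective (dotHom2 x y) := by
  obtain ⟨i, j, hd⟩ : ∃ i j, x i * y j - x j * y i ≠ 0 := by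
    by_contra h; push_neg at h
    obtain ⟨i₀, hi₀⟩ : ∃ i, x i ≠ 0 := by
      by_contra h'; push_neg at h'; exact hx (funext fun i => h' i)
    refine hxy (y i₀ / x i₀) (funext fun j => ?_)
    have h2 : x i₀ * y j = x j * y i₀ := sub_eq_zero.mp (h i₀ j)
    have : ((y i₀ / x i₀) • x) j = y i₀ / x i₀ * x j := rfl
    rw [this]
    field_simp
    linear_combination h2
  rintro ⟨a, b⟩
  set d := x i * y j - x j * y i with hdd
  refine ⟨Pi.single i ((a * y j - b * x j)/d) + Pi.single j ((b * x i - a * y i)/d), ?_⟩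
  have : ∀ v : Fin n → F,
      (Pi.single i ((a * y j - b * x j)/d) + Pi.single j ((b * x i - a * y i)/d)) ⬝ᵥ v
      = (a * y j - b * x j)/d * v i + (b * x i - a * y i)/d * v j := by
    intro v
    rw [add_dotProduct, single_dotProduct, single_dotProduct]
  show ((_ : Fin n → F) ⬝ᵥ x, _ ⬝ᵥ y) = (a, b)
  rw [this x, this y]
  refine Prod.ext ?_ ?_ <;> (show _ = _; field_simp; ring)

lemma card_row_one {x : Fin n → F} (hx : x ≠ 0) :
    Nat.card {g : Fin n → F // g ⬝ᵥ x = 0} * Fintype.card F = Fintype.card F ^ n := by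
  have := card_ker_mul_card (dotHom x) (dotHom_surj hx)
  rw [Nat.card_eq_fintype_card (α := F)] at this
  have hfin : Nat.card (Fin n → F) = Fintype.card F ^ n := by
    rw [Nat.card_eq_fintype_card]; simp
  have hsub : Nat.card { a // (dotHom x) a = 0 } = Nat.card {g : Fin n → F // g ⬝ᵥ x = 0} :=
    Nat.card_congr (Equiv.subtypeEquivRight fun g => Iff.rfl)
  rw [hfin, hsub] at this
  exact this

lemma card_row_two {x y : Fin n → F} (hx : x ≠ 0) (hxy : ∀ c : F, y ≠ c • x) :
    Nat.card {g : Fin n → F // g ⬝ᵥ x = 0 ∧ g ⬝ᵥ y = 0} * Fintype.card F ^ 2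
      = Fintype.card F ^ n := by
  have := card_ker_mul_card (dotHom2 x y) (dotHom2_surj hx hxy)
  rw [Nat.card_eq_fintype_card (α := F × F), Fintype.card_prod, ← sq] at this
  have hfin : Nat.card (Fin n → F) = Fintype.card F ^ n := by
    rw [Nat.card_eq_fintype_card]; simp
  have hsub : Nat.card { a // (dotHom2 x y) a = 0 }
      = Nat.card {g : Fin n → F // g ⬝ᵥ x = 0 ∧ g ⬝ᵥ y = 0} :=
    Nat.card_congr (Equiv.subtypeEquivRight fun g => by
      show (g ⬝ᵥ x, g ⬝ᵥ y) = (0 : F × F) ↔ _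
      rw [Prod.mk_eq_zero])
  rw [hfin, hsub] at this
  exact this

lemma card_mat_rows (P : (Fin n → F) → Prop) :
    Nat.card {G : Fin k → Fin n → F // ∀ r, P (G r)}
      = Nat.card {g : Fin n → F // P g} ^ k := by
  rw [Nat.card_congr (Equiv.subtypePiEquivPi (p := fun _ : Fin k => P)), Nat.card_pi]
  simp

lemma card_support_eq (s : Finset (Fin n)) :
    Nat.card {x : Fin n → F // ∀ i, x i ≠ 0 ↔ i ∈ s} = (Fintype.card F - 1) ^ s.card := by
  rw [Nat.card_congr (Equiv.subtypePiEquivPi (p := fun i (a : F) => a ≠ 0 ↔ i ∈ s)),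
    Nat.card_pi]
  have h1 : ∀ i : Fin n, Nat.card {a : F // a ≠ 0 ↔ i ∈ s}
      = if i ∈ s then Fintype.card F - 1 else 1 := by
    intro i
    rw [Nat.card_eq_fintype_card]
    by_cases hi : i ∈ s
    · rw [if_pos hi]
      have h2 : Fintype.card {a : F // a ≠ 0 ↔ i ∈ s} = Fintype.card {a : F // ¬ a = 0} :=
        Fintype.card_congr (Equiv.subtypeEquivRight fun a => by simp [hi])
      rw [h2, Fintype.card_subtype_compl, Fintype.card_subtype_eq]
    · rw [if_neg hi]
      have h2 : Fintype.card {a : F // a ≠ 0 ↔ i ∈ s} = Fintype.card {a : F // a = 0} :=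
        Fintype.card_congr (Equiv.subtypeEquivRight fun a => by simp [hi])
      rw [h2, Fintype.card_subtype_eq]
  simp only [h1]
  rw [Finset.prod_ite_mem, Finset.univ_inter, Finset.prod_const]

lemma card_weight_eq :
    Nat.card {x : Fin n → F // hammingNorm x = u}
      = (Fintype.card F - 1) ^ u * n.choose u := by
  classical
  rw [Nat.card_eq_fintype_card, Fintype.card_subtype]
  rw [Finset.card_eq_sum_card_fiberwise
    (f := fun x : Fin n → F => ({i | x i ≠ 0} : Finset (Fin n)))
    (t := Finset.powersetCard u Finset.univ)
    (by intro x hx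
        simp only [Finset.mem_coe, Finset.mem_filter] at hx
        rw [Finset.mem_coe, Finset.mem_powersetCard]
        exact ⟨Finset.subset_univ _, hx.2⟩)]
  have hfib : ∀ s ∈ Finset.powersetCard u Finset.univ,
      (Finset.filter (fun x : Fin n → F => ({i | x i ≠ 0} : Finset (Fin n)) = s)
        (Finset.filter (fun x => hammingNorm x = u) Finset.univ)).card
      = (Fintype.card F - 1) ^ u := by
    intro s hs
    rw [Finset.mem_powersetCard] at hs
    have hcard : (Finset.filter (fun x : Fin n → F =>
        ({i | x i ≠ 0} : Finset (Fin n)) = s)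
        (Finset.filter (fun x => hammingNorm x = u) Finset.univ))
        = Finset.filter (fun x : Fin n → F => ∀ i, x i ≠ 0 ↔ i ∈ s) Finset.univ := by
      ext x
      simp only [Finset.mem_filter, Finset.mem_univ, true_and]
      constructor
      · rintro ⟨-, h2⟩ i
        rw [← h2]; simp
      · intro h
        have : ({i | x i ≠ 0} : Finset (Fin n)) = s := by
          ext i; simpa using h i
        refine ⟨?_, this⟩
        rw [hammingNorm, this, hs.2]
    rw [hcard, ← Fintype.card_subtype, ← Nat.card_eq_fintype_card, card_support_eq, hs.2]
  rw [Finset.sum_congr rfl hfib, Finset.sum_const, Finset.card_powersetCard,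
    Finset.card_univ, Fintype.card_fin, smul_eq_mul, mul_comm]

end Aux

/-- Lemma 6 (lem:Nperp): for a uniformly random `G ∈ F_q^{k×n}`, the number `N_u`
of weight-`u` codewords in the dual of the row space of `G` satisfies
`P(|N_u − S_u/q^k| ≥ (S_u/q^k)^{3/4}) ≤ (q−1)·√(q^k/S_u)`, with `S_u = (q−1)^u·C(n,u)`. -/
theorem dual_weight_enumerator_concentration
    (q n k u : ℕ) (hq : IsPrimePow q) (hn : 1 ≤ n) (hk : k ≤ n)
    (hu1 : 1 ≤ u) (hun : u ≤ n)
    (F : Type) [Field F] [Fintype F] [DecidableEq F]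
    (hF : Fintype.card F = q)
    (N : (Fin k → Fin n → F) → ℕ)
    (hN : ∀ G, N G = Nat.card {x : Fin n → F //
        hammingNorm x = u ∧ Matrix.mulVec (Matrix.of G) x = 0})
    (Su : ℝ) (hSu : Su = (q - 1 : ℝ) ^ u * (n.choose u : ℝ)) :
    (Nat.card {G : Fin k → Fin n → F //
        (Su / (q : ℝ) ^ k) ^ ((3 : ℝ) / 4) ≤ |(N G : ℝ) - Su / (q : ℝ) ^ k|} : ℝ) /
      (Nat.card (Fin k → Fin n → F) : ℝ)
    ≤ ((q : ℝ) - 1) * Real.sqrt ((q : ℝ) ^ k / Su) := by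
  classical
  have hq2 : 2 ≤ q := hq.two_le
  have hq1 : 1 ≤ q := le_trans one_le_two hq2
  set qr : ℝ := (q : ℝ) with hqr
  have hqr1 : (1 : ℝ) ≤ qr := by rw [hqr]; exact_mod_cast hq1
  have hqrpos : (0 : ℝ) < qr := lt_of_lt_of_le one_pos hqr1
  have hqrne : qr ≠ 0 := ne_of_gt hqrpos
  -- the weight-u sphere
  set W : Finset (Fin n → F) :=
    Finset.filter (fun x => hammingNorm x = u) Finset.univ with hWdef
  have hWcard : (W.card : ℝ) = Su := by
    have h1 : W.card = (q - 1) ^ u * n.choose u := by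
      rw [hWdef, ← Fintype.card_subtype, ← Nat.card_eq_fintype_card, card_weight_eq, hF]
    rw [h1, hSu]
    push_cast [Nat.cast_sub hq1]
    ring
  have hchoose : 0 < n.choose u := Nat.choose_pos hun
  have hSupos : (0 : ℝ) < Su := by
    rw [hSu]
    apply mul_pos
    · apply pow_pos; have h2 : (2:ℝ) ≤ qr := by rw [hqr]; exact_mod_cast hq2
      linarith
    · exact_mod_cast hchoose
  -- members of W are nonzero
  have hWne : ∀ x ∈ W, x ≠ 0 := by
    intro x hx h0
    rw [hWdef, Finset.mem_filter] at hx
    rw [h0] at hx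
    have : hammingNorm (0 : Fin n → F) = 0 := hammingNorm_zero
    omega
  -- N as a filter card
  have hN' : ∀ G : Fin k → Fin n → F,
      N G = (W.filter (fun x => Matrix.mulVec (Matrix.of G) x = 0)).card := by
    intro G
    rw [hN G, Nat.card_eq_fintype_card, Fintype.card_subtype, hWdef, Finset.filter_filter]
  -- count for a single x
  have hc1 : ∀ x ∈ W,
      ((Finset.filter (fun G : Fin k → Fin n → F => Matrix.mulVec (Matrix.of G) x = 0)
        Finset.univ).card : ℝ) = qr ^ (n * k) / qr ^ k := by
    intro x hx
    have hnat : (Finset.filter (fun G : Fin k → Fin n → F => Matrix.mulVec (Matrix.of G) x = 0)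
        Finset.univ).card * q ^ k = q ^ (n * k) := by
      have e1 : (Finset.filter (fun G : Fin k → Fin n → F =>
          Matrix.mulVec (Matrix.of G) x = 0) Finset.univ).card
          = Nat.card {g : Fin n → F // g ⬝ᵥ x = 0} ^ k := by
        rw [← Fintype.card_subtype, ← Nat.card_eq_fintype_card]
        rw [Nat.card_congr (Equiv.subtypeEquivRight
          (q := fun G : Fin k → Fin n → F => ∀ r, G r ⬝ᵥ x = 0) (fun G => by
          constructor
          · intro h r; exact congrFun h r
          · intro h; funext r; exact h r))]
        exact card_mat_rows (fun g : Fin n → F => g ⬝ᵥ x = 0)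
      rw [e1, ← mul_pow, ← hF, card_row_one (hWne x hx), ← pow_mul, mul_comm n k]
    have := congrArg (fun m : ℕ => (m : ℝ)) hnat
    push_cast at this
    field_simp
    linarith [this]
  -- count for an independent pair
  have hc2 : ∀ x ∈ W, ∀ y : Fin n → F, (∀ c : F, y ≠ c • x) →
      ((Finset.filter (fun G : Fin k → Fin n → F =>
        Matrix.mulVec (Matrix.of G) x = 0 ∧ Matrix.mulVec (Matrix.of G) y = 0)
        Finset.univ).card : ℝ) = qr ^ (n * k) / qr ^ (2 * k) := by
    intro x hx y hxy
    have hnat : (Finset.filter (fun G : Fin k → Fin n → F =>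
        Matrix.mulVec (Matrix.of G) x = 0 ∧ Matrix.mulVec (Matrix.of G) y = 0)
        Finset.univ).card * q ^ (2 * k) = q ^ (n * k) := by
      have e1 : (Finset.filter (fun G : Fin k → Fin n → F =>
          Matrix.mulVec (Matrix.of G) x = 0 ∧ Matrix.mulVec (Matrix.of G) y = 0)
          Finset.univ).card
          = Nat.card {g : Fin n → F // g ⬝ᵥ x = 0 ∧ g ⬝ᵥ y = 0} ^ k := by
        rw [← Fintype.card_subtype, ← Nat.card_eq_fintype_card]
        rw [Nat.card_congr (Equiv.subtypeEquivRight
          (q := fun G : Fin k → Fin n → F => ∀ r, G r ⬝ᵥ x = 0 ∧ G r ⬝ᵥ y = 0) (fun G => by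
          constructor
          · rintro ⟨h1, h2⟩ r; exact ⟨congrFun h1 r, congrFun h2 r⟩
          · intro h; exact ⟨funext fun r => (h r).1, funext fun r => (h r).2⟩))]
        exact card_mat_rows (fun g : Fin n → F => g ⬝ᵥ x = 0 ∧ g ⬝ᵥ y = 0)
      rw [e1, show q ^ (2 * k) = (q ^ 2) ^ k by rw [← pow_mul], ← mul_pow, ← hF,
        card_row_two (hWne x hx) hxy, ← pow_mul, mul_comm n k]
    have := congrArg (fun m : ℕ => (m : ℝ)) hnat
    push_cast at this
    field_simp
    linarith [this]
  -- dependent pairs: same count as single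
  have hdep : ∀ x ∈ W, ∀ y ∈ W, (∃ c : F, y = c • x) →
      (Finset.filter (fun G : Fin k → Fin n → F =>
        Matrix.mulVec (Matrix.of G) x = 0 ∧ Matrix.mulVec (Matrix.of G) y = 0) Finset.univ)
      = (Finset.filter (fun G : Fin k → Fin n → F =>
        Matrix.mulVec (Matrix.of G) x = 0) Finset.univ) := by
    rintro x hx y hy ⟨c, rfl⟩
    have hc : c ≠ 0 := by
      rintro rfl
      exact hWne _ hy (zero_smul F x)
    apply Finset.filter_congr
    intro G _
    have hsmul : Matrix.mulVec (Matrix.of G) (c • x)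
        = c • Matrix.mulVec (Matrix.of G) x := Matrix.mulVec_smul _ _ _
    rw [hsmul]
    constructor
    · exact fun h => h.1
    · intro h; exact ⟨h, by rw [h, smul_zero]⟩
  -- number of dependent partners
  have hDcard : ∀ x ∈ W,
      ((W.filter (fun y => ∃ c : F, y = c • x)).card : ℝ) ≤ qr - 1 := by
    intro x hx
    have hsub : W.filter (fun y => ∃ c : F, y = c • x)
        ⊆ (Finset.univ.erase (0 : F)).image (fun c => c • x) := by
      intro y hy
      rw [Finset.mem_filter] at hy
      obtain ⟨hyW, c, rfl⟩ := hy
      have hc : c ≠ 0 := by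
        rintro rfl
        exact hWne _ hyW (zero_smul F x)
      exact Finset.mem_image.mpr ⟨c, Finset.mem_erase.mpr ⟨hc, Finset.mem_univ c⟩, rfl⟩
    have h1 := (Finset.card_le_card hsub).trans (Finset.card_image_le)
    rw [Finset.card_erase_of_mem (Finset.mem_univ 0), Finset.card_univ, hF] at h1
    calc ((W.filter (fun y => ∃ c : F, y = c • x)).card : ℝ) ≤ ((q - 1 : ℕ) : ℝ) := by
          exact_mod_cast h1
      _ = qr - 1 := by rw [hqr]; push_cast [Nat.cast_sub hq1]; ring
  -- indicator notation
  have hind : ∀ G : Fin k → Fin n → F, (N G : ℝ)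
      = ∑ x ∈ W, (if Matrix.mulVec (Matrix.of G) x = 0 then (1:ℝ) else 0) := by
    intro G
    rw [hN' G, Finset.card_filter]
    push_cast
    exact Finset.sum_congr rfl fun x _ => by split_ifs <;> norm_num
  -- first moment
  have hsum1 : ∑ G : Fin k → Fin n → F, (N G : ℝ) = Su * (qr ^ (n * k) / qr ^ k) := by
    rw [Finset.sum_congr rfl fun G _ => hind G, Finset.sum_comm]
    have : ∀ x ∈ W, (∑ G : Fin k → Fin n → F,
        (if Matrix.mulVec (Matrix.of G) x = 0 then (1:ℝ) else 0)) = qr ^ (n * k) / qr ^ k := by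
      intro x hx
      rw [Finset.sum_boole, hc1 x hx]
    rw [Finset.sum_congr rfl this, Finset.sum_const, nsmul_eq_mul, hWcard]
  -- second moment bound
  have hsum2 : ∑ G : Fin k → Fin n → F, (N G : ℝ) ^ 2
      ≤ Su * ((qr - 1) * (qr ^ (n * k) / qr ^ k) + Su * (qr ^ (n * k) / qr ^ (2 * k))) := by
    have hsq : ∀ G : Fin k → Fin n → F, (N G : ℝ) ^ 2
        = ∑ x ∈ W, ∑ y ∈ W, (if Matrix.mulVec (Matrix.of G) x = 0
            ∧ Matrix.mulVec (Matrix.of G) y = 0 then (1:ℝ) else 0) := by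
      intro G
      rw [sq, hind G, Finset.sum_mul_sum]
      refine Finset.sum_congr rfl fun x _ => Finset.sum_congr rfl fun y _ => ?_
      by_cases hP : Matrix.mulVec (Matrix.of G) x = 0 <;>
        by_cases hQ : Matrix.mulVec (Matrix.of G) y = 0 <;> simp only [hP, hQ] <;> norm_num
    rw [Finset.sum_congr rfl fun G _ => hsq G, Finset.sum_comm]
    have hswap : ∀ x ∈ W, (∑ G : Fin k → Fin n → F, ∑ y ∈ W,
        (if Matrix.mulVec (Matrix.of G) x = 0 ∧ Matrix.mulVec (Matrix.of G) y = 0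
          then (1:ℝ) else 0))
        = ∑ y ∈ W, ((Finset.filter (fun G : Fin k → Fin n → F =>
            Matrix.mulVec (Matrix.of G) x = 0 ∧ Matrix.mulVec (Matrix.of G) y = 0)
            Finset.univ).card : ℝ) := by
      intro x hx
      rw [Finset.sum_comm]
      exact Finset.sum_congr rfl fun y _ => Finset.sum_boole _ _
    rw [Finset.sum_congr rfl hswap]
    have hinner : ∀ x ∈ W, (∑ y ∈ W, ((Finset.filter (fun G : Fin k → Fin n → F =>
            Matrix.mulVec (Matrix.of G) x = 0 ∧ Matrix.mulVec (Matrix.of G) y = 0)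
            Finset.univ).card : ℝ))
        ≤ (qr - 1) * (qr ^ (n * k) / qr ^ k) + Su * (qr ^ (n * k) / qr ^ (2 * k)) := by
      intro x hx
      rw [← Finset.sum_filter_add_sum_filter_not W (fun y => ∃ c : F, y = c • x)]
      have hpart1 : (∑ y ∈ W.filter (fun y => ∃ c : F, y = c • x),
          ((Finset.filter (fun G : Fin k → Fin n → F =>
            Matrix.mulVec (Matrix.of G) x = 0 ∧ Matrix.mulVec (Matrix.of G) y = 0)
            Finset.univ).card : ℝ))
          ≤ (qr - 1) * (qr ^ (n * k) / qr ^ k) := by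
        have heach : ∀ y ∈ W.filter (fun y => ∃ c : F, y = c • x),
            ((Finset.filter (fun G : Fin k → Fin n → F =>
              Matrix.mulVec (Matrix.of G) x = 0 ∧ Matrix.mulVec (Matrix.of G) y = 0)
              Finset.univ).card : ℝ) = qr ^ (n * k) / qr ^ k := by
          intro y hy
          rw [Finset.mem_filter] at hy
          rw [hdep x hx y hy.1 hy.2, hc1 x hx]
        rw [Finset.sum_congr rfl heach, Finset.sum_const, nsmul_eq_mul]
        have hA1 : (0:ℝ) ≤ qr ^ (n * k) / qr ^ k :=
          div_nonneg (pow_nonneg hqrpos.le _) (pow_nonneg hqrpos.le _)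
        exact mul_le_mul_of_nonneg_right (hDcard x hx) hA1
      have hpart2 : (∑ y ∈ W.filter (fun y => ¬ ∃ c : F, y = c • x),
          ((Finset.filter (fun G : Fin k → Fin n → F =>
            Matrix.mulVec (Matrix.of G) x = 0 ∧ Matrix.mulVec (Matrix.of G) y = 0)
            Finset.univ).card : ℝ))
          ≤ Su * (qr ^ (n * k) / qr ^ (2 * k)) := by
        have heach : ∀ y ∈ W.filter (fun y => ¬ ∃ c : F, y = c • x),
            ((Finset.filter (fun G : Fin k → Fin n → F =>
              Matrix.mulVec (Matrix.of G) x = 0 ∧ Matrix.mulVec (Matrix.of G) y = 0)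
              Finset.univ).card : ℝ) = qr ^ (n * k) / qr ^ (2 * k) := by
          intro y hy
          rw [Finset.mem_filter] at hy
          have hxy : ∀ c : F, y ≠ c • x := by
            intro c hcon
            exact hy.2 ⟨c, hcon⟩
          exact hc2 x hx y hxy
        rw [Finset.sum_congr rfl heach, Finset.sum_const, nsmul_eq_mul]
        have hA2 : (0:ℝ) ≤ qr ^ (n * k) / qr ^ (2 * k) :=
          div_nonneg (pow_nonneg hqrpos.le _) (pow_nonneg hqrpos.le _)
        refine mul_le_mul_of_nonneg_right ?_ hA2
        calc ((W.filter (fun y => ¬ ∃ c : F, y = c • x)).card : ℝ)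
            ≤ (W.card : ℝ) := by exact_mod_cast Finset.card_le_card (Finset.filter_subset _ _)
          _ = Su := hWcard
      linarith [hpart1, hpart2]
    calc ∑ x ∈ W, (∑ y ∈ W, ((Finset.filter (fun G : Fin k → Fin n → F =>
            Matrix.mulVec (Matrix.of G) x = 0 ∧ Matrix.mulVec (Matrix.of G) y = 0)
            Finset.univ).card : ℝ))
        ≤ ∑ _x ∈ W, ((qr - 1) * (qr ^ (n * k) / qr ^ k) + Su * (qr ^ (n * k) / qr ^ (2 * k))) :=
          Finset.sum_le_sum hinner
      _ = Su * ((qr - 1) * (qr ^ (n * k) / qr ^ k) + Su * (qr ^ (n * k) / qr ^ (2 * k))) := by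
          rw [Finset.sum_const, nsmul_eq_mul, hWcard]
  -- probability setup
  set μ : ℝ := Su / qr ^ k with hμ
  have hμpos : 0 < μ := div_pos hSupos (pow_pos hqrpos k)
  set t : ℝ := μ ^ ((3:ℝ)/4) with ht
  have htpos : 0 < t := Real.rpow_pos_of_pos hμpos _
  set bad : Finset (Fin k → Fin n → F) :=
    Finset.filter (fun G => t ≤ |(N G : ℝ) - μ|) Finset.univ with hbad
  have hbadcard : (Nat.card {G : Fin k → Fin n → F // t ≤ |(N G : ℝ) - μ|} : ℝ)
      = (bad.card : ℝ) := by
    rw [Nat.card_eq_fintype_card, Fintype.card_subtype]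
  have hM : (Nat.card (Fin k → Fin n → F) : ℝ) = qr ^ (n * k) := by
    rw [Nat.card_eq_fintype_card]
    have h1 : Fintype.card (Fin k → Fin n → F) = (Fintype.card F) ^ (n * k) := by
      rw [Fintype.card_fun, Fintype.card_fun, Fintype.card_fin, Fintype.card_fin, ← pow_mul]
    rw [h1, hF, hqr]
    push_cast
    rfl
  -- Chebyshev
  have hcheb : (bad.card : ℝ) * t ^ 2 ≤ ∑ G : Fin k → Fin n → F, ((N G : ℝ) - μ) ^ 2 := by
    have h1 : (bad.card : ℝ) * t ^ 2 = ∑ _G ∈ bad, t ^ 2 := by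
      rw [Finset.sum_const, nsmul_eq_mul]
    rw [h1]
    refine le_trans (Finset.sum_le_sum ?_)
      (Finset.sum_le_sum_of_subset_of_nonneg (Finset.subset_univ bad)
        (fun _ _ _ => sq_nonneg _))
    intro G hG
    rw [hbad, Finset.mem_filter] at hG
    calc t ^ 2 ≤ |(N G : ℝ) - μ| ^ 2 := pow_le_pow_left₀ htpos.le hG.2 2
      _ = ((N G : ℝ) - μ) ^ 2 := sq_abs _
  have hexp : ∑ G : Fin k → Fin n → F, ((N G : ℝ) - μ) ^ 2
      = ∑ G : Fin k → Fin n → F, (N G : ℝ) ^ 2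
        - 2 * μ * (∑ G : Fin k → Fin n → F, (N G : ℝ)) + qr ^ (n * k) * μ ^ 2 := by
    have h1 : ∀ G : Fin k → Fin n → F,
        ((N G : ℝ) - μ) ^ 2 = (N G : ℝ) ^ 2 - 2 * μ * (N G : ℝ) + μ ^ 2 := fun G => by ring
    rw [Finset.sum_congr rfl fun G _ => h1 G, Finset.sum_add_distrib, Finset.sum_sub_distrib,
      ← Finset.mul_sum, Finset.sum_const, Finset.card_univ, nsmul_eq_mul]
    have h2 : (Fintype.card (Fin k → Fin n → F) : ℝ) = qr ^ (n * k) := by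
      rw [← Nat.card_eq_fintype_card]; exact hM
    rw [h2]
  have hvar : ∑ G : Fin k → Fin n → F, ((N G : ℝ) - μ) ^ 2
      ≤ Su * (qr - 1) * (qr ^ (n * k) / qr ^ k) := by
    rw [hexp, hsum1]
    have h2k : qr ^ (2 * k) = qr ^ k * qr ^ k := by rw [two_mul, pow_add]
    have halg : Su * ((qr - 1) * (qr ^ (n * k) / qr ^ k) + Su * (qr ^ (n * k) / qr ^ (2 * k)))
        - 2 * μ * (Su * (qr ^ (n * k) / qr ^ k)) + qr ^ (n * k) * μ ^ 2
        = Su * (qr - 1) * (qr ^ (n * k) / qr ^ k) := by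
      rw [hμ, h2k]
      have hqk : qr ^ k ≠ 0 := pow_ne_zero _ hqrne
      field_simp
      ring
    linarith [hsum2]
  have hkey : (bad.card : ℝ) * t ^ 2 ≤ Su * (qr - 1) * (qr ^ (n * k) / qr ^ k) :=
    le_trans hcheb hvar
  -- rpow algebra
  have ht2 : t ^ 2 = μ ^ ((3:ℝ)/2) := by
    rw [ht, ← Real.rpow_natCast (μ ^ ((3:ℝ)/4)) 2, ← Real.rpow_mul hμpos.le]
    norm_num
  have hfrac : μ / μ ^ ((3:ℝ)/2) = μ ^ (-((1:ℝ)/2)) := by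
    rw [show μ / μ ^ ((3:ℝ)/2) = μ ^ (1:ℝ) / μ ^ ((3:ℝ)/2) by rw [Real.rpow_one],
      ← Real.rpow_sub hμpos]
    norm_num
  have hsqrt : Real.sqrt (qr ^ k / Su) = μ ^ (-((1:ℝ)/2)) := by
    have h1 : qr ^ k / Su = μ⁻¹ := by
      rw [hμ, inv_div]
    rw [h1, Real.sqrt_eq_rpow, Real.inv_rpow hμpos.le, ← Real.rpow_neg hμpos.le]
  -- conclude
  rw [hbadcard, hM, div_le_iff₀ (pow_pos hqrpos (n * k)), hsqrt]
  have htsq : (0:ℝ) < t ^ 2 := pow_pos htpos 2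
  calc (bad.card : ℝ) ≤ Su * (qr - 1) * (qr ^ (n * k) / qr ^ k) / t ^ 2 :=
        (le_div_iff₀ htsq).mpr hkey
    _ = (qr - 1) * μ ^ (-((1:ℝ)/2)) * qr ^ (n * k) := by
        rw [ht2, ← hfrac]
        rw [show Su * (qr - 1) * (qr ^ (n * k) / qr ^ k) = (qr - 1) * qr ^ (n * k) * μ by
          rw [hμ]; ring]
        ring
end

section
/- Let q ≥ 2 and n ≥ 1 be integers and let t be an integer with 1 ≤ t ≤ n/q. If x and x' are two distinct real roots of the Krawtchouk polynomial K_t(X; q, n), then |x − x'| ≥ 2. -/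
open scoped BigOperators

/-- The Krawtchouk polynomial
`K_t(X; q, n) = Σ_{j=0}^t (−1)^j (q−1)^{t−j} C(X,j) C(n−X,t−j)`, where
`C(X,j) = X(X−1)⋯(X−j+1)/j!` is the polynomial binomial coefficient. -/
noncomputable def krawtchouk (q n t : ℕ) : Polynomial ℝ :=
  ∑ j ∈ Finset.range (t + 1),
    Polynomial.C ((-1 : ℝ) ^ j * ((q : ℝ) - 1) ^ (t - j) /
        ((j.factorial : ℝ) * ((t - j).factorial : ℝ))) *
      descPochhammer ℝ j *
      ((descPochhammer ℝ (t - j)).comp (Polynomial.C (n : ℝ) - Polynomial.X))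

namespace KrawAux
open Polynomial Finset

noncomputable def F (q n : ℕ) (i : ℕ) : ℝ[X] :=
  ((1:ℝ[X]) - X)^i * ((1:ℝ[X]) + C ((q:ℝ) - 1) * X)^(n - i)

lemma coeff_one_add_CX_pow (a : ℝ) (m k : ℕ) :
    (((1:ℝ[X]) + C a * X)^m).coeff k = a^k * m.choose k := by
  rw [add_comm, add_pow]
  rw [Polynomial.finset_sum_coeff]
  have hterm : ∀ b, ((C a * X)^b * (1:ℝ[X])^(m-b) * ((m.choose b : ℕ) : ℝ[X])).coeff k
      = if k = b then a^b * m.choose b else 0 := by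
    intro b
    rw [one_pow, mul_one, mul_pow, ← C_pow, ← Polynomial.C_eq_natCast, coeff_mul_C,
      coeff_C_mul, coeff_X_pow]
    split <;> simp
  rw [Finset.sum_congr rfl fun b _ => hterm b]
  rcases le_or_gt k m with hk | hk
  · rw [Finset.sum_ite_eq (Finset.range (m+1)) k]
    simp [Nat.lt_succ_of_le hk]
  · rw [Finset.sum_ite_eq (Finset.range (m+1)) k]
    simp [Nat.choose_eq_zero_of_lt hk, Nat.lt_succ, not_le.mpr hk]

lemma coeff_one_sub_X_pow (i k : ℕ) :
    (((1:ℝ[X]) - X)^i).coeff k = (-1:ℝ)^k * i.choose k := by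
  have h : ((1:ℝ[X]) - X) = 1 + C (-1) * X := by
    rw [map_neg, C_1]; ring
  rw [h, coeff_one_add_CX_pow]

lemma coeff_F (q n t i : ℕ) :
    (F q n i).coeff t
      = ∑ j ∈ Finset.range (t+1),
          (-1:ℝ)^j * (i.choose j) * ((q:ℝ)-1)^(t-j) * ((n-i).choose (t-j)) := by
  rw [F, Polynomial.coeff_mul, Finset.Nat.sum_antidiagonal_eq_sum_range_succ_mk]
  refine Finset.sum_congr rfl fun j hj => ?_
  rw [coeff_one_sub_X_pow, coeff_one_add_CX_pow]
  ring

lemma eval_eq_coeff (q n t : ℕ) {i : ℕ} (hi : i ≤ n) :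
    (krawtchouk q n t).eval (i:ℝ) = (F q n i).coeff t := by
  rw [krawtchouk, coeff_F, Polynomial.eval_finset_sum]
  refine Finset.sum_congr rfl fun j hj => ?_
  have hcast : (n:ℝ) - (i:ℝ) = ((n - i : ℕ) : ℝ) := by
    rw [Nat.cast_sub hi]
  rw [Polynomial.eval_mul, Polynomial.eval_mul, Polynomial.eval_C, Polynomial.eval_comp]
  simp only [Polynomial.eval_sub, Polynomial.eval_C, Polynomial.eval_X]
  rw [hcast, descPochhammer_eval_eq_descFactorial, descPochhammer_eval_eq_descFactorial,
    Nat.descFactorial_eq_factorial_mul_choose, Nat.descFactorial_eq_factorial_mul_choose]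
  push_cast
  have h1 : (j.factorial : ℝ) ≠ 0 := by positivity
  have h2 : ((t-j).factorial : ℝ) ≠ 0 := by positivity
  field_simp


-- GF identity, interior case
lemma gf_identity (w : ℝ) (m s : ℕ) :
    C (w * ((s:ℝ)+1)) * (((1:ℝ[X]) - X)^(m+2) * ((1:ℝ[X]) + C w * X)^s)
      + C ((m:ℝ)+1) * (((1:ℝ[X]) - X)^m * ((1:ℝ[X]) + C w * X)^(s+2))
      + C (w+1) * (Polynomial.X *
          Polynomial.derivative (((1:ℝ[X]) - X)^(m+1) * ((1:ℝ[X]) + C w * X)^(s+1)))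
    = C (w * ((s:ℝ)+1) + ((m:ℝ)+1)) *
        (((1:ℝ[X]) - X)^(m+1) * ((1:ℝ[X]) + C w * X)^(s+1)) := by
  have hA : Polynomial.derivative ((1:ℝ[X]) - X) = -1 := by
    simp
  have hB : Polynomial.derivative ((1:ℝ[X]) + C w * X) = C w := by
    simp
  rw [Polynomial.derivative_mul, Polynomial.derivative_pow, Polynomial.derivative_pow, hA, hB]
  simp only [Nat.add_sub_cancel, Nat.cast_add, Nat.cast_one, map_add, map_mul, map_one]
  ring

-- GF identity, left endpoint
lemma gf_identity_zero (w : ℝ) (s : ℕ) :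
    C (w * ((s:ℝ)+1)) * (((1:ℝ[X]) - X) * ((1:ℝ[X]) + C w * X)^s)
      + C (w+1) * (Polynomial.X *
          Polynomial.derivative (((1:ℝ[X]) + C w * X)^(s+1)))
    = C (w * ((s:ℝ)+1)) * ((1:ℝ[X]) + C w * X)^(s+1) := by
  have hB : Polynomial.derivative ((1:ℝ[X]) + C w * X) = C w := by simp
  rw [Polynomial.derivative_pow, hB]
  simp only [Nat.add_sub_cancel, Nat.cast_add, Nat.cast_one, map_add, map_mul, map_one]
  ring


lemma natDegree_kraw_le (q n t : ℕ) : (krawtchouk q n t).natDegree ≤ t := by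
  rw [krawtchouk]
  refine Polynomial.natDegree_sum_le_of_forall_le _ _ fun j hj => ?_
  have hj' : j ≤ t := Nat.lt_succ_iff.mp (Finset.mem_range.mp hj)
  calc (Polynomial.C _ * descPochhammer ℝ j *
        ((descPochhammer ℝ (t - j)).comp (Polynomial.C (n:ℝ) - Polynomial.X))).natDegree
      ≤ (Polynomial.C _ * descPochhammer ℝ j).natDegree +
        ((descPochhammer ℝ (t - j)).comp (Polynomial.C (n:ℝ) - Polynomial.X)).natDegree :=
        Polynomial.natDegree_mul_le
    _ ≤ j + (t - j) := by
        gcongr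
        · calc _ ≤ (Polynomial.C _).natDegree + (descPochhammer ℝ j).natDegree :=
                Polynomial.natDegree_mul_le
            _ ≤ j := by
                simp [Polynomial.natDegree_C, descPochhammer_natDegree]
        · rw [Polynomial.natDegree_comp]
          have h1 : (Polynomial.C (n:ℝ) - Polynomial.X).natDegree = 1 := by
            have : Polynomial.C (n:ℝ) - Polynomial.X = -(Polynomial.X - Polynomial.C (n:ℝ)) := by
              ring
            rw [this, Polynomial.natDegree_neg, Polynomial.natDegree_X_sub_C]
          rw [h1, descPochhammer_natDegree, mul_one]
    _ ≤ t := by omega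


lemma eval_zero_pos (q n t : ℕ) (hq : 2 ≤ q) (htn : t ≤ n) :
    0 < (krawtchouk q n t).eval 0 := by
  have h0 : ((0:ℕ):ℝ) = (0:ℝ) := by norm_num
  have := eval_eq_coeff q n t (Nat.zero_le n)
  rw [h0] at this
  rw [this]
  rw [F]
  simp only [pow_zero, one_mul, Nat.sub_zero]
  rw [coeff_one_add_CX_pow]
  have hw : (0:ℝ) < (q:ℝ) - 1 := by
    have : (2:ℝ) ≤ (q:ℝ) := by exact_mod_cast hq
    linarith
  have hc : (0:ℕ) < n.choose t := Nat.choose_pos htn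
  positivity

lemma coeff_X_mul_derivative (P : Polynomial ℝ) {t : ℕ} (ht : 1 ≤ t) :
    (Polynomial.X * Polynomial.derivative P).coeff t = (t:ℝ) * P.coeff t := by
  obtain ⟨t', rfl⟩ : ∃ t', t = t' + 1 := ⟨t - 1, by omega⟩
  rw [Polynomial.coeff_X_mul, Polynomial.coeff_derivative]
  push_cast
  ring

lemma three_term_nat (q n t : ℕ) (ht : 1 ≤ t) {x : ℕ} (hx1 : 1 ≤ x) (hxn : x + 1 ≤ n) :
    ((q:ℝ)-1) * ((n:ℝ) - (x:ℝ)) * (krawtchouk q n t).eval ((x:ℝ)+1)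
      + (x:ℝ) * (krawtchouk q n t).eval ((x:ℝ)-1)
    = (((q:ℝ)-1) * ((n:ℝ)-(x:ℝ)) + (x:ℝ) - (q:ℝ)*(t:ℝ)) * (krawtchouk q n t).eval (x:ℝ) := by
  set w : ℝ := (q:ℝ) - 1 with hw
  -- express evals via coeffs
  have e1 : (krawtchouk q n t).eval ((x:ℝ)+1) = (F q n (x+1)).coeff t := by
    have := eval_eq_coeff q n t (i := x+1) hxn
    rwa [Nat.cast_add, Nat.cast_one] at this
  have e2 : (krawtchouk q n t).eval ((x:ℝ)-1) = (F q n (x-1)).coeff t := by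
    have := eval_eq_coeff q n t (i := x-1) (by omega)
    rwa [Nat.cast_sub hx1, Nat.cast_one] at this
  have e3 : (krawtchouk q n t).eval (x:ℝ) = (F q n x).coeff t :=
    eval_eq_coeff q n t (by omega)
  -- instantiate gf identity with m = x-1, s = n-x-1
  have hgf := gf_identity w (x-1) (n-x-1)
  have hm2 : x - 1 + 2 = x + 1 := by omega
  have hm1 : x - 1 + 1 = x := by omega
  have hs2 : n - x - 1 + 2 = n - (x - 1) := by omega
  have hs1 : n - x - 1 + 1 = n - x := by omega
  have hsn : n - (x+1) = n - x - 1 := by omega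
  rw [hm2, hm1, hs2, hs1] at hgf
  have hF1 : F q n (x+1) = ((1:Polynomial ℝ) - Polynomial.X)^(x+1) *
      ((1:Polynomial ℝ) + Polynomial.C w * Polynomial.X)^(n-x-1) := by
    rw [F, hsn]
  have hF2 : F q n (x-1) = ((1:Polynomial ℝ) - Polynomial.X)^(x-1) *
      ((1:Polynomial ℝ) + Polynomial.C w * Polynomial.X)^(n-(x-1)) := rfl
  have hF3 : F q n x = ((1:Polynomial ℝ) - Polynomial.X)^x *
      ((1:Polynomial ℝ) + Polynomial.C w * Polynomial.X)^(n-x) := rfl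
  -- take coeff t
  have hc := congrArg (fun P => Polynomial.coeff P t) hgf
  simp only [Polynomial.coeff_add, Polynomial.coeff_C_mul] at hc
  rw [coeff_X_mul_derivative _ ht] at hc
  rw [← hF1, ← hF2, ← hF3] at hc
  -- cast facts
  have hcx : ((x-1:ℕ):ℝ) = (x:ℝ) - 1 := by rw [Nat.cast_sub hx1, Nat.cast_one]
  have hcs : ((n-x-1:ℕ):ℝ) = (n:ℝ) - (x:ℝ) - 1 := by
    rw [Nat.cast_sub (by omega : 1 ≤ n - x), Nat.cast_sub (by omega : x ≤ n), Nat.cast_one]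
  rw [hcx, hcs] at hc
  rw [e1, e2, e3]
  have hq1 : w + 1 = (q:ℝ) := by rw [hw]; ring
  rw [hq1] at hc
  nlinarith [hc]

lemma three_term_zero (q n t : ℕ) (ht : 1 ≤ t) (hn : 1 ≤ n) :
    ((q:ℝ)-1) * (n:ℝ) * (krawtchouk q n t).eval 1
    = (((q:ℝ)-1) * (n:ℝ) - (q:ℝ)*(t:ℝ)) * (krawtchouk q n t).eval 0 := by
  set w : ℝ := (q:ℝ) - 1 with hw
  have e1 : (krawtchouk q n t).eval (1:ℝ) = (F q n 1).coeff t := by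
    have := eval_eq_coeff q n t (i := 1) hn
    rwa [Nat.cast_one] at this
  have e3 : (krawtchouk q n t).eval (0:ℝ) = (F q n 0).coeff t := by
    have := eval_eq_coeff q n t (i := 0) (Nat.zero_le n)
    rwa [Nat.cast_zero] at this
  have hgf := gf_identity_zero w (n-1)
  have hs1 : n - 1 + 1 = n := by omega
  rw [hs1] at hgf
  have hF1 : F q n 1 = ((1:Polynomial ℝ) - Polynomial.X)^1 *
      ((1:Polynomial ℝ) + Polynomial.C w * Polynomial.X)^(n-1) := rfl
  have hF3 : F q n 0 = ((1:Polynomial ℝ) + Polynomial.C w * Polynomial.X)^n := by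
    rw [F, pow_zero, one_mul, Nat.sub_zero]
  have hc := congrArg (fun P => Polynomial.coeff P t) hgf
  simp only [Polynomial.coeff_add, Polynomial.coeff_C_mul] at hc
  rw [coeff_X_mul_derivative _ ht] at hc
  rw [pow_one] at hF1
  rw [← hF1, ← hF3] at hc
  have hcs : ((n-1:ℕ):ℝ) = (n:ℝ) - 1 := by rw [Nat.cast_sub hn, Nat.cast_one]
  rw [hcs] at hc
  rw [e1, e3]
  have hq1 : w + 1 = (q:ℝ) := by rw [hw]; ring
  rw [hq1] at hc
  nlinarith [hc]

lemma three_term_poly (q n t : ℕ) (ht : 2 ≤ t) (hn : t + 2 ≤ n) (y : ℝ) :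
    ((q:ℝ)-1) * ((n:ℝ) - y) * (krawtchouk q n t).eval (y+1)
      + y * (krawtchouk q n t).eval (y-1)
    = (((q:ℝ)-1) * ((n:ℝ) - y) + y - (q:ℝ)*(t:ℝ)) * (krawtchouk q n t).eval y := by
  set p := krawtchouk q n t with hp
  set D : Polynomial ℝ :=
    Polynomial.C ((q:ℝ)-1) * (Polynomial.C (n:ℝ) - Polynomial.X) *
        (p.comp (Polynomial.X + Polynomial.C 1))
      + Polynomial.X * (p.comp (Polynomial.X - Polynomial.C 1))
      - (Polynomial.C ((q:ℝ)-1) * (Polynomial.C (n:ℝ) - Polynomial.X) + Polynomial.X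
          - Polynomial.C ((q:ℝ)*(t:ℝ))) * p with hD
  have hDeval : ∀ z : ℝ, D.eval z
      = ((q:ℝ)-1) * ((n:ℝ) - z) * p.eval (z+1) + z * p.eval (z-1)
        - (((q:ℝ)-1) * ((n:ℝ) - z) + z - (q:ℝ)*(t:ℝ)) * p.eval z := by
    intro z
    simp [hD, Polynomial.eval_comp]
  have hdp : p.natDegree ≤ t := natDegree_kraw_le q n t
  have hlin : (Polynomial.C ((q:ℝ)-1) * (Polynomial.C (n:ℝ) - Polynomial.X)).natDegree ≤ 1 := by
    refine Polynomial.natDegree_mul_le.trans ?_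
    have h2 : (Polynomial.C (n:ℝ) - Polynomial.X).natDegree ≤ 1 := by
      refine (Polynomial.natDegree_sub_le _ _).trans (max_le ?_ ?_)
      · simp
      · simp
    simp only [Polynomial.natDegree_C]
    omega
  have hdeg : D.natDegree ≤ t + 1 := by
    have hcomp1 : (p.comp (Polynomial.X + Polynomial.C 1)).natDegree ≤ t := by
      rw [Polynomial.natDegree_comp, Polynomial.natDegree_X_add_C, mul_one]; exact hdp
    have hcomp2 : (p.comp (Polynomial.X - Polynomial.C 1)).natDegree ≤ t := by
      rw [Polynomial.natDegree_comp, Polynomial.natDegree_X_sub_C, mul_one]; exact hdp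
    have hlin2 : (Polynomial.C ((q:ℝ)-1) * (Polynomial.C (n:ℝ) - Polynomial.X) + Polynomial.X
          - Polynomial.C ((q:ℝ)*(t:ℝ))).natDegree ≤ 1 := by
      refine (Polynomial.natDegree_sub_le _ _).trans (max_le ?_ ?_)
      · refine (Polynomial.natDegree_add_le _ _).trans (max_le hlin ?_)
        simp
      · rw [Polynomial.natDegree_C]
        omega
    rw [hD]
    refine (Polynomial.natDegree_sub_le _ _).trans (max_le ((Polynomial.natDegree_add_le _ _).trans
      (max_le ?_ ?_)) ?_)
    · exact Polynomial.natDegree_mul_le.trans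
        (le_trans (add_le_add hlin hcomp1) (by omega))
    · refine Polynomial.natDegree_mul_le.trans ?_
      have : (Polynomial.X : Polynomial ℝ).natDegree ≤ 1 := by simp
      exact le_trans (add_le_add this hcomp2) (by omega)
    · exact Polynomial.natDegree_mul_le.trans
        (le_trans (add_le_add hlin2 hdp) (by omega))
  have hD0 : D = 0 := by
    refine Polynomial.eq_zero_of_natDegree_lt_card_of_eval_eq_zero D
      (f := fun i : Fin n => ((i : ℕ) : ℝ)) ?_ ?_ ?_
    · intro a b hab
      have : (a : ℕ) = (b : ℕ) := Nat.cast_injective hab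
      exact Fin.val_injective this
    · intro i
      rw [hDeval]
      rcases Nat.eq_zero_or_pos (i:ℕ) with h0 | h1
      · rw [h0]
        have h := three_term_zero q n t (by omega) (by omega)
        push_cast
        norm_num
        linarith
      · have hin : (i:ℕ) + 1 ≤ n := i.isLt
        have h := three_term_nat q n t (by omega) h1 hin
        linarith
    · have : t + 1 < n := by omega
      calc D.natDegree ≤ t + 1 := hdeg
        _ < n := this
        _ = Fintype.card (Fin n) := (Fintype.card_fin n).symm
  have := hDeval y
  rw [hD0] at this
  simp at this
  linarith

lemma sum_F (q n s : ℕ) (hsn : s ≤ n) :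
    ∑ j ∈ Finset.range (n - s + 1),
        Polynomial.C (((n-s).choose j : ℝ) * ((q:ℝ)-1)^j) * F q n (s+j)
    = ((1:Polynomial ℝ) - Polynomial.X)^s * Polynomial.C (((q:ℝ)-1+1)^(n-s)) := by
  set w : ℝ := (q:ℝ) - 1 with hw
  set M := n - s with hM
  have step : ∀ j ∈ Finset.range (M+1),
      Polynomial.C (((M).choose j : ℝ) * w^j) * F q n (s+j)
      = ((1:Polynomial ℝ) - Polynomial.X)^s *
        ((Polynomial.C w * ((1:Polynomial ℝ) - Polynomial.X))^j *
          ((1:Polynomial ℝ) + Polynomial.C w * Polynomial.X)^(M-j) *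
          ((M.choose j : ℕ) : Polynomial ℝ)) := by
    intro j hj
    have hj' : j ≤ M := Nat.lt_succ_iff.mp (Finset.mem_range.mp hj)
    have hn1 : n - (s+j) = M - j := by omega
    rw [F, hn1, pow_add, map_mul, map_pow, Polynomial.C_eq_natCast, ← hw, mul_pow]
    ring
  rw [Finset.sum_congr rfl step, ← Finset.mul_sum, ← add_pow]
  have key : Polynomial.C w * ((1:Polynomial ℝ) - Polynomial.X) +
      ((1:Polynomial ℝ) + Polynomial.C w * Polynomial.X) = Polynomial.C (w+1) := by
    rw [map_add, Polynomial.C_1]; ring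
  rw [key, ← map_pow]

lemma orth_desc (q n : ℕ) {t s : ℕ} (hst : s < t) (htn : t ≤ n) :
    ∑ i ∈ Finset.range (n+1), (n.choose i : ℝ) * ((q:ℝ)-1)^i *
      (krawtchouk q n t).eval (i:ℝ) * ((descPochhammer ℝ s).eval (i:ℝ)) = 0 := by
  set w : ℝ := (q:ℝ) - 1 with hw
  have hsn : s ≤ n := by omega
  have hsplit : Finset.range (n+1) = Finset.Ico 0 (n+1) := by rw [Finset.range_eq_Ico]
  rw [hsplit, ← Finset.sum_Ico_consecutive _ (Nat.zero_le s) (by omega : s ≤ n+1)]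
  have hfirst : ∑ i ∈ Finset.Ico 0 s, (n.choose i : ℝ) * w^i *
      (krawtchouk q n t).eval (i:ℝ) * ((descPochhammer ℝ s).eval (i:ℝ)) = 0 := by
    refine Finset.sum_eq_zero fun i hi => ?_
    have hi' : i < s := (Finset.mem_Ico.mp hi).2
    rw [descPochhammer_eval_eq_descFactorial]
    rw [Nat.descFactorial_eq_zero_iff_lt.mpr hi']
    simp
  rw [hfirst, zero_add]
  rw [Finset.sum_Ico_eq_sum_range]
  have hlen : n + 1 - s = (n - s) + 1 := by omega
  rw [hlen]
  have step : ∀ j ∈ Finset.range ((n-s)+1),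
      (n.choose (s+j) : ℝ) * w^(s+j) * (krawtchouk q n t).eval ((s+j:ℕ):ℝ) *
        ((descPochhammer ℝ s).eval ((s+j:ℕ):ℝ))
      = ((s.factorial : ℝ) * (n.choose s : ℝ) * w^s) *
        ((Polynomial.C (((n-s).choose j : ℝ) * w^j) * F q n (s+j)).coeff t) := by
    intro j hj
    have hj' : j ≤ n - s := Nat.lt_succ_iff.mp (Finset.mem_range.mp hj)
    have hsjn : s + j ≤ n := by omega
    rw [eval_eq_coeff q n t hsjn, descPochhammer_eval_eq_descFactorial,
      Nat.descFactorial_eq_factorial_mul_choose]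
    have hcm : n.choose (s+j) * (s+j).choose s = n.choose s * (n-s).choose j := by
      have := Nat.choose_mul (n := n) (k := s+j) (s := s) (Nat.le_add_right s j)
      simpa [Nat.add_sub_cancel_left] using this
    rw [Polynomial.coeff_C_mul]
    have hcr : (n.choose (s+j) : ℝ) * ((s+j).choose s : ℝ)
        = (n.choose s : ℝ) * ((n-s).choose j : ℝ) := by
      exact_mod_cast hcm
    push_cast
    rw [pow_add]
    linear_combination ((s.factorial:ℝ) * w^s * w^j * (F q n (s+j)).coeff t) * hcr
  rw [Finset.sum_congr rfl step, ← Finset.mul_sum, ← Polynomial.finset_sum_coeff, sum_F q n s hsn]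
  rw [Polynomial.coeff_mul_C, coeff_one_sub_X_pow]
  rw [Nat.choose_eq_zero_of_lt hst]
  simp

lemma orth_poly (q n t : ℕ) (htn : t ≤ n) :
    ∀ s : ℕ, s + 1 ≤ t → ∀ g : Polynomial ℝ, g.natDegree ≤ s →
    ∑ i ∈ Finset.range (n+1), (n.choose i : ℝ) * ((q:ℝ)-1)^i *
      (krawtchouk q n t).eval (i:ℝ) * g.eval (i:ℝ) = 0 := by
  intro s
  induction s with
  | zero =>
    intro hst g hg
    obtain ⟨a, rfl⟩ := Polynomial.natDegree_eq_zero.mp (Nat.le_zero.mp hg)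
    have h0 := orth_desc q n (t := t) (s := 0) (by omega) htn
    simp only [descPochhammer_zero, Polynomial.eval_one, mul_one] at h0
    calc ∑ i ∈ Finset.range (n+1), (n.choose i : ℝ) * ((q:ℝ)-1)^i *
          (krawtchouk q n t).eval (i:ℝ) * (Polynomial.C a).eval (i:ℝ)
        = (∑ i ∈ Finset.range (n+1), (n.choose i : ℝ) * ((q:ℝ)-1)^i *
          (krawtchouk q n t).eval (i:ℝ)) * a := by
          rw [Finset.sum_mul]
          refine Finset.sum_congr rfl fun i _ => ?_
          rw [Polynomial.eval_C]
      _ = 0 := by rw [h0, zero_mul]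
  | succ s ih =>
    intro hst g hg
    set c := g.coeff (s+1) with hc
    set h : Polynomial ℝ := g - Polynomial.C c * descPochhammer ℝ (s+1) with hh
    have hdp_deg : (descPochhammer ℝ (s+1)).natDegree = s+1 := descPochhammer_natDegree ℝ (s+1)
    have hdp_monic : (descPochhammer ℝ (s+1)).Monic := monic_descPochhammer ℝ (s+1)
    have hhdeg : h.natDegree ≤ s := by
      rw [Polynomial.natDegree_le_iff_coeff_eq_zero]
      intro N hN
      rw [hh, Polynomial.coeff_sub, Polynomial.coeff_C_mul]
      rcases Nat.lt_or_ge (s+1) N with hN2 | hN2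
      · rw [Polynomial.coeff_eq_zero_of_natDegree_lt (lt_of_le_of_lt hg hN2),
          Polynomial.coeff_eq_zero_of_natDegree_lt (by rw [hdp_deg]; exact hN2)]
        ring
      · have hNe : N = s+1 := by omega
        subst hNe
        have : (descPochhammer ℝ (s+1)).coeff (s+1) = 1 := by
          have := hdp_monic.leadingCoeff
          rwa [Polynomial.leadingCoeff, hdp_deg] at this
        rw [this, mul_one, hc]
        ring
    have hgsplit : g = h + Polynomial.C c * descPochhammer ℝ (s+1) := by
      rw [hh]; ring
    have horth := orth_desc q n (t := t) (s := s+1) (by omega) htn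
    have hih := ih (by omega) h hhdeg
    calc ∑ i ∈ Finset.range (n+1), (n.choose i : ℝ) * ((q:ℝ)-1)^i *
          (krawtchouk q n t).eval (i:ℝ) * g.eval (i:ℝ)
        = (∑ i ∈ Finset.range (n+1), (n.choose i : ℝ) * ((q:ℝ)-1)^i *
            (krawtchouk q n t).eval (i:ℝ) * h.eval (i:ℝ))
          + c * ∑ i ∈ Finset.range (n+1), (n.choose i : ℝ) * ((q:ℝ)-1)^i *
            (krawtchouk q n t).eval (i:ℝ) * (descPochhammer ℝ (s+1)).eval (i:ℝ) := by
          rw [Finset.mul_sum, ← Finset.sum_add_distrib]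
          refine Finset.sum_congr rfl fun i _ => ?_
          rw [hgsplit]
          simp only [Polynomial.eval_add, Polynomial.eval_mul, Polynomial.eval_C]
          ring
      _ = 0 := by rw [hih, horth, mul_zero, add_zero]

lemma extension_exists (q n t : ℕ) (hq : 2 ≤ q) (ht : 1 ≤ t) (hqt : q * t ≤ n)
    (m : ℕ) (hm : m < t) (z : ℕ → ℕ) (hz0 : z 0 = 0)
    (hchain : ∀ k, k < m → z k < z (k+1) ∧ z (k+1) ≤ n ∧
      (krawtchouk q n t).eval ((z (k+1) : ℕ):ℝ) * (krawtchouk q n t).eval ((z k : ℕ):ℝ) < 0)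
    (hblk : ∀ k, k < m → ∀ j, z k < j → j < z (k+1) →
      0 ≤ (krawtchouk q n t).eval (j:ℝ) * (krawtchouk q n t).eval ((z k : ℕ):ℝ)) :
    ∃ j, z m < j ∧ j ≤ n ∧
      (krawtchouk q n t).eval (j:ℝ) * (krawtchouk q n t).eval ((z m : ℕ):ℝ) < 0 := by
  set p := krawtchouk q n t with hp
  by_contra hno
  push_neg at hno
  -- basic facts
  have htn : t ≤ n := by
    have : 2 * t ≤ q * t := Nat.mul_le_mul_right t hq
    omega
  have hw : (0:ℝ) < (q:ℝ) - 1 := by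
    have : (2:ℝ) ≤ (q:ℝ) := by exact_mod_cast hq
    linarith
  have hP0 : 0 < p.eval ((0:ℕ):ℝ) := by
    rw [Nat.cast_zero]; exact eval_zero_pos q n t hq htn
  -- monotonicity of z
  have hmono' : ∀ a b, a < b → b ≤ m → z a < z b := by
    intro a b hab hbm
    induction b with
    | zero => omega
    | succ b ih =>
      rcases Nat.lt_or_ge a b with h | h
      · exact lt_trans (ih h (by omega)) (hchain b (by omega)).1
      · have : a = b := by omega
        subst this
        exact (hchain a (by omega)).1
  have hmono : ∀ a b, a ≤ b → b ≤ m → z a ≤ z b := by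
    intro a b hab hbm
    rcases Nat.eq_or_lt_of_le hab with h | h
    · subst h; exact le_rfl
    · exact le_of_lt (hmono' a b h hbm)
  have hzn : ∀ k, k ≤ m → z k ≤ n := by
    intro k hk
    rcases Nat.eq_zero_or_pos k with h | h
    · subst h; omega
    · obtain ⟨k', rfl⟩ : ∃ k', k = k' + 1 := ⟨k - 1, by omega⟩
      exact (hchain k' (by omega)).2.1
  -- alternating signs along the chain
  have hsign : ∀ k, k ≤ m → 0 < (-1:ℝ)^k * p.eval ((z k : ℕ):ℝ) := by
    intro k hk
    induction k with
    | zero => simpa [hz0] using hP0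
    | succ k ih =>
      have h1 := ih (by omega)
      have h2 := (hchain k (by omega)).2.2
      have : (-1:ℝ)^(k+1) = -(-1:ℝ)^k := by ring
      rw [this]
      nlinarith [h1, h2, sq_nonneg (p.eval ((z k : ℕ):ℝ))]
  have hsignne : ∀ k, k ≤ m → p.eval ((z k : ℕ):ℝ) ≠ 0 := by
    intro k hk h0
    have := hsign k hk
    rw [h0, mul_zero] at this
    exact lt_irrefl 0 this
  -- the test polynomial
  set g : Polynomial ℝ := ∏ k ∈ Finset.range m,
    (Polynomial.X - Polynomial.C ((z (k+1) : ℝ) - 1/2)) with hg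
  have hgdeg : g.natDegree ≤ m := by
    rw [hg, Polynomial.natDegree_prod _ _ (fun k _ => Polynomial.X_sub_C_ne_zero _)]
    rw [Finset.sum_congr rfl fun k _ => Polynomial.natDegree_X_sub_C _]
    simp
  have hgeval : ∀ y : ℝ, g.eval y = ∏ k ∈ Finset.range m, (y - ((z (k+1) : ℝ) - 1/2)) := by
    intro y
    rw [hg, Polynomial.eval_prod]
    refine Finset.prod_congr rfl fun k _ => ?_
    simp
  -- pointwise positivity of (-1)^m * (P i * g i)
  have hpt : ∀ i : ℕ, i ≤ n → p.eval (i:ℝ) ≠ 0 →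
      0 < (-1:ℝ)^m * (p.eval (i:ℝ) * g.eval (i:ℝ)) := by
    intro i hi hPi
    obtain ⟨κ, hκ_le, hκ_spec, hκ_max⟩ :
        ∃ κ, κ ≤ m ∧ z κ ≤ i ∧ ∀ k, κ < k → k ≤ m → i < z k := by
      refine ⟨Nat.findGreatest (fun k => z k ≤ i) m, Nat.findGreatest_le m,
        Nat.findGreatest_spec (P := fun k => z k ≤ i) (Nat.zero_le m) (by show z 0 ≤ i; rw [hz0]; omega),
        fun k hk hkm => ?_⟩
      have := Nat.findGreatest_is_greatest (P := fun k => z k ≤ i) hk hkm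
      omega
    -- sign of P i
    have hPsign : 0 < (-1:ℝ)^κ * p.eval (i:ℝ) := by
      rcases Nat.eq_or_lt_of_le hκ_spec with heq | hlt
      · rw [← heq]
        exact hsign κ hκ_le
      · have hPz := hsign κ hκ_le
        have hPzne := hsignne κ hκ_le
        have hprod : 0 ≤ p.eval (i:ℝ) * p.eval ((z κ : ℕ):ℝ) := by
          rcases Nat.lt_or_ge κ m with hκm | hκm
          · exact hblk κ hκm i hlt (hκ_max (κ+1) (Nat.lt_succ_self κ) hκm)
          · have hκm' : κ = m := by omega
            subst hκm'
            exact hno i hlt hi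
        have hprodpos : 0 < p.eval (i:ℝ) * p.eval ((z κ : ℕ):ℝ) :=
          lt_of_le_of_ne hprod (Ne.symm (mul_ne_zero hPi hPzne))
        have h2 := mul_pos hPz hprodpos
        have h3 : 0 < (p.eval ((z κ : ℕ):ℝ))^2 := by positivity
        nlinarith [h2, h3]
    -- sign of g i
    have hfac_pos : ∀ k ∈ Finset.range κ, (0:ℝ) < (i:ℝ) - ((z (k+1) : ℝ) - 1/2) := by
      intro k hk
      have hk' : k < κ := Finset.mem_range.mp hk
      have : z (k+1) ≤ z κ := hmono (k+1) κ (by omega) hκ_le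
      have : z (k+1) ≤ i := le_trans this hκ_spec
      have : ((z (k+1) : ℕ):ℝ) ≤ (i:ℝ) := by exact_mod_cast this
      linarith
    have hfac_neg : ∀ k ∈ Finset.Ico κ m, (i:ℝ) - ((z (k+1) : ℝ) - 1/2) < 0 := by
      intro k hk
      obtain ⟨hk1, hk2⟩ := Finset.mem_Ico.mp hk
      have : i < z (k+1) := hκ_max (k+1) (by omega) (by omega)
      have : (i:ℝ) + 1 ≤ ((z (k+1) : ℕ):ℝ) := by exact_mod_cast this
      linarith
    have hsplitg : g.eval (i:ℝ)
        = (∏ k ∈ Finset.range κ, ((i:ℝ) - ((z (k+1) : ℝ) - 1/2)))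
          * (∏ k ∈ Finset.Ico κ m, ((i:ℝ) - ((z (k+1) : ℝ) - 1/2))) := by
      rw [hgeval, Finset.prod_range_mul_prod_Ico _ hκ_le]
    have hA : 0 < ∏ k ∈ Finset.range κ, ((i:ℝ) - ((z (k+1) : ℝ) - 1/2)) :=
      Finset.prod_pos hfac_pos
    have hBneg : ∏ k ∈ Finset.Ico κ m, ((i:ℝ) - ((z (k+1) : ℝ) - 1/2))
        = (-1:ℝ)^(m-κ) * ∏ k ∈ Finset.Ico κ m, (((z (k+1) : ℝ) - 1/2) - (i:ℝ)) := by
      have hstep : ∀ k ∈ Finset.Ico κ m, ((i:ℝ) - ((z (k+1) : ℝ) - 1/2))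
          = (-1) * (((z (k+1) : ℝ) - 1/2) - (i:ℝ)) := fun k _ => by ring
      rw [Finset.prod_congr rfl hstep, Finset.prod_mul_distrib, Finset.prod_const, Nat.card_Ico]
    have hC : 0 < ∏ k ∈ Finset.Ico κ m, (((z (k+1) : ℝ) - 1/2) - (i:ℝ)) := by
      refine Finset.prod_pos fun k hk => ?_
      have := hfac_neg k hk
      linarith
    have hpow : (-1:ℝ)^m = (-1:ℝ)^κ * (-1:ℝ)^(m-κ) := by
      rw [← pow_add]
      congr 1
      omega
    have hkey : (-1:ℝ)^m * (p.eval (i:ℝ) * g.eval (i:ℝ))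
        = ((-1:ℝ)^κ * p.eval (i:ℝ))
          * ((∏ k ∈ Finset.range κ, ((i:ℝ) - ((z (k+1) : ℝ) - 1/2)))
            * ((-1:ℝ)^(m-κ) * ∏ k ∈ Finset.Ico κ m, ((i:ℝ) - ((z (k+1) : ℝ) - 1/2)))) := by
      rw [hsplitg, hpow]; ring
    rw [hkey, hBneg]
    have : (-1:ℝ)^(m-κ) * ((-1:ℝ)^(m-κ)
        * ∏ k ∈ Finset.Ico κ m, (((z (k+1) : ℝ) - 1/2) - (i:ℝ)))
        = ∏ k ∈ Finset.Ico κ m, (((z (k+1) : ℝ) - 1/2) - (i:ℝ)) := by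
      rw [← mul_assoc, ← pow_add]
      have h2 : (-1:ℝ)^(m-κ+(m-κ)) = 1 := by
        rw [← two_mul, pow_mul]
        norm_num
      rw [h2, one_mul]
    rw [this]
    exact mul_pos hPsign (mul_pos hA hC)
  -- orthogonality
  have horth := orth_poly q n t htn m hm g hgdeg
  -- positive sum
  have hsumpos : (0:ℝ) < ∑ i ∈ Finset.range (n+1),
      (n.choose i : ℝ) * ((q:ℝ)-1)^i * ((-1:ℝ)^m * (p.eval (i:ℝ) * g.eval (i:ℝ))) := by
    refine Finset.sum_pos' (fun i hi => ?_) ⟨0, Finset.mem_range.mpr (by omega), ?_⟩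
    · have hi' : i ≤ n := Nat.lt_succ_iff.mp (Finset.mem_range.mp hi)
      rcases eq_or_ne (p.eval (i:ℝ)) 0 with h0 | h0
      · rw [h0]
        simp
      · have h1 := hpt i hi' h0
        have h2 : (0:ℝ) ≤ (n.choose i : ℝ) * ((q:ℝ)-1)^i := by positivity
        exact mul_nonneg h2 (le_of_lt h1)
    · have h1 := hpt 0 (by omega) (by
        rw [Nat.cast_zero]
        exact ne_of_gt (eval_zero_pos q n t hq htn))
      have h2 : (0:ℝ) < (n.choose 0 : ℝ) * ((q:ℝ)-1)^0 := by simp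
      exact mul_pos h2 h1
  have heq : ∑ i ∈ Finset.range (n+1),
      (n.choose i : ℝ) * ((q:ℝ)-1)^i * ((-1:ℝ)^m * (p.eval (i:ℝ) * g.eval (i:ℝ)))
      = (-1:ℝ)^m * ∑ i ∈ Finset.range (n+1),
        (n.choose i : ℝ) * ((q:ℝ)-1)^i * p.eval (i:ℝ) * g.eval (i:ℝ) := by
    rw [Finset.mul_sum]
    refine Finset.sum_congr rfl fun i _ => by ring
  rw [heq, horth, mul_zero] at hsumpos
  exact lt_irrefl 0 hsumpos

lemma alternation (q n t : ℕ) (hq : 2 ≤ q) (ht : 1 ≤ t) (hqt : q * t ≤ n) :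
    ∃ z : ℕ → ℕ, z 0 = 0 ∧ ∀ k, k < t → z k < z (k+1) ∧ z (k+1) ≤ n ∧
      (krawtchouk q n t).eval ((z (k+1) : ℕ):ℝ) * (krawtchouk q n t).eval ((z k : ℕ):ℝ) < 0 := by
  classical
  set p := krawtchouk q n t with hp
  set Ext : ℕ → Prop := fun a => ∃ j, a < j ∧ j ≤ n ∧ p.eval (j:ℝ) * p.eval (a:ℝ) < 0
    with hExt
  set znext : ℕ → ℕ := fun a => if h : Ext a then Nat.find h else n+1 with hznext
  set z : ℕ → ℕ := fun k => znext^[k] 0 with hz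
  have hz0 : z 0 = 0 := rfl
  have hzsucc : ∀ k, z (k+1) = znext (z k) := fun k => Function.iterate_succ_apply' znext k 0
  have hchainprop : ∀ k, Ext (z k) → z k < z (k+1) ∧ z (k+1) ≤ n ∧
      p.eval ((z (k+1) : ℕ):ℝ) * p.eval ((z k : ℕ):ℝ) < 0 := by
    intro k h
    have hfind : z (k+1) = Nat.find h := by
      rw [hzsucc k, hznext]
      exact dif_pos h
    rw [hfind]
    exact Nat.find_spec h
  have hblkprop : ∀ k, Ext (z k) → ∀ j, z k < j → j < z (k+1) →
      0 ≤ p.eval (j:ℝ) * p.eval ((z k : ℕ):ℝ) := by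
    intro k h j hj1 hj2
    have hfind : z (k+1) = Nat.find h := by
      rw [hzsucc k, hznext]
      exact dif_pos h
    rw [hfind] at hj2
    have hmin := Nat.find_min h hj2
    by_contra hneg
    push_neg at hneg
    have hjn : j ≤ n := by
      have := (hchainprop k h).2.1
      omega
    exact hmin ⟨hj1, hjn, hneg⟩
  have hext : ∀ k, k < t → Ext (z k) := by
    intro k
    induction k using Nat.strong_induction_on with
    | _ k ih =>
      intro hk
      exact extension_exists q n t hq ht hqt k hk z hz0
        (fun j hj => hchainprop j (ih j hj (by omega)))
        (fun j hj => hblkprop j (ih j hj (by omega)))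
  exact ⟨z, hz0, fun k hk => hchainprop k (hext k hk)⟩

lemma roots_structure (q n t : ℕ) (hq : 2 ≤ q) (ht : 1 ≤ t) (hqt : q * t ≤ n) :
    ∃ (r : ℕ → ℝ) (z : ℕ → ℕ),
      (∀ k, k < t → ((z k : ℕ):ℝ) < r k ∧ r k < ((z (k+1) : ℕ):ℝ)) ∧
      (∀ k, k < t → z k < z (k+1) ∧ z (k+1) ≤ n) ∧
      (∀ a b, a < b → b < t → r a < r b) ∧
      (krawtchouk q n t) = Polynomial.C ((krawtchouk q n t).leadingCoeff) *
        ∏ k ∈ Finset.range t, (Polynomial.X - Polynomial.C (r k)) := by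
  classical
  set p := krawtchouk q n t with hp
  have htn : t ≤ n := by
    have : 2 * t ≤ q * t := Nat.mul_le_mul_right t hq
    omega
  have hp0 : p ≠ 0 := by
    intro h
    have := eval_zero_pos q n t hq htn
    rw [hp] at h
    rw [h] at this
    simp at this
  obtain ⟨z, hz0, hchain⟩ := alternation q n t hq ht hqt
  -- find roots by IVT
  have hroot : ∀ k : ℕ, ∃ x : ℝ, k < t →
      x ∈ Set.Ioo ((z k : ℕ):ℝ) ((z (k+1) : ℕ):ℝ) ∧ p.eval x = 0 := by
    intro k
    rcases Nat.lt_or_ge k t with hk | hk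
    · obtain ⟨h1, h2, h3⟩ := hchain k hk
      have hle : ((z k : ℕ):ℝ) ≤ ((z (k+1) : ℕ):ℝ) := by
        exact_mod_cast le_of_lt h1
      have hcont : ContinuousOn (fun x => p.eval x)
          (Set.Icc ((z k : ℕ):ℝ) ((z (k+1) : ℕ):ℝ)) :=
        (Polynomial.continuous p).continuousOn
      rcases mul_neg_iff.mp h3 with ⟨ha, hb⟩ | ⟨ha, hb⟩
      · -- eval (z (k+1)) > 0, eval (z k) < 0 : increasing
        have h0mem : (0:ℝ) ∈ Set.Ioo (p.eval ((z k : ℕ):ℝ)) (p.eval ((z (k+1) : ℕ):ℝ)) :=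
          ⟨hb, ha⟩
        obtain ⟨x, hx, hfx⟩ := intermediate_value_Ioo hle hcont h0mem
        exact ⟨x, fun _ => ⟨hx, hfx⟩⟩
      · have h0mem : (0:ℝ) ∈ Set.Ioo (p.eval ((z (k+1) : ℕ):ℝ)) (p.eval ((z k : ℕ):ℝ)) :=
          ⟨ha, hb⟩
        obtain ⟨x, hx, hfx⟩ := intermediate_value_Ioo' hle hcont h0mem
        exact ⟨x, fun _ => ⟨hx, hfx⟩⟩
    · exact ⟨0, fun h => absurd h (by omega)⟩
  choose r hr using hroot
  -- monotonicity
  have hzmono : ∀ a b, a ≤ b → b ≤ t → z a ≤ z b := by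
    intro a b hab hbt
    induction b with
    | zero =>
      have : a = 0 := Nat.le_zero.mp hab
      subst this
      exact le_rfl
    | succ b ih =>
      rcases Nat.lt_or_ge a (b+1) with h | h
      · have : z b ≤ z (b+1) := le_of_lt (hchain b (by omega)).1
        rcases Nat.lt_or_ge a b with h2 | h2
        · exact le_trans (ih (by omega) (by omega)) this
        · have : a = b := by omega
          subst this
          exact le_of_lt (hchain a (by omega)).1
      · have : a = b + 1 := by omega
        subst this
        exact le_rfl
  have hrmono : ∀ a b, a < b → b < t → r a < r b := by
    intro a b hab hbt
    have h1 : r a < ((z (a+1) : ℕ):ℝ) := (hr a (by omega)).1.2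
    have h2 : ((z b : ℕ):ℝ) < r b := (hr b hbt).1.1
    have h3 : z (a+1) ≤ z b := hzmono (a+1) b (by omega) (by omega)
    have h4 : ((z (a+1) : ℕ):ℝ) ≤ ((z b : ℕ):ℝ) := by exact_mod_cast h3
    linarith
  -- the multiset of roots
  set M : Multiset ℝ := (Multiset.range t).map r with hM
  have hMnodup : M.Nodup := by
    refine Multiset.Nodup.map_on ?_ (Multiset.nodup_range t)
    intro a ha b hb hab
    rw [Multiset.mem_range] at ha hb
    by_contra hne
    rcases Nat.lt_or_ge a b with h | h
    · exact absurd hab (ne_of_lt (hrmono a b h hb))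
    · have : b < a := by omega
      exact absurd hab.symm (ne_of_lt (hrmono b a this ha))
  have hMle : M ≤ p.roots := by
    rw [Multiset.le_iff_count]
    intro a
    by_cases hmem : a ∈ M
    swap
    · rw [Multiset.count_eq_zero.mpr hmem]
      omega
    · have h1 : M.count a = 1 := Multiset.count_eq_one_of_mem hMnodup hmem
      rw [h1]
      rw [Multiset.one_le_count_iff_mem]
      obtain ⟨k, hk, rfl⟩ := Multiset.mem_map.mp hmem
      rw [Multiset.mem_range] at hk
      rw [Polynomial.mem_roots hp0]
      exact (hr k hk).2
  have hMcard : Multiset.card M = t := by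
    rw [hM, Multiset.card_map, Multiset.card_range]
  have hcard : Multiset.card p.roots = p.natDegree := by
    have h1 : Multiset.card p.roots ≤ p.natDegree := Polynomial.card_roots' p
    have h2 : t ≤ Multiset.card p.roots := by
      rw [← hMcard]
      exact Multiset.card_le_card hMle
    have h3 : p.natDegree ≤ t := natDegree_kraw_le q n t
    omega
  have hMeq : M = p.roots := by
    refine Multiset.eq_of_le_of_card_le hMle ?_
    rw [hMcard, hcard]
    exact natDegree_kraw_le q n t
  have hfact := Polynomial.C_leadingCoeff_mul_prod_multiset_X_sub_C (p := p) hcard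
  refine ⟨r, z, fun k hk => ⟨(hr k hk).1.1, (hr k hk).1.2⟩,
    fun k hk => ⟨(hchain k hk).1, (hchain k hk).2.1⟩, hrmono, ?_⟩
  conv_lhs => rw [← hfact]
  congr 1
  rw [← hMeq, hM, Multiset.map_map, Finset.prod_eq_multiset_prod, Finset.range_val]
  rfl

lemma gap_find (t : ℕ) (r : ℕ → ℝ) (hmono : ∀ a b, a < b → b < t → r a < r b) :
    ∀ d u v : ℕ, v = u + d → u < v → v < t → r v - r u < 2 →
    ∃ k, u ≤ k ∧ k + 1 ≤ v ∧ k + 1 < t ∧ r (k+1) - r k < 2 := by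
  intro d
  induction d with
  | zero => intro u v h1 h2 _ _; omega
  | succ d ih =>
    intro u v h1 h2 h3 h4
    rcases Nat.eq_or_lt_of_le (show u + 1 ≤ v by omega) with he | hl
    · exact ⟨u, le_rfl, by omega, by omega, by rw [he]; exact h4⟩
    · by_cases hlast : r v - r (v-1) < 2
      · refine ⟨v-1, by omega, by omega, by omega, ?_⟩
        have hv : v - 1 + 1 = v := by omega
        rw [hv]
        exact hlast
      · push_neg at hlast
        have h4' : r (v-1) - r u < 2 := by
          have hv1 : r (v-1) < r v := hmono (v-1) v (by omega) h3
          linarith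
        obtain ⟨k, hk1, hk2, hk3, hk4⟩ := ih u (v-1) (by omega) (by omega) (by omega) h4'
        exact ⟨k, hk1, by omega, hk3, hk4⟩

end KrawAux

set_option maxHeartbeats 2000000 in
open KrawAux in
/-- Lemma 14 (lemma:distRoot): for `1 ≤ t ≤ n/q`, distinct real roots of the
Krawtchouk polynomial `K_t(X; q, n)` are at distance at least `2`. -/
theorem krawtchouk_roots_spacing
    (q n t : ℕ) (hq : 2 ≤ q) (hn : 1 ≤ n)
    (ht1 : 1 ≤ t) (htn : (t : ℝ) ≤ (n : ℝ) / (q : ℝ))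
    (x x' : ℝ)
    (hx : (krawtchouk q n t).eval x = 0)
    (hx' : (krawtchouk q n t).eval x' = 0)
    (hne : x ≠ x') :
    2 ≤ |x - x'| := by
  classical
  by_contra habs
  push_neg at habs
  have hq0 : (0:ℝ) < (q:ℝ) := by exact_mod_cast (by omega : 0 < q)
  have hqt : q * t ≤ n := by
    have h1 : (t:ℝ) * (q:ℝ) ≤ (n:ℝ) := (le_div_iff₀ hq0).mp htn
    have h2 : ((q * t : ℕ) : ℝ) ≤ ((n : ℕ) : ℝ) := by push_cast; linarith
    exact_mod_cast h2
  obtain ⟨r, z, hroots_loc, hchain, hrmono, hfact⟩ := roots_structure q n t hq ht1 hqt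
  set p := krawtchouk q n t with hp
  have htnn : t ≤ n := by
    have : 2 * t ≤ q * t := Nat.mul_le_mul_right t hq
    omega
  have hpne : p ≠ 0 := by
    intro h
    have := eval_zero_pos q n t hq htnn
    rw [hp] at h
    rw [h] at this
    simp at this
  have hlead : p.leadingCoeff ≠ 0 := Polynomial.leadingCoeff_ne_zero.mpr hpne
  have hevalP : ∀ y : ℝ, p.eval y = p.leadingCoeff * ∏ k ∈ Finset.range t, (y - r k) := by
    intro y
    conv_lhs => rw [hfact]
    rw [Polynomial.eval_mul, Polynomial.eval_C, Polynomial.eval_prod]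
    congr 1
    refine Finset.prod_congr rfl fun k _ => by simp
  -- identify x and x' as roots r a, r b
  have hid : ∀ w : ℝ, p.eval w = 0 → ∃ a, a < t ∧ w = r a := by
    intro w hw
    rw [hevalP] at hw
    rcases mul_eq_zero.mp hw with h' | h'
    · exact absurd h' hlead
    · obtain ⟨a, ha, ha0⟩ := Finset.prod_eq_zero_iff.mp h'
      exact ⟨a, Finset.mem_range.mp ha, by linarith⟩
  obtain ⟨a, hat, hxa⟩ := hid x hx
  obtain ⟨b, hbt, hxb⟩ := hid x' hx'
  have hab : a ≠ b := fun h => hne (by rw [hxa, hxb, h])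
  have habs2 : |r a - r b| < 2 := by rw [← hxa, ← hxb]; exact habs
  have habs3 := abs_lt.mp habs2
  have hexuv : ∃ u v, u < v ∧ v < t ∧ r v - r u < 2 := by
    rcases Nat.lt_or_ge a b with hcase | hcase
    · exact ⟨a, b, hcase, hbt, by linarith [habs3.1]⟩
    · have : b < a := by omega
      exact ⟨b, a, this, hat, by linarith [habs3.2]⟩
  obtain ⟨u, v, huv, hvt, hgapuv⟩ := hexuv
  have hSex : ∃ k, k + 1 < t ∧ r (k+1) - r k < 2 := by
    obtain ⟨k, _, _, h3, h4⟩ := gap_find t r hrmono (v - u) u v (by omega) huv hvt hgapuv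
    exact ⟨k, h3, h4⟩
  set k0 := Nat.find hSex with hk0def
  have hk0spec := Nat.find_spec hSex
  have hk0t : k0 + 1 < t := hk0spec.1
  have hk0gap : r (k0+1) - r k0 < 2 := hk0spec.2
  have hgapsL : ∀ j, j < k0 → 2 ≤ r (j+1) - r j := by
    intro j hj
    by_contra hcon
    push_neg at hcon
    exact absurd (⟨by omega, hcon⟩ : j + 1 < t ∧ r (j+1) - r j < 2) (Nat.find_min hSex hj)
  have hri_lt : r k0 < r (k0+1) := hrmono k0 (k0+1) (by omega) hk0t
  -- two-apart separation
  have htwo : k0 + 2 < t → r k0 + 1 < r (k0+2) := by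
    intro h
    have h1 : ((z (k0+2) : ℕ):ℝ) < r (k0+2) := (hroots_loc (k0+2) h).1
    have h2 : r k0 < ((z (k0+1) : ℕ):ℝ) := (hroots_loc k0 (by omega)).2
    have h3 : z (k0+1) < z (k0+2) := (hchain (k0+1) (by omega)).1
    have h4 : ((z (k0+1) : ℕ):ℝ) + 1 ≤ ((z (k0+2) : ℕ):ℝ) := by exact_mod_cast h3
    linarith
  set V : ℝ := if h : k0 + 2 < t then r (k0+2) - 1 else r k0 + 1 with hV
  have hViri : r k0 < V := by
    rw [hV]
    by_cases h : k0 + 2 < t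
    · rw [dif_pos h]; linarith [htwo h]
    · rw [dif_neg h]; linarith
  have hVri1 : r (k0+1) - 1 < V := by
    rw [hV]
    by_cases h : k0 + 2 < t
    · rw [dif_pos h]
      have := hrmono (k0+1) (k0+2) (by omega) h
      linarith
    · rw [dif_neg h]; linarith
  set L : ℝ := max (r k0) (r (k0+1) - 1) with hL
  set U : ℝ := min (r (k0+1)) (min (r k0 + 1) V) with hU
  have hLU : L < U := by
    rw [hL, hU]
    refine max_lt_iff.mpr ⟨lt_min_iff.mpr ⟨?_, lt_min_iff.mpr ⟨?_, ?_⟩⟩,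
      lt_min_iff.mpr ⟨?_, lt_min_iff.mpr ⟨?_, ?_⟩⟩⟩
    · exact hri_lt
    · linarith
    · exact hViri
    · linarith
    · linarith
    · exact hVri1
  set y : ℝ := (L + U)/2 with hy
  have hLy : L < y := by rw [hy]; linarith
  have hyU : y < U := by rw [hy]; linarith
  have hyri : r k0 < y := lt_of_le_of_lt (le_max_left _ _) hLy
  have hyri1 : y < r (k0+1) := lt_of_lt_of_le hyU (min_le_left _ _)
  have hy_lt_ri_add : y < r k0 + 1 :=
    lt_of_lt_of_le hyU (le_trans (min_le_right _ _) (min_le_left _ _))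
  have hyV : y < V := lt_of_lt_of_le hyU (le_trans (min_le_right _ _) (min_le_right _ _))
  have hri1y : r (k0+1) - 1 < y := lt_of_le_of_lt (le_max_right _ _) hLy
  -- far roots
  have hsmall : ∀ k, k < k0 → r k < y - 1 := by
    intro k hk
    have hg := hgapsL k hk
    have h1 : r (k+1) ≤ r k0 := by
      rcases Nat.eq_or_lt_of_le (show k + 1 ≤ k0 by omega) with he | hlt
      · rw [he]
      · exact le_of_lt (hrmono (k+1) k0 hlt (by omega))
    linarith
  have hbig : ∀ k, k0 + 1 < k → k < t → y + 1 < r k := by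
    intro k h1 h2
    have hVeq : V = r (k0+2) - 1 := by rw [hV]; exact dif_pos (by omega)
    have h3 : r (k0+2) ≤ r k := by
      rcases Nat.eq_or_lt_of_le (show k0 + 2 ≤ k by omega) with he | hlt
      · rw [he]
      · exact le_of_lt (hrmono (k0+2) k hlt h2)
    rw [hVeq] at hyV
    linarith
  -- y in (0, n)
  have hy_pos : 0 < y := by
    have h1 : (0:ℝ) ≤ ((z k0 : ℕ):ℝ) := Nat.cast_nonneg _
    have h2 : ((z k0 : ℕ):ℝ) < r k0 := (hroots_loc k0 (by omega)).1
    linarith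
  have hy_lt_n : y < (n:ℝ) := by
    have h1 : r (k0+1) < ((z (k0+2) : ℕ):ℝ) := (hroots_loc (k0+1) hk0t).2
    have h2 : z (k0+2) ≤ n := (hchain (k0+1) hk0t).2
    have h3 : ((z (k0+2) : ℕ):ℝ) ≤ (n:ℝ) := by exact_mod_cast h2
    linarith
  -- sign changes
  have hll : 0 < p.leadingCoeff * p.leadingCoeff := mul_self_pos.mpr hlead
  have hsign1 : p.eval (y-1) * p.eval y < 0 := by
    rw [hevalP, hevalP]
    have hre : (p.leadingCoeff * ∏ k ∈ Finset.range t, (y - 1 - r k))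
        * (p.leadingCoeff * ∏ k ∈ Finset.range t, (y - r k))
        = (p.leadingCoeff * p.leadingCoeff)
          * ∏ k ∈ Finset.range t, ((y - 1 - r k) * (y - r k)) := by
      rw [Finset.prod_mul_distrib]
      ring
    rw [hre]
    have hk0mem : k0 ∈ Finset.range t := Finset.mem_range.mpr (by omega)
    rw [← Finset.mul_prod_erase _ _ hk0mem]
    have hneg : (y - 1 - r k0) * (y - r k0) < 0 :=
      mul_neg_of_neg_of_pos (by linarith) (by linarith)
    have hpos : 0 < ∏ k ∈ (Finset.range t).erase k0, ((y - 1 - r k) * (y - r k)) := by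
      refine Finset.prod_pos fun k hk => ?_
      obtain ⟨hkne, hkmem⟩ := Finset.mem_erase.mp hk
      have hkt : k < t := Finset.mem_range.mp hkmem
      rcases Nat.lt_or_ge k k0 with h | h
      · have := hsmall k h
        exact mul_pos (by linarith) (by linarith)
      · have hk1 : k0 + 1 ≤ k := by omega
        rcases Nat.eq_or_lt_of_le hk1 with he | hlt2
        · rw [← he]
          exact mul_pos_of_neg_of_neg (by linarith) (by linarith)
        · have := hbig k hlt2 hkt
          exact mul_pos_of_neg_of_neg (by linarith) (by linarith)
    exact mul_neg_of_pos_of_neg hll (mul_neg_of_neg_of_pos hneg hpos)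
  have hsign2 : p.eval y * p.eval (y+1) < 0 := by
    rw [hevalP, hevalP]
    have hre : (p.leadingCoeff * ∏ k ∈ Finset.range t, (y - r k))
        * (p.leadingCoeff * ∏ k ∈ Finset.range t, (y + 1 - r k))
        = (p.leadingCoeff * p.leadingCoeff)
          * ∏ k ∈ Finset.range t, ((y - r k) * (y + 1 - r k)) := by
      rw [Finset.prod_mul_distrib]
      ring
    rw [hre]
    have hk1mem : k0 + 1 ∈ Finset.range t := Finset.mem_range.mpr hk0t
    rw [← Finset.mul_prod_erase _ _ hk1mem]
    have hneg : (y - r (k0+1)) * (y + 1 - r (k0+1)) < 0 :=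
      mul_neg_of_neg_of_pos (by linarith) (by linarith)
    have hpos : 0 < ∏ k ∈ (Finset.range t).erase (k0+1), ((y - r k) * (y + 1 - r k)) := by
      refine Finset.prod_pos fun k hk => ?_
      obtain ⟨hkne, hkmem⟩ := Finset.mem_erase.mp hk
      have hkt : k < t := Finset.mem_range.mp hkmem
      rcases Nat.lt_or_ge k k0 with h | h
      · have := hsmall k h
        exact mul_pos (by linarith) (by linarith)
      · rcases Nat.eq_or_lt_of_le h with he | hlt2
        · rw [← he]
          exact mul_pos (by linarith) (by linarith)
        · have hk2 : k0 + 1 < k := by omega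
          have := hbig k hk2 hkt
          exact mul_pos_of_neg_of_neg (by linarith) (by linarith)
    exact mul_neg_of_pos_of_neg hll (mul_neg_of_neg_of_pos hneg hpos)
  -- three-term identity and contradiction
  have ht2 : 2 ≤ t := by omega
  have hn2 : t + 2 ≤ n := by
    have : 2 * t ≤ q * t := Nat.mul_le_mul_right t hq
    omega
  have hidy := three_term_poly q n t ht2 hn2 y
  have hqr : (2:ℝ) ≤ (q:ℝ) := by exact_mod_cast hq
  have hqtr : (q:ℝ) * (t:ℝ) ≤ (n:ℝ) := by exact_mod_cast hqt
  have hB : 0 ≤ ((q:ℝ)-1) * ((n:ℝ) - y) + y - (q:ℝ)*(t:ℝ) := by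
    nlinarith [mul_nonneg (by linarith : (0:ℝ) ≤ (q:ℝ)-2) (by linarith : (0:ℝ) ≤ (n:ℝ) - y)]
  have hA1 : 0 < ((q:ℝ)-1) * ((n:ℝ) - y) := mul_pos (by linarith) (by linarith)
  have hmul := congrArg (fun u : ℝ => u * p.eval y) hidy
  have hsign2' : p.eval (y+1) * p.eval y < 0 := by
    rw [mul_comm] at hsign2
    exact hsign2
  have e1 : ((q:ℝ)-1) * ((n:ℝ) - y) * (p.eval (y+1) * p.eval y) < 0 :=
    mul_neg_of_pos_of_neg hA1 hsign2'
  have e2 : y * (p.eval (y-1) * p.eval y) < 0 := mul_neg_of_pos_of_neg hy_pos hsign1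
  have e3 : 0 ≤ (((q:ℝ)-1) * ((n:ℝ) - y) + y - (q:ℝ)*(t:ℝ)) * (p.eval y * p.eval y) :=
    mul_nonneg hB (mul_self_nonneg _)
  nlinarith [hmul, e1, e2, e3]
end

section
/- Let q = p^s be a prime power, n ≥ 1, and let τ ∈ [0, (q−1)/q]. Set τ^⊥ := (√((q−1)(1−τ)) − √τ)²/q. Then for every y ∈ F_q^n with wt(y) = w: q^{−n/2}·Σ_{e ∈ F_q^n} (1−τ)^{(n−wt(e))/2}·(τ/(q−1))^{wt(e)/2}·χ_y(e) = (1−τ^⊥)^{(n−w)/2}·(τ^⊥/(q−1))^{w/2}. -/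
open scoped BigOperators

/-- The additive character `χ_y(x) = exp(2πi·Tr(x·y)/p)` on `F_q^n`, where
`Tr : F_q → F_p` is the absolute trace. -/
noncomputable def chiChar (p : ℕ) {n : ℕ} (F : Type*) [Field F] [Algebra (ZMod p) F]
    (y x : Fin n → F) : ℂ :=
  Complex.exp (2 * Real.pi * Complex.I *
    ((Algebra.trace (ZMod p) F (∑ i, x i * y i)).val : ℂ) / (p : ℂ))


private lemma exp_mod (p : ℕ) (hp : (p:ℂ) ≠ 0) (m : ℕ) :
    Complex.exp (2 * Real.pi * Complex.I * ((m % p : ℕ) : ℂ) / p)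
      = Complex.exp (2 * Real.pi * Complex.I * (m : ℂ) / p) := by
  rw [Complex.exp_eq_exp_iff_exists_int]
  refine ⟨-((m / p : ℕ) : ℤ), ?_⟩
  have hdmC : (p : ℂ) * ((m / p : ℕ) : ℂ) + ((m % p : ℕ) : ℂ) = (m : ℂ) := by
    exact_mod_cast congrArg (fun k : ℕ => (k : ℂ)) (Nat.div_add_mod m p)
  generalize hX : ((m % p : ℕ) : ℂ) = X at *
  generalize hY : ((m / p : ℕ) : ℂ) = Y at *
  have hY' : (((-((m / p : ℕ) : ℤ)) : ℤ) : ℂ) = -Y := by exact_mod_cast congrArg Neg.neg hY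
  rw [hY']
  field_simp
  linear_combination hdmC

private lemma exp_val_add (p : ℕ) [NeZero p] (u v : ZMod p) :
    Complex.exp (2 * Real.pi * Complex.I * (((u + v).val : ℕ) : ℂ) / p)
      = Complex.exp (2 * Real.pi * Complex.I * ((u.val : ℕ) : ℂ) / p) *
        Complex.exp (2 * Real.pi * Complex.I * ((v.val : ℕ) : ℂ) / p) := by
  have hp : (p : ℂ) ≠ 0 := Nat.cast_ne_zero.mpr (NeZero.ne p)
  rw [ZMod.val_add, exp_mod p hp, ← Complex.exp_add]
  congr 1
  push_cast
  ring

noncomputable def psiChar (p : ℕ) [NeZero p] (F : Type*) [Field F] [Algebra (ZMod p) F] :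
    AddChar F ℂ where
  toFun t := Complex.exp (2 * Real.pi * Complex.I *
    ((Algebra.trace (ZMod p) F t).val : ℂ) / p)
  map_zero_eq_one' := by simp
  map_add_eq_mul' := by
    intro a b
    simp only [map_add]
    exact exp_val_add p _ _

lemma psiChar_apply (p : ℕ) [NeZero p] (F : Type*) [Field F] [Algebra (ZMod p) F] (t : F) :
    psiChar p F t = Complex.exp (2 * Real.pi * Complex.I *
      ((Algebra.trace (ZMod p) F t).val : ℂ) / p) := rfl

lemma psiChar_ne_one (p : ℕ) [NeZero p] (F : Type*) [Field F] [Algebra (ZMod p) F]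
    {t : F} (ht : Algebra.trace (ZMod p) F t ≠ 0) : psiChar p F t ≠ 1 := by
  rw [psiChar_apply]
  intro h
  rw [Complex.exp_eq_one_iff] at h
  obtain ⟨m, hm⟩ := h
  have hπ : (2 * (Real.pi : ℂ) * Complex.I) ≠ 0 := by
    simp [Real.pi_ne_zero, Complex.I_ne_zero]
  have hp : (p : ℂ) ≠ 0 := Nat.cast_ne_zero.mpr (NeZero.ne p)
  set v : ℕ := (Algebra.trace (ZMod p) F t).val with hv
  rw [div_eq_iff hp] at hm
  have h2 : (2 * (Real.pi : ℂ) * Complex.I) * (v : ℂ)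
      = (2 * (Real.pi : ℂ) * Complex.I) * ((m : ℂ) * p) := by linear_combination hm
  have h3 : (v : ℂ) = (m : ℂ) * p := mul_left_cancel₀ hπ h2
  have h4 : (v : ℤ) = m * p := by exact_mod_cast h3
  have hvpos : 0 < v := by
    rcases Nat.eq_zero_or_pos v with h | h
    · exact absurd ((ZMod.val_eq_zero _).mp h) ht
    · exact h
  have hvlt : v < p := ZMod.val_lt _
  have hdvd : (p : ℤ) ∣ (v : ℤ) := ⟨m, by linarith [h4]⟩
  have : p ∣ v := Int.ofNat_dvd.mp hdvd
  exact absurd (Nat.le_of_dvd hvpos this) (not_le.mpr hvlt)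

lemma trace_nondeg (p : ℕ) (hp : p.Prime) (F : Type*) [Field F] [Fintype F]
    [Algebra (ZMod p) F] {a : F} (ha : a ≠ 0) :
    ∃ b : F, Algebra.trace (ZMod p) F (a * b) ≠ 0 := by
  haveI : Fact p.Prime := ⟨hp⟩
  haveI : CharP F p := charP_of_injective_algebraMap (algebraMap (ZMod p) F).injective p
  have hchar : ringChar F = p := ringChar.eq F p
  subst hchar
  exact FiniteField.trace_to_zmod_nondegenerate F ha

lemma sum_prod_univ {ι κ M : Type*} [Fintype ι] [DecidableEq ι] [Fintype κ]
    [CommSemiring M] (g : ι → κ → M) :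
    ∑ e : ι → κ, ∏ i, g i (e i) = ∏ i, ∑ x, g i x := by
  rw [← Fintype.piFinset_univ]
  exact Finset.sum_prod_piFinset Finset.univ g

lemma addChar_map_sum {A M : Type*} [AddCommMonoid A] [CommMonoid M] (ψ : AddChar A M)
    {ι : Type*} (s : Finset ι) (f : ι → A) :
    ψ (∑ i ∈ s, f i) = ∏ i ∈ s, ψ (f i) := by
  classical
  induction s using Finset.induction with
  | empty => simp
  | insert a s h ih => rw [Finset.sum_insert h, Finset.prod_insert h,
      AddChar.map_add_eq_mul, ih]

/-- Fourier transform of the Bernoulli product state (Section C of the paper):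
for `y` of Hamming weight `w`,
`q^{−n/2}·Σ_e (1−τ)^{(n−wt(e))/2}(τ/(q−1))^{wt(e)/2}·χ_y(e)
  = (1−τ^⊥)^{(n−w)/2}(τ^⊥/(q−1))^{w/2}`
where `τ^⊥ = (√((q−1)(1−τ)) − √τ)²/q`. -/
theorem fourier_of_bernoulli_state
    (p s n : ℕ) (hp : p.Prime) (hs : 1 ≤ s) (hn : 1 ≤ n)
    (F : Type) [Field F] [Fintype F] [DecidableEq F] [Algebra (ZMod p) F]
    (hF : Fintype.card F = p ^ s)
    (q : ℕ) (hq : q = p ^ s)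
    (τ : ℝ) (hτ0 : 0 ≤ τ) (hτ1 : τ ≤ ((q : ℝ) - 1) / (q : ℝ))
    (τperp : ℝ)
    (hperp : τperp = (Real.sqrt (((q : ℝ) - 1) * (1 - τ)) - Real.sqrt τ) ^ 2 / (q : ℝ))
    (y : Fin n → F) (w : ℕ) (hw : hammingNorm y = w) :
    (((Real.sqrt (q : ℝ)) ^ n)⁻¹ : ℂ) *
        ∑ e : Fin n → F,
          ((Real.sqrt (1 - τ) ^ (n - hammingNorm e) *
              Real.sqrt (τ / ((q : ℝ) - 1)) ^ (hammingNorm e) : ℝ) : ℂ) * chiChar p F y e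
      = ((Real.sqrt (1 - τperp) ^ (n - w) *
            Real.sqrt (τperp / ((q : ℝ) - 1)) ^ w : ℝ) : ℂ) := by
  haveI : Fact p.Prime := ⟨hp⟩
  haveI : NeZero p := ⟨hp.pos.ne'⟩
  have hq2 : 2 ≤ q := by
    rw [hq]
    calc 2 ≤ p := hp.two_le
    _ ≤ p ^ s := Nat.le_self_pow (by omega) p
  have hqR : (1:ℝ) < (q:ℝ) := by exact_mod_cast hq2
  have hq0 : (0:ℝ) < q := by linarith
  have hq1 : (0:ℝ) < (q:ℝ) - 1 := by linarith
  set Q := Real.sqrt (q:ℝ) with hQ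
  set c := Real.sqrt τ with hcdef
  set d := Real.sqrt (1-τ) with hddef
  set r := Real.sqrt ((q:ℝ)-1) with hrdef
  have hτ1' : τ ≤ 1 := le_trans hτ1 (by rw [div_le_one hq0]; linarith)
  have h1τ : (0:ℝ) ≤ 1 - τ := by linarith
  have hQ0 : 0 < Q := Real.sqrt_pos.mpr hq0
  have hr0 : 0 < r := Real.sqrt_pos.mpr hq1
  have hc0 : 0 ≤ c := Real.sqrt_nonneg _
  have hd0 : 0 ≤ d := Real.sqrt_nonneg _
  have hc2 : c^2 = τ := Real.sq_sqrt hτ0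
  have hd2 : d^2 = 1 - τ := Real.sq_sqrt h1τ
  have hrr : r * r = (q:ℝ) - 1 := Real.mul_self_sqrt hq1.le
  have hQQ : Q * Q = (q:ℝ) := Real.mul_self_sqrt hq0.le
  have hqτ : τ * q ≤ (q:ℝ) - 1 := (le_div_iff₀ hq0).mp hτ1
  have hkey : τ ≤ ((q:ℝ)-1)*(1-τ) := by nlinarith
  have hsqm : Real.sqrt (((q:ℝ)-1)*(1-τ)) = r * d := Real.sqrt_mul hq1.le _
  have hcd : c ≤ r * d := by rw [← hsqm]; exact Real.sqrt_le_sqrt hkey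
  have hb : Real.sqrt (τ / ((q:ℝ)-1)) = c / r := Real.sqrt_div hτ0 _
  rw [hsqm] at hperp
  have hτp : τperp * q = (r*d - c)^2 := by rw [hperp]; field_simp
  have hα0 : (0:ℝ) ≤ d + r * c := by positivity
  have hβ0 : (0:ℝ) ≤ d - c / r := by
    rw [sub_nonneg, div_le_iff₀ hr0]
    linarith [hcd, mul_comm r d]
  have e1 : 1 - τperp = ((d + r*c)/Q)^2 := by
    rw [div_pow]
    rw [show Q^2 = (q:ℝ) by rw [sq]; exact hQQ]
    rw [eq_div_iff hq0.ne']
    linear_combination (-1 : ℝ)*hτp + (-1)*hrr + (-(r*r+1))*hc2 + (-(r*r+1))*hd2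
  have e2 : τperp / ((q:ℝ)-1) = ((d - c/r)/Q)^2 := by
    rw [div_pow]
    rw [show Q^2 = (q:ℝ) by rw [sq]; exact hQQ]
    rw [div_eq_div_iff hq1.ne' hq0.ne']
    have hdc : d - c/r = (r*d - c)/r := by field_simp
    rw [hdc, div_pow, div_mul_eq_mul_div, eq_comm, div_eq_iff (pow_ne_zero 2 hr0.ne'), eq_comm]
    linear_combination (r*r)*hτp + (r*d-c)^2*hrr
  have L1 : Real.sqrt (1 - τperp) = (d + r*c)/Q := by
    rw [e1, Real.sqrt_sq (by positivity)]
  have L2 : Real.sqrt (τperp / ((q:ℝ)-1)) = (d - c/r)/Q := by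
    rw [e2, Real.sqrt_sq (by positivity)]
  -- the character
  set ψ : AddChar F ℂ := psiChar p F with hψ
  have hchi : ∀ e : Fin n → F, chiChar p F y e = ∏ i, ψ (e i * y i) := by
    intro e
    have h1 : ψ (∑ i, e i * y i) = ∏ i, ψ (e i * y i) := addChar_map_sum ψ Finset.univ _
    rw [← h1, hψ, psiChar_apply, chiChar]
  -- weight factor as a product
  have hwle : w ≤ n := by
    rw [← hw]
    calc hammingNorm y ≤ Fintype.card (Fin n) := Finset.card_filter_le _ _
    _ = n := Fintype.card_fin n
  have hwt : ∀ e : Fin n → F,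
      ((d ^ (n - hammingNorm e) * (c/r) ^ hammingNorm e : ℝ) : ℂ)
        = ∏ i, (if e i = 0 then ((d:ℝ):ℂ) else ((c/r : ℝ):ℂ)) := by
    intro e
    rw [Finset.prod_ite, Finset.prod_const, Finset.prod_const]
    have hsplit := Finset.card_filter_add_card_filter_not
      (s := (Finset.univ : Finset (Fin n))) (p := fun i => e i = 0)
    have hne : (Finset.univ.filter (fun i => ¬ e i = 0)).card = hammingNorm e := rfl
    have hcu : (Finset.univ : Finset (Fin n)).card = n := by simp
    have heq : (Finset.univ.filter (fun i => e i = 0)).card = n - hammingNorm e := by omega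
    rw [hne, heq]
    push_cast
    ring
  -- rewrite summand as a product over coordinates
  have hsummand : ∀ e : Fin n → F,
      ((d ^ (n - hammingNorm e) * (c/r) ^ hammingNorm e : ℝ) : ℂ) * chiChar p F y e
        = ∏ i, ((if e i = 0 then ((d:ℝ):ℂ) else ((c/r : ℝ):ℂ)) * ψ (e i * y i)) := by
    intro e
    rw [hwt e, hchi e, ← Finset.prod_mul_distrib]
  have hq1ne : ((q:ℝ)-1) ≠ 0 := hq1.ne'
  have hcard : Fintype.card F = q := by rw [hF, hq]
  -- the per-coordinate sum
  have hS : ∀ i : Fin n, (∑ x : F, (if x = 0 then ((d:ℝ):ℂ) else ((c/r : ℝ):ℂ)) * ψ (x * y i))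
      = if y i = 0 then ((d + r*c : ℝ):ℂ) else ((d - c/r : ℝ):ℂ) := by
    intro i
    by_cases hyi : y i = 0
    · simp only [hyi, if_true, mul_zero, AddChar.map_zero_eq_one, mul_one]
      rw [Finset.sum_ite, Finset.sum_const, Finset.sum_const]
      have h1 : (Finset.univ.filter (fun x : F => x = 0)).card = 1 := by
        simp [Finset.filter_eq']
      have h2 : (Finset.univ.filter (fun x : F => ¬ x = 0)).card = q - 1 := by
        have := Finset.card_filter_add_card_filter_not
          (s := (Finset.univ : Finset F)) (p := fun x : F => x = 0)
        have hcu : (Finset.univ : Finset F).card = q := by rw [Finset.card_univ, hcard]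
        omega
      rw [h1, h2]
      have hreal : d + ((q:ℝ)-1) * (c/r) = d + r*c := by
        rw [← hrr]; field_simp
      have hq1nC : ((q - 1 : ℕ) : ℂ) = ((((q:ℝ) - 1) : ℝ) : ℂ) := by
        push_cast [Nat.cast_sub (by omega : 1 ≤ q)]; ring
      simp only [nsmul_eq_mul, one_mul, Nat.cast_one, one_smul]
      rw [hq1nC]
      exact_mod_cast hreal
    · simp only [hyi, if_false]
      have hsplit2 : ∀ x : F,
          (if x = 0 then ((d:ℝ):ℂ) else ((c/r : ℝ):ℂ)) * ψ (x * y i)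
            = ((c/r : ℝ):ℂ) * ψ (x * y i) + (if x = 0 then ((d - c/r : ℝ):ℂ) else 0) := by
        intro x
        by_cases hx : x = 0
        · simp only [hx, if_true, zero_mul, AddChar.map_zero_eq_one, mul_one]
          push_cast; ring
        · simp [hx]
      rw [Finset.sum_congr rfl fun x _ => hsplit2 x, Finset.sum_add_distrib, ← Finset.mul_sum]
      have hzero : (∑ x : F, ψ (x * y i)) = 0 := by
        have hmu : ∀ x : F, ψ (x * y i) = (AddChar.mulShift ψ (y i)) x := by
          intro x; rw [AddChar.mulShift_apply, mul_comm]
        rw [Finset.sum_congr rfl fun x _ => hmu x]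
        refine AddChar.sum_eq_zero_iff_ne_zero.mpr ?_
        rw [AddChar.ne_zero_iff]
        obtain ⟨b, hb'⟩ := trace_nondeg p hp F hyi
        exact ⟨b, by rw [AddChar.mulShift_apply]; exact psiChar_ne_one p F hb'⟩
      rw [hzero, mul_zero, zero_add]
      simp
  -- put everything together
  have hmain : (∑ e : Fin n → F,
      ((d ^ (n - hammingNorm e) * (c/r) ^ hammingNorm e : ℝ) : ℂ) * chiChar p F y e)
      = ((d + r*c : ℝ):ℂ) ^ (n - w) * ((d - c/r : ℝ):ℂ) ^ w := by
    rw [Finset.sum_congr rfl fun e _ => hsummand e]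
    have h2 : (∑ e : Fin n → F,
          ∏ i, ((if e i = 0 then ((d:ℝ):ℂ) else ((c/r : ℝ):ℂ)) * ψ (e i * y i)))
        = ∏ i, ∑ x : F, ((if x = 0 then ((d:ℝ):ℂ) else ((c/r : ℝ):ℂ)) * ψ (x * y i)) :=
      sum_prod_univ (fun i x => (if x = 0 then ((d:ℝ):ℂ) else ((c/r : ℝ):ℂ)) * ψ (x * y i))
    rw [h2]
    rw [Finset.prod_congr rfl fun i _ => hS i]
    rw [Finset.prod_ite, Finset.prod_const, Finset.prod_const]
    have hne : (Finset.univ.filter (fun i => ¬ y i = 0)).card = w := by rw [← hw]; rfl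
    have hsplit := Finset.card_filter_add_card_filter_not
      (s := (Finset.univ : Finset (Fin n))) (p := fun i => y i = 0)
    have hcu : (Finset.univ : Finset (Fin n)).card = n := by simp
    have heq : (Finset.univ.filter (fun i => y i = 0)).card = n - w := by omega
    rw [hne, heq]
  rw [hb, hmain, L1, L2]
  have hfin : (Q^n)⁻¹ * ((d+r*c)^(n-w) * (d-c/r)^w)
      = ((d+r*c)/Q)^(n-w) * ((d-c/r)/Q)^w := by
    rw [div_pow, div_pow, div_mul_div_comm, ← pow_add, Nat.sub_add_cancel hwle,
      inv_mul_eq_div]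
  exact_mod_cast hfin
end

section
/- Let q ≥ 2 be an integer and let τ ∈ (0, (q−1)/q). Set τ^⊥ := (√((q−1)(1−τ)) − √τ)²/q. Then h_q(τ) + h_q(τ^⊥) > 1. In particular, if R ∈ (0,1) and h_q(τ) < 1 − R, then h_q(τ^⊥) > R. -/
private lemma hasDerivAt_F (Q : ℝ) (hQ : 0 < Q) (x : ℝ) (hx : 0 < x) :
    HasDerivAt (fun y => Q*(1+y)*Real.log (1+y) - y*(y+Q)*(Real.log (y+Q) - Real.log y))
      (Q*Real.log (1+x) + 2*Q - (2*x+Q)*(Real.log (x+Q) - Real.log x)) x := by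
  have h1x : (0:ℝ) < 1 + x := by linarith
  have hxQ : (0:ℝ) < x + Q := by linarith
  have d1 : HasDerivAt (fun y : ℝ => Q*(1+y)*Real.log (1+y))
      (Q*Real.log (1+x) + Q) x := by
    have hl : HasDerivAt (fun y : ℝ => Real.log (1+y)) (1/(1+x)) x := by
      have := (Real.hasDerivAt_log h1x.ne').comp x
        ((hasDerivAt_const x (1:ℝ)).add (hasDerivAt_id x))
      simpa [one_div, Function.comp_def] using this
    have hm : HasDerivAt (fun y : ℝ => Q*(1+y)) Q x := by
      simpa using ((hasDerivAt_const x (1:ℝ)).add (hasDerivAt_id x)).const_mul Q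
    have := hm.mul hl
    refine this.congr_deriv ?_
    field_simp
  have d2 : HasDerivAt (fun y : ℝ => y*(y+Q)*(Real.log (y+Q) - Real.log y))
      ((2*x+Q)*(Real.log (x+Q) - Real.log x) - Q) x := by
    have hl2 : HasDerivAt (fun y : ℝ => Real.log (y+Q) - Real.log y)
        (1/(x+Q) - 1/x) x := by
      have hA : HasDerivAt (fun y : ℝ => Real.log (y+Q)) (1/(x+Q)) x := by
        have := (Real.hasDerivAt_log hxQ.ne').comp x
          ((hasDerivAt_id x).add (hasDerivAt_const x Q))
        simpa [one_div, Function.comp_def] using this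
      have hB : HasDerivAt Real.log (1/x) x := by
        simpa [one_div] using Real.hasDerivAt_log hx.ne'
      exact hA.sub hB
    have hm2 : HasDerivAt (fun y : ℝ => y*(y+Q)) (2*x+Q) x := by
      have := (hasDerivAt_id x).mul ((hasDerivAt_id x).add (hasDerivAt_const x Q))
      refine this.congr_deriv ?_
      simp only [id_eq, Pi.add_apply]
      ring
    have := hm2.mul hl2
    refine this.congr_deriv ?_
    field_simp
    ring
  have := d1.sub d2
  refine this.congr_deriv ?_
  ring

/-- Core inequality: for `x > √Q`,
`x(x+Q)(log(x+Q) − log x) < Q(1+x)log(1+x)`. -/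
lemma core_ineq (Q x : ℝ) (hQ : 0 < Q) (hx : Real.sqrt Q < x) :
    x*(x+Q)*(Real.log (x+Q) - Real.log x) < Q*(1+x)*Real.log (1+x) := by
  set F : ℝ → ℝ := fun y => Q*(1+y)*Real.log (1+y) - y*(y+Q)*(Real.log (y+Q) - Real.log y)
  have hsq : (0:ℝ) < Real.sqrt Q := Real.sqrt_pos.mpr hQ
  have hmono : StrictMonoOn F (Set.Ici (Real.sqrt Q)) := by
    apply strictMonoOn_of_deriv_pos (convex_Ici _)
    · apply ContinuousOn.sub
      · exact (continuousOn_const.mul (continuousOn_const.add continuousOn_id)).mul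
          ((Real.continuousOn_log.comp (continuousOn_const.add continuousOn_id)
            (fun y hy => by
              simp only [Set.mem_Ici] at hy
              have : (0:ℝ) < 1 + y := by nlinarith
              simpa using this.ne')))
      · apply ContinuousOn.mul
        · exact (continuousOn_id.mul (continuousOn_id.add continuousOn_const))
        · apply ContinuousOn.sub
          · exact Real.continuousOn_log.comp (continuousOn_id.add continuousOn_const)
              (fun y hy => by
                simp only [Set.mem_Ici] at hy
                have : (0:ℝ) < y + Q := by nlinarith
                simpa using this.ne')
          · exact Real.continuousOn_log.comp continuousOn_id
              (fun y hy => by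
                simp only [Set.mem_Ici] at hy
                have : (0:ℝ) < y := lt_of_lt_of_le hsq hy
                simpa using this.ne')
    · intro y hy
      rw [interior_Ici] at hy
      have hy0 : 0 < y := lt_trans hsq hy
      have hQy : Q < y^2 := (Real.sqrt_lt' hy0).mp (Set.mem_Ioi.mp hy)
      rw [(hasDerivAt_F Q hQ y hy0).deriv]
      have hyQ : (0:ℝ) < y + Q := by linarith
      have h1y : (0:ℝ) < 1 + y := by linarith
      have hlog1 : Real.log (y+Q) - Real.log y ≤ Real.log (1+y) := by
        rw [← Real.log_div hyQ.ne' hy0.ne']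
        apply Real.log_le_log (by positivity)
        rw [div_le_iff₀ hy0]
        nlinarith
      have hlog2 : y * (Real.log (y+Q) - Real.log y) < Q := by
        rw [← Real.log_div hyQ.ne' hy0.ne']
        have h1 : (y+Q)/y = 1 + Q/y := by field_simp
        have h2 : Real.log (1 + Q/y) < Q/y := by
          have hpos : (0:ℝ) < Q/y := by positivity
          have := Real.log_lt_sub_one_of_pos (show (0:ℝ) < 1 + Q/y by linarith)
            (by intro h; rw [add_eq_left] at h; linarith)
          linarith
        rw [h1]
        calc y * Real.log (1+Q/y) < y * (Q/y) := by
              apply mul_lt_mul_of_pos_left _ hy0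
              exact h2
          _ = Q := by field_simp
      nlinarith [hlog1, hlog2]
  have hF0 : F (Real.sqrt Q) = 0 := by
    have hsq2 : Real.sqrt Q ^ 2 = Q := Real.sq_sqrt hQ.le
    have h1 : Real.sqrt Q * (Real.sqrt Q + Q) = Q * (1 + Real.sqrt Q) := by nlinarith
    have h2 : Real.log (Real.sqrt Q + Q) - Real.log (Real.sqrt Q) = Real.log (1 + Real.sqrt Q) := by
      rw [← Real.log_div (by positivity) hsq.ne']
      congr 1
      field_simp
      nlinarith
    simp only [F, h2, h1]
    ring
  have := hmono (Set.self_mem_Ici) (le_of_lt hx : Real.sqrt Q ≤ x) hx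
  rw [hF0] at this
  simp only [F] at this
  linarith

/-- Key inequality in ρ-form: for `ρ > 1 + √Q`,
`(ρ−1)(ρ+Q−1)(log(ρ+Q−1) − log(ρ−1)) < Qρ·log ρ`. -/
lemma Kprime (Q ρ : ℝ) (hQ : 0 < Q) (hρ : 1 + Real.sqrt Q < ρ) :
    (ρ-1)*(ρ+Q-1)*(Real.log (ρ+Q-1) - Real.log (ρ-1)) < Q*ρ*Real.log ρ := by
  have h := core_ineq Q (ρ-1) hQ (by linarith)
  have e1 : ρ - 1 + Q = ρ + Q - 1 := by ring
  have e2 : 1 + (ρ - 1) = ρ := by ring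
  rw [e1, e2] at h
  calc (ρ-1)*(ρ+Q-1)*(Real.log (ρ+Q-1) - Real.log (ρ-1)) < Q*ρ*Real.log ρ := by
        have : (ρ-1)*(ρ+Q-1) = (ρ-1)*(ρ+Q-1) := rfl
        nlinarith [h]

/-- Homogeneous form of the key inequality. -/
lemma Kprime' (Q u v : ℝ) (hQ1 : 1 ≤ Q) (hu : 0 < u) (huv : (1+Real.sqrt Q)*u < v) :
    (v-u)*((Q-1)*u+v)*(Real.log ((Q-1)*u+v) - Real.log (v-u)) < Q*u*v*(Real.log v - Real.log u) := by
  have hQ : (0:ℝ) < Q := by linarith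
  have hsq : (0:ℝ) < Real.sqrt Q := Real.sqrt_pos.mpr hQ
  have hvu : u < v := by nlinarith
  have hv : 0 < v := lt_trans hu hvu
  have hw1 : 0 < v - u := by linarith
  have hw2 : 0 < (Q-1)*u + v := by nlinarith
  have hρ : 1 + Real.sqrt Q < v/u := by
    rw [lt_div_iff₀ hu]; linarith
  have h := Kprime Q (v/u) hQ hρ
  have e1 : v/u - 1 = (v-u)/u := by field_simp
  have e2 : v/u + Q - 1 = ((Q-1)*u+v)/u := by field_simp; ring
  rw [e1, e2, Real.log_div hw2.ne' hu.ne', Real.log_div hw1.ne' hu.ne',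
    Real.log_div hv.ne' hu.ne'] at h
  have h2 := mul_lt_mul_of_pos_left h (show (0:ℝ) < u^2 by positivity)
  calc (v-u)*((Q-1)*u+v)*(Real.log ((Q-1)*u+v) - Real.log (v-u))
      = u^2 * ((v-u)/u * (((Q-1)*u+v)/u) *
        (Real.log ((Q-1)*u+v) - Real.log u - (Real.log (v-u) - Real.log u))) := by
        field_simp; ring
    _ < u^2 * (Q * (v/u) * (Real.log v - Real.log u)) := h2
    _ = Q*u*v*(Real.log v - Real.log u) := by field_simp


/-- The map τ ↦ τ^⊥. -/
noncomputable def phi (q : ℕ) : ℝ → ℝ :=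
  fun t => (Real.sqrt (((q:ℝ)-1)*(1-t)) - Real.sqrt t)^2 / (q:ℝ)

lemma phi_cont (q : ℕ) : Continuous (phi q) := by
  unfold phi
  fun_prop

lemma phi_zero (q : ℕ) (h : (2:ℝ) ≤ (q:ℝ)) : phi q 0 = ((q:ℝ)-1)/(q:ℝ) := by
  simp only [phi, Real.sqrt_zero, sub_zero, mul_one]
  rw [Real.sq_sqrt (by linarith)]

lemma phi_theta (q : ℕ) (h : (2:ℝ) ≤ (q:ℝ)) : phi q (((q:ℝ)-1)/(q:ℝ)) = 0 := by
  have h1 : (1:ℝ) - ((q:ℝ)-1)/(q:ℝ) = 1/(q:ℝ) := by field_simp; ring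
  have h2 : ((q:ℝ)-1) * (1/(q:ℝ)) = ((q:ℝ)-1)/(q:ℝ) := by ring
  simp only [phi, h1, h2, sub_self]
  norm_num

lemma qary_theta (q : ℕ) (hq : 2 ≤ q) :
    Real.qaryEntropy q (((q:ℝ)-1)/(q:ℝ)) = Real.log (q:ℝ) := by
  have h : (2:ℝ) ≤ (q:ℝ) := by exact_mod_cast hq
  have hQ0 : (0:ℝ) < (q:ℝ) := by linarith
  have hQ1 : (0:ℝ) < (q:ℝ)-1 := by linarith
  unfold Real.qaryEntropy Real.binEntropy
  have h1 : (1:ℝ) - ((q:ℝ)-1)/(q:ℝ) = 1/(q:ℝ) := by field_simp; ring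
  have hcast : Real.log (((q:ℤ)-1 : ℤ) : ℝ) = Real.log ((q:ℝ)-1) := by norm_num
  rw [h1, hcast]
  rw [show ((((q:ℝ)-1)/(q:ℝ))⁻¹ : ℝ) = (q:ℝ)/((q:ℝ)-1) by rw [inv_div],
    show ((1/(q:ℝ))⁻¹ : ℝ) = (q:ℝ) by rw [one_div, inv_inv]]
  rw [Real.log_div hQ0.ne' hQ1.ne']
  field_simp
  ring

lemma hasDerivAt_phi (q : ℕ) (h : (2:ℝ) ≤ (q:ℝ)) (t : ℝ) (ht0 : 0 < t)
    (htθ : t < ((q:ℝ)-1)/(q:ℝ)) :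
    HasDerivAt (phi q)
      (-((Real.sqrt (((q:ℝ)-1)*(1-t)) - Real.sqrt t) *
          (((q:ℝ)-1)*Real.sqrt t + Real.sqrt (((q:ℝ)-1)*(1-t)))) /
        ((q:ℝ) * Real.sqrt t * Real.sqrt (((q:ℝ)-1)*(1-t)))) t := by
  set Q : ℝ := (q:ℝ)
  have hQ0 : (0:ℝ) < Q := by linarith
  have ht1 : t < 1 := lt_of_lt_of_le htθ (by rw [div_le_one hQ0]; linarith)
  have hin : (0:ℝ) < (Q-1)*(1-t) := by nlinarith
  set u := Real.sqrt t with hu_def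
  set v := Real.sqrt ((Q-1)*(1-t)) with hv_def
  have hu0 : 0 < u := Real.sqrt_pos.mpr ht0
  have hv0 : 0 < v := Real.sqrt_pos.mpr hin
  have hA : HasDerivAt (fun y : ℝ => Real.sqrt ((Q-1)*(1-y))) (-(Q-1)/(2*v)) t := by
    have hinner : HasDerivAt (fun y : ℝ => (Q-1)*(1-y)) (-(Q-1)) t := by
      simpa using ((hasDerivAt_const t (1:ℝ)).sub (hasDerivAt_id t)).const_mul (Q-1)
    have := (Real.hasDerivAt_sqrt hin.ne').comp t hinner
    refine this.congr_deriv ?_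
    rw [← hv_def]
    field_simp
  have hB : HasDerivAt Real.sqrt (1/(2*u)) t := by
    simpa [hu_def] using Real.hasDerivAt_sqrt ht0.ne'
  have hAB : HasDerivAt (fun y : ℝ => Real.sqrt ((Q-1)*(1-y)) - Real.sqrt y)
      (-(Q-1)/(2*v) - 1/(2*u)) t := hA.sub hB
  have hpow := (hAB.pow 2).div_const Q
  refine hpow.congr_deriv ?_
  rw [← hu_def, ← hv_def]
  field_simp
  ring

set_option maxHeartbeats 1000000 in
lemma deriv_G_eq (q : ℕ) (hq : 2 ≤ q) (t : ℝ) (ht0 : 0 < t)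
    (htθ : t < ((q:ℝ)-1)/(q:ℝ)) :
    deriv (fun y => Real.qaryEntropy q y + Real.qaryEntropy q (phi q y)) t
      = (2*((q:ℝ) * Real.sqrt t * Real.sqrt (((q:ℝ)-1)*(1-t)) *
            (Real.log (Real.sqrt (((q:ℝ)-1)*(1-t))) - Real.log (Real.sqrt t)))
         - 2*((Real.sqrt (((q:ℝ)-1)*(1-t)) - Real.sqrt t) *
              (((q:ℝ)-1)*Real.sqrt t + Real.sqrt (((q:ℝ)-1)*(1-t))) *
              (Real.log (((q:ℝ)-1)*Real.sqrt t + Real.sqrt (((q:ℝ)-1)*(1-t)))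
                - Real.log (Real.sqrt (((q:ℝ)-1)*(1-t)) - Real.sqrt t))))
        / ((q:ℝ) * Real.sqrt t * Real.sqrt (((q:ℝ)-1)*(1-t))) := by
  have h : (2:ℝ) ≤ (q:ℝ) := by exact_mod_cast hq
  set Q : ℝ := (q:ℝ) with hQ_def
  have hQ0 : (0:ℝ) < Q := by linarith
  have hQ1 : (0:ℝ) < Q - 1 := by linarith
  have ht1 : t < 1 := lt_of_lt_of_le htθ (by rw [div_le_one hQ0]; linarith)
  have hin : (0:ℝ) < (Q-1)*(1-t) := by nlinarith
  set u := Real.sqrt t with hu_def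
  set v := Real.sqrt ((Q-1)*(1-t)) with hv_def
  have hu0 : 0 < u := Real.sqrt_pos.mpr ht0
  have hv0 : 0 < v := Real.sqrt_pos.mpr hin
  have hu2 : u^2 = t := Real.sq_sqrt ht0.le
  have hv2 : v^2 = (Q-1)*(1-t) := Real.sq_sqrt hin.le
  have hQt : t * Q < Q - 1 := (lt_div_iff₀ hQ0).mp htθ
  have hvu : u < v := by
    rw [hu_def, hv_def]
    exact Real.sqrt_lt_sqrt ht0.le (by nlinarith)
  have hw1 : 0 < v - u := by linarith
  have hw2 : 0 < (Q-1)*u + v := by positivity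
  -- s = phi q t
  have hs_eq : phi q t = (v-u)^2/Q := rfl
  have hs0 : 0 < phi q t := by rw [hs_eq]; positivity
  have hs1 : phi q t < 1 := by
    rw [hs_eq, div_lt_one hQ0]
    nlinarith [mul_pos hu0 hv0]
  -- derivative of the outer entropy at s
  have hN1 : HasDerivAt (Real.qaryEntropy q)
      (Real.log (Q-1) + Real.log (1-t) - Real.log t) t :=
    Real.hasDerivAt_qaryEntropy ht0.ne' (ne_of_lt ht1)
  have hN2 : HasDerivAt (Real.qaryEntropy q)
      (Real.log (Q-1) + Real.log (1 - phi q t) - Real.log (phi q t)) (phi q t) :=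
    Real.hasDerivAt_qaryEntropy hs0.ne' (ne_of_lt hs1)
  have hφ := hasDerivAt_phi q h t ht0 htθ
  rw [← hu_def, ← hv_def] at hφ
  have hG : HasDerivAt (fun y => Real.qaryEntropy q y + Real.qaryEntropy q (phi q y))
      ((Real.log (Q-1) + Real.log (1-t) - Real.log t)
        + (Real.log (Q-1) + Real.log (1 - phi q t) - Real.log (phi q t))
          * (-((v - u) * ((Q-1)*u + v)) / (Q * u * v))) t := by
    exact hN1.add ((hN2.comp t hφ) : HasDerivAt (fun y => Real.qaryEntropy q (phi q y)) _ t)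
  rw [hG.deriv]
  -- log identities
  have hlog_t : Real.log t = 2 * Real.log u := by
    rw [← hu2, Real.log_pow]; push_cast; ring
  have hlog_1t : Real.log (1-t) = 2 * Real.log v - Real.log (Q-1) := by
    have e : (1:ℝ) - t = v^2/(Q-1) := by rw [hv2]; field_simp
    rw [e, Real.log_div (by positivity) hQ1.ne', Real.log_pow]; push_cast; ring
  have hw2sq : ((Q-1)*u + v)^2 = (Q-1)*(Q - (v-u)^2) := by
    have hc : (Q-1)*u^2 + v^2 = Q-1 := by rw [hu2, hv2]; ring
    linear_combination Q * hc
  have hlog_s : Real.log (phi q t) = 2 * Real.log (v-u) - Real.log Q := by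
    rw [hs_eq, Real.log_div (by positivity) hQ0.ne', Real.log_pow]; push_cast; ring
  have hlog_1s : Real.log (1 - phi q t)
      = 2 * Real.log ((Q-1)*u + v) - Real.log Q - Real.log (Q-1) := by
    have e : (1:ℝ) - phi q t = ((Q-1)*u + v)^2/(Q*(Q-1)) := by
      rw [hs_eq, hw2sq]
      field_simp
    rw [e, Real.log_div (by positivity) (by positivity), Real.log_mul hQ0.ne' hQ1.ne',
      Real.log_pow]
    push_cast; ring
  rw [hlog_t, hlog_1t, hlog_s, hlog_1s]
  field_simp
  ring

lemma sqrtQ_facts (q : ℕ) (h : (2:ℝ) ≤ (q:ℝ)) :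
    0 < Real.sqrt (q:ℝ) ∧ Real.sqrt (q:ℝ)^2 = (q:ℝ) := by
  constructor
  · exact Real.sqrt_pos.mpr (by linarith)
  · exact Real.sq_sqrt (by linarith)

set_option maxHeartbeats 1000000 in
lemma deriv_G_pos (q : ℕ) (hq : 2 ≤ q) (t : ℝ) (ht0 : 0 < t)
    (ht : t < ((q:ℝ)-1)/(2*(q:ℝ)+2*Real.sqrt (q:ℝ))) :
    0 < deriv (fun y => Real.qaryEntropy q y + Real.qaryEntropy q (phi q y)) t := by
  have h : (2:ℝ) ≤ (q:ℝ) := by exact_mod_cast hq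
  set Q : ℝ := (q:ℝ) with hQ_def
  obtain ⟨hsq0, hsq2⟩ := sqrtQ_facts q h
  have hQ0 : (0:ℝ) < Q := by linarith
  have hQ1 : (0:ℝ) < Q - 1 := by linarith
  have htθ : t < (Q-1)/Q := lt_of_lt_of_le ht
    (by apply div_le_div_of_nonneg_left hQ1.le hQ0; nlinarith)
  rw [deriv_G_eq q hq t ht0 htθ]
  have ht1 : t < 1 := lt_of_lt_of_le htθ (by rw [div_le_one hQ0]; linarith)
  have hin : (0:ℝ) < (Q-1)*(1-t) := by nlinarith
  set u := Real.sqrt t with hu_def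
  set v := Real.sqrt ((Q-1)*(1-t)) with hv_def
  have hu0 : 0 < u := Real.sqrt_pos.mpr ht0
  have hv0 : 0 < v := Real.sqrt_pos.mpr hin
  have hu2 : u^2 = t := Real.sq_sqrt ht0.le
  have hv2 : v^2 = (Q-1)*(1-t) := Real.sq_sqrt hin.le
  have htt : t * (2*Q+2*Real.sqrt Q) < Q - 1 := (lt_div_iff₀ (by positivity)).mp ht
  have hcond : (1 + Real.sqrt Q) * u < v := by
    have hsq : ((1 + Real.sqrt Q) * u)^2 < v^2 := by
      rw [hv2, mul_pow, hu2]
      nlinarith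
    nlinarith [mul_pos (mul_pos (add_pos (by norm_num : (0:ℝ)<1) hsq0) hu0) hv0]
  have key := Kprime' Q u v (by linarith) hu0 hcond
  apply div_pos
  · linarith
  · positivity

set_option maxHeartbeats 1000000 in
lemma deriv_G_neg (q : ℕ) (hq : 2 ≤ q) (t : ℝ)
    (ht : ((q:ℝ)-1)/(2*(q:ℝ)+2*Real.sqrt (q:ℝ)) < t) (htθ : t < ((q:ℝ)-1)/(q:ℝ)) :
    deriv (fun y => Real.qaryEntropy q y + Real.qaryEntropy q (phi q y)) t < 0 := by
  have h : (2:ℝ) ≤ (q:ℝ) := by exact_mod_cast hq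
  set Q : ℝ := (q:ℝ) with hQ_def
  obtain ⟨hsq0, hsq2⟩ := sqrtQ_facts q h
  have hQ0 : (0:ℝ) < Q := by linarith
  have hQ1 : (0:ℝ) < Q - 1 := by linarith
  have ht0 : 0 < t := lt_trans (by positivity) ht
  rw [deriv_G_eq q hq t ht0 htθ]
  have ht1 : t < 1 := lt_of_lt_of_le htθ (by rw [div_le_one hQ0]; linarith)
  have hin : (0:ℝ) < (Q-1)*(1-t) := by nlinarith
  set u := Real.sqrt t with hu_def
  set v := Real.sqrt ((Q-1)*(1-t)) with hv_def
  have hu0 : 0 < u := Real.sqrt_pos.mpr ht0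
  have hv0 : 0 < v := Real.sqrt_pos.mpr hin
  have hu2 : u^2 = t := Real.sq_sqrt ht0.le
  have hv2 : v^2 = (Q-1)*(1-t) := Real.sq_sqrt hin.le
  have hQt : t * Q < Q - 1 := (lt_div_iff₀ hQ0).mp htθ
  have hvu : u < v := by
    rw [hu_def, hv_def]
    exact Real.sqrt_lt_sqrt ht0.le (by nlinarith)
  have hw1 : 0 < v - u := by linarith
  have htt : Q - 1 < t * (2*Q+2*Real.sqrt Q) := (div_lt_iff₀ (by positivity)).mp ht
  have hvcond : v < (1 + Real.sqrt Q) * u := by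
    have hsq : v^2 < ((1 + Real.sqrt Q) * u)^2 := by
      rw [hv2, mul_pow, hu2]
      nlinarith
    nlinarith [mul_pos (mul_pos (add_pos (by norm_num : (0:ℝ)<1) hsq0) hu0) hv0]
  have hcond : (1 + Real.sqrt Q) * (v - u) < (Q-1)*u + v := by
    have expand : (1 + Real.sqrt Q) * (v - u) - ((Q-1)*u + v)
        = Real.sqrt Q * (v - (1 + Real.sqrt Q) * u) := by nlinarith [hsq2]
    nlinarith [mul_pos hsq0 (sub_pos.mpr hvcond)]
  have key := Kprime' Q (v-u) ((Q-1)*u+v) (by linarith) hw1 hcond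
  have e1 : (Q-1)*u + v - (v-u) = Q*u := by ring
  have e2 : (Q-1)*(v-u) + ((Q-1)*u+v) = Q*v := by ring
  rw [e1, e2, Real.log_mul hQ0.ne' hu0.ne', Real.log_mul hQ0.ne' hv0.ne'] at key
  have key3 : Q*(u*v*(Real.log v - Real.log u))
      < (v-u)*((Q-1)*u+v)*(Real.log ((Q-1)*u+v) - Real.log (v-u)) := by
    have hh : Q*(Q*(u*v*(Real.log v - Real.log u)))
        < Q*((v-u)*((Q-1)*u+v)*(Real.log ((Q-1)*u+v) - Real.log (v-u))) := by
      linarith [key]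
    exact (mul_lt_mul_iff_right₀ hQ0).mp hh
  apply div_neg_of_neg_of_pos
  · linarith [key3]
  · positivity

lemma main_nats (q : ℕ) (hq : 2 ≤ q) (τ : ℝ) (h0 : 0 < τ)
    (hθ : τ < ((q:ℝ)-1)/(q:ℝ)) :
    Real.log (q:ℝ) < Real.qaryEntropy q τ + Real.qaryEntropy q (phi q τ) := by
  have h : (2:ℝ) ≤ (q:ℝ) := by exact_mod_cast hq
  set Q : ℝ := (q:ℝ) with hQ_def
  obtain ⟨hsq0, hsq2⟩ := sqrtQ_facts q h
  have hQ0 : (0:ℝ) < Q := by linarith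
  have hQ1 : (0:ℝ) < Q - 1 := by linarith
  set G : ℝ → ℝ := fun y => Real.qaryEntropy q y + Real.qaryEntropy q (phi q y) with hG_def
  set τ₀ : ℝ := (Q-1)/(2*Q+2*Real.sqrt Q) with hτ₀_def
  have hτ₀0 : 0 < τ₀ := by positivity
  have hτ₀θ : τ₀ < (Q-1)/Q := by
    apply div_lt_div_of_pos_left hQ1 hQ0
    nlinarith
  have hGcont : Continuous G :=
    Real.qaryEntropy_continuous.add (Real.qaryEntropy_continuous.comp (phi_cont q))
  have hG0 : G 0 = Real.log Q := by
    simp only [hG_def, Real.qaryEntropy_zero, phi_zero q h, zero_add]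
    exact qary_theta q hq
  have hGθ : G ((Q-1)/Q) = Real.log Q := by
    simp only [hG_def, hQ_def, phi_theta q h, Real.qaryEntropy_zero, add_zero]
    exact qary_theta q hq
  have hmono : StrictMonoOn G (Set.Icc 0 τ₀) := by
    apply strictMonoOn_of_deriv_pos (convex_Icc _ _) hGcont.continuousOn
    intro x hx
    rw [interior_Icc] at hx
    exact deriv_G_pos q hq x hx.1 hx.2
  have hanti : StrictAntiOn G (Set.Icc τ₀ ((Q-1)/Q)) := by
    apply strictAntiOn_of_deriv_neg (convex_Icc _ _) hGcont.continuousOn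
    intro x hx
    rw [interior_Icc] at hx
    exact deriv_G_neg q hq x hx.1 hx.2
  rcases le_or_gt τ τ₀ with hcase | hcase
  · have := hmono (Set.mem_Icc.mpr ⟨le_refl 0, hτ₀0.le⟩) (Set.mem_Icc.mpr ⟨h0.le, hcase⟩) h0
    rw [hG0] at this
    exact this
  · have := hanti (Set.mem_Icc.mpr ⟨hcase.le, hθ.le⟩)
      (Set.mem_Icc.mpr ⟨hτ₀θ.le, le_refl _⟩) hθ
    rw [hGθ] at this
    exact this

lemma conv_entropy (q : ℕ) (hq : 2 ≤ q) (x : ℝ) (h0 : 0 < x) (h1 : x < 1) :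
    (-x * Real.logb q (x / ((q : ℝ) - 1)) - (1 - x) * Real.logb q (1 - x))
      = Real.qaryEntropy q x / Real.log (q:ℝ) := by
  have h : (2:ℝ) ≤ (q:ℝ) := by exact_mod_cast hq
  have hQ1 : (0:ℝ) < (q:ℝ) - 1 := by linarith
  have hlogQ : 0 < Real.log (q:ℝ) := Real.log_pos (by linarith)
  unfold Real.qaryEntropy Real.binEntropy Real.logb
  have hcast : Real.log (((q:ℤ)-1 : ℤ) : ℝ) = Real.log ((q:ℝ)-1) := by norm_num
  rw [hcast, Real.log_div h0.ne' hQ1.ne', Real.log_inv, Real.log_inv]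
  field_simp
  ring

lemma phi_mem (q : ℕ) (hq : 2 ≤ q) (τ : ℝ) (h0 : 0 < τ)
    (hθ : τ < ((q:ℝ)-1)/(q:ℝ)) : 0 < phi q τ ∧ phi q τ < 1 := by
  have h : (2:ℝ) ≤ (q:ℝ) := by exact_mod_cast hq
  set Q : ℝ := (q:ℝ) with hQ_def
  have hQ0 : (0:ℝ) < Q := by linarith
  have ht1 : τ < 1 := lt_of_lt_of_le hθ (by rw [div_le_one hQ0]; linarith)
  have hin : (0:ℝ) < (Q-1)*(1-τ) := by nlinarith
  set u := Real.sqrt τ with hu_def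
  set v := Real.sqrt ((Q-1)*(1-τ)) with hv_def
  have hu0 : 0 < u := Real.sqrt_pos.mpr h0
  have hv0 : 0 < v := Real.sqrt_pos.mpr hin
  have hu2 : u^2 = τ := Real.sq_sqrt h0.le
  have hv2 : v^2 = (Q-1)*(1-τ) := Real.sq_sqrt hin.le
  have hQt : τ * Q < Q - 1 := (lt_div_iff₀ hQ0).mp hθ
  have hvu : u < v := by
    rw [hu_def, hv_def]
    exact Real.sqrt_lt_sqrt h0.le (by nlinarith)
  constructor
  · show 0 < (v-u)^2/Q
    have : 0 < v - u := by linarith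
    positivity
  · show (v-u)^2/Q < 1
    rw [div_lt_one hQ0]
    nlinarith [mul_pos hu0 hv0]


/-- The `q`-ary entropy function
`h_q(x) = −x·log_q(x/(q−1)) − (1−x)·log_q(1−x)`. -/
noncomputable def qaryEntropy (q : ℕ) (x : ℝ) : ℝ :=
  -x * Real.logb q (x / ((q : ℝ) - 1)) - (1 - x) * Real.logb q (1 - x)

/-- For `τ ∈ (0, (q−1)/q)` and `τ^⊥ = (√((q−1)(1−τ)) − √τ)²/q`, one has
`h_q(τ) + h_q(τ^⊥) > 1`; in particular if `h_q(τ) < 1 − R` for `R ∈ (0,1)`,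
then `h_q(τ^⊥) > R`. -/
theorem entropy_sum_gt_one
    (q : ℕ) (hq : 2 ≤ q)
    (τ : ℝ) (hτ : τ ∈ Set.Ioo (0 : ℝ) (((q : ℝ) - 1) / (q : ℝ)))
    (τperp : ℝ)
    (hperp : τperp = (Real.sqrt (((q : ℝ) - 1) * (1 - τ)) - Real.sqrt τ) ^ 2 / (q : ℝ)) :
    1 < qaryEntropy q τ + qaryEntropy q τperp
    ∧ ∀ R : ℝ, R ∈ Set.Ioo (0 : ℝ) 1 → qaryEntropy q τ < 1 - R → R < qaryEntropy q τperp := by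
  obtain ⟨hτ0, hτθ⟩ := hτ
  have h : (2:ℝ) ≤ (q:ℝ) := by exact_mod_cast hq
  have hQ0 : (0:ℝ) < (q:ℝ) := by linarith
  have hτ1 : τ < 1 := lt_of_lt_of_le hτθ (by rw [div_le_one hQ0]; linarith)
  have hperp' : τperp = phi q τ := hperp
  obtain ⟨hp0, hp1⟩ := phi_mem q hq τ hτ0 hτθ
  have hlogQ : 0 < Real.log (q:ℝ) := Real.log_pos (by linarith)
  have hkey := main_nats q hq τ hτ0 hτθ
  have hmain : 1 < qaryEntropy q τ + qaryEntropy q τperp := by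
    unfold qaryEntropy
    rw [hperp']
    rw [conv_entropy q hq τ hτ0 hτ1, conv_entropy q hq (phi q τ) hp0 hp1]
    rw [← add_div, lt_div_iff₀ hlogQ, one_mul]
    exact hkey
  refine ⟨hmain, ?_⟩
  intro R hR hless
  linarith
end
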